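/- arXiv:1702.02704 — 5 statements merged into one kernel-verified Lean document; each statement's English description precedes it below -/
import Mathlib

section
/- Let a_0 be the integer with 1 ≤ a_0 ≤ a_d such that a_d divides a_0 + a_1 + ⋯ + a_{d-1} + 1. Then the group Λ_{Δ(A)} is the cyclic group generated by (a_0/a_d, a_1/a_d, …, a_{d-1}/a_d, 1/a_d) ∈ (ℝ/ℤ)^{d+1}. -/
open scoped BigOperators
open MeasureTheory

noncomputable section

/-- The real point corresponding to a lattice point. -/
def toReal {d : ℕ} (v : Fin d → ℤ) : Fin d → ℝ := fun i => (v i : ℝ)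

/-- The finite abelian group `Λ_Δ ⊆ (ℝ/ℤ)^{d+1}` attached to a lattice simplex with
vertices `v 0, …, v d`. -/
def LambdaSet {d : ℕ} (v : Fin (d + 1) → Fin d → ℤ) :
    Set (Fin (d + 1) → AddCircle (1 : ℝ)) :=
  {lam | ∃ mu : Fin (d + 1) → ℝ,
    (∀ i, ((mu i : ℝ) : AddCircle (1 : ℝ)) = lam i) ∧
    (∀ j, ∃ n : ℤ, ∑ i, mu i * (v i j : ℝ) = (n : ℝ)) ∧
    (∃ n : ℤ, ∑ i, mu i = (n : ℝ))}

/-- The simplex spanned by the given lattice points. -/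
def simplexOf {d : ℕ} (v : Fin (d + 1) → Fin d → ℤ) : Set (Fin d → ℝ) :=
  convexHull ℝ (Set.range fun i => toReal (v i))

/-- The dual (polar) body `{y : ⟨x,y⟩ ≤ 1 ∀ x ∈ P}`. -/
def polarDual {d : ℕ} (P : Set (Fin d → ℝ)) : Set (Fin d → ℝ) :=
  {y | ∀ x ∈ P, ∑ i, x i * y i ≤ 1}

/-- A point of `ℝ^d` is a lattice point if all its coordinates are integers. -/
def IsLatticePoint {d : ℕ} (x : Fin d → ℝ) : Prop := ∀ i, ∃ n : ℤ, x i = (n : ℝ)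

/-- A polytope is reflexive if the origin is its unique interior lattice point and its
dual polytope is again a lattice polytope. -/
def IsReflexive {d : ℕ} (P : Set (Fin d → ℝ)) : Prop :=
  (0 ∈ interior P) ∧
  (∀ x ∈ interior P, IsLatticePoint x → x = 0) ∧
  ∃ V : Finset (Fin d → ℤ), polarDual P = convexHull ℝ (toReal '' (V : Set (Fin d → ℤ)))

/-- A lattice polytope is Gorenstein of index `r` if some lattice translate of its
`r`-th dilate is reflexive. -/
def IsGorenstein {d : ℕ} (P : Set (Fin d → ℝ)) (r : ℕ) : Prop :=
  ∃ w : Fin d → ℤ, IsReflexive ((fun x => (r : ℝ) • x + toReal w) '' P)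

/-- Unimodular equivalence of subsets of `ℝ^d`. -/
def UnimodEquiv {d : ℕ} (P Q : Set (Fin d → ℝ)) : Prop :=
  ∃ (U : Matrix (Fin d) (Fin d) ℤ) (w : Fin d → ℤ), IsUnit U.det ∧
    Q = (fun x => fun j => (∑ i, x i * (U i j : ℝ)) + (w j : ℝ)) '' P

/-- `P` is a lattice pyramid: it is unimodularly equivalent to
`conv(V × {0}, e_j)` for a finite set `V` of lattice points lying in a coordinate
hyperplane. -/
def IsLatticePyramid {d : ℕ} (P : Set (Fin d → ℝ)) : Prop :=
  ∃ (j : Fin d) (V : Finset (Fin d → ℤ)),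
    (∀ x ∈ V, x j = 0) ∧
    UnimodEquiv P (convexHull ℝ
      ((toReal '' (V : Set (Fin d → ℤ))) ∪ {fun i => if i = j then (1 : ℝ) else 0}))

/-- The vertices of the simplex `Δ(A)` associated to `A = (a 1, …, a d)`:
`v 0 = 0`, `v i = e_i` for `1 ≤ i ≤ d-1`, and
`v d = ∑_{j=1}^{d-1} (a d - a j) e_j + (a d) e_d`. -/
def simplexVerts (d : ℕ) (a : ℕ → ℤ) : Fin (d + 1) → Fin d → ℤ := fun i j =>
  if (i : ℕ) = 0 then 0
  else if (i : ℕ) = d then (if (j : ℕ) = d - 1 then a d else a d - a ((j : ℕ) + 1))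
  else if (j : ℕ) + 1 = (i : ℕ) then 1 else 0

/-- The vertices of the simplex `Δ(A,B)`: `v 0 = 0`, `v i = e_i` for
`i ∉ {0, s, d}`, `v s = ∑_{j=1}^s (a j) e_j`, `v d = ∑_{j=1}^d (b j) e_j`. -/
def simplexVerts2 (d s : ℕ) (a b : ℕ → ℤ) : Fin (d + 1) → Fin d → ℤ := fun i j =>
  if (i : ℕ) = 0 then 0
  else if (i : ℕ) = s then (if (j : ℕ) + 1 ≤ s then a ((j : ℕ) + 1) else 0)
  else if (i : ℕ) = d then b ((j : ℕ) + 1)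
  else if (j : ℕ) + 1 = (i : ℕ) then 1 else 0

/-- The generator `(a 0/a d, a 1/a d, …, a (d-1)/a d, 1/a d)` of `Λ_{Δ(A)}`. -/
def genOne (d : ℕ) (a : ℕ → ℤ) : Fin (d + 1) → AddCircle (1 : ℝ) := fun i =>
  (((if (i : ℕ) = d then 1 else (a (i : ℕ) : ℝ)) / (a d : ℝ) : ℝ) : AddCircle (1 : ℝ))

-- auxiliary lemmas
lemma myIntCoe (y : ℝ) : y ∈ AddSubgroup.zmultiples (1:ℝ) ↔ ∃ k : ℤ, (k:ℝ) = y := by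
  rw [AddSubgroup.mem_zmultiples_iff]; simp

lemma sum_verts_eq {d : ℕ} (hd : 1 ≤ d) (a : ℕ → ℤ) (mu : Fin (d+1) → ℝ) (j : Fin d) :
    ∑ i, mu i * (simplexVerts d a i j : ℝ) =
      (if h : (j:ℕ) + 1 = d then 0 else mu ⟨(j:ℕ)+1, by omega⟩)
      + mu (Fin.last d) *
        (if (j:ℕ) = d - 1 then (a d : ℝ) else ((a d : ℝ) - (a ((j:ℕ)+1) : ℝ))) := by
  set X : ℝ := (if (j:ℕ) = d - 1 then (a d : ℝ) else ((a d : ℝ) - (a ((j:ℕ)+1) : ℝ))) with hX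
  have hdecomp : ∀ i : Fin (d+1), mu i * (simplexVerts d a i j : ℝ)
      = (if i = Fin.last d then mu i * X else 0)
      + (if (i:ℕ) = (j:ℕ)+1 ∧ (j:ℕ)+1 ≠ d then mu i else 0) := by
    intro i
    by_cases hid : (i:ℕ) = d
    · have hlast : i = Fin.last d := Fin.ext (by simpa using hid)
      subst hlast
      have hc : ¬ (((Fin.last d : Fin (d+1)) : ℕ) = (j:ℕ)+1 ∧ (j:ℕ)+1 ≠ d) := by
        rintro ⟨h1, h2⟩; rw [Fin.val_last] at h1; omega
      have hv : (simplexVerts d a (Fin.last d) j : ℝ) = X := by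
        have hdd : simplexVerts d a (Fin.last d) j
            = if (j:ℕ) = d - 1 then a d else a d - a ((j:ℕ)+1) := by
          unfold simplexVerts
          rw [Fin.val_last, if_neg (by omega : ¬ d = 0), if_pos rfl]
        rw [hdd, hX]; split <;> push_cast <;> ring
      rw [hv, if_pos rfl, if_neg hc, add_zero]
    · have hlast : i ≠ Fin.last d := by
        intro h; apply hid; rw [h, Fin.val_last]
      by_cases hi0 : (i:ℕ) = 0
      · have hc : ¬ ((i:ℕ) = (j:ℕ)+1 ∧ (j:ℕ)+1 ≠ d) := by rintro ⟨h1, _⟩; omega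
        have hv : (simplexVerts d a i j : ℝ) = 0 := by
          simp [simplexVerts, hi0]
        rw [hv, if_neg hlast, if_neg hc, mul_zero, add_zero]
      · have hv : (simplexVerts d a i j : ℝ) = if (j:ℕ)+1 = (i:ℕ) then 1 else 0 := by
          simp only [simplexVerts, hi0, hid, if_false]
          split <;> simp
        rw [hv, if_neg hlast, zero_add]
        by_cases hji : (j:ℕ)+1 = (i:ℕ)
        · rw [if_pos hji, if_pos ⟨hji.symm, by have := i.isLt; omega⟩, mul_one]
        · rw [if_neg hji, if_neg (by rintro ⟨h1, _⟩; exact hji h1.symm), mul_zero]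
  rw [Finset.sum_congr rfl (fun i _ => hdecomp i), Finset.sum_add_distrib]
  have h1 : ∑ i : Fin (d+1), (if i = Fin.last d then mu i * X else 0) = mu (Fin.last d) * X := by
    rw [Finset.sum_ite_eq' Finset.univ (Fin.last d) (fun i => mu i * X)]
    simp
  rw [h1]
  by_cases hjd : (j:ℕ) + 1 = d
  · rw [dif_pos hjd]
    have : ∑ i : Fin (d+1), (if (i:ℕ) = (j:ℕ)+1 ∧ (j:ℕ)+1 ≠ d then mu i else 0) = 0 := by
      apply Finset.sum_eq_zero; intro i _
      rw [if_neg]; rintro ⟨_, h2⟩; exact h2 hjd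
    rw [this]; ring
  · rw [dif_neg hjd]
    set i₀ : Fin (d+1) := ⟨(j:ℕ)+1, by omega⟩ with hi₀
    have : ∀ i : Fin (d+1), (if (i:ℕ) = (j:ℕ)+1 ∧ (j:ℕ)+1 ≠ d then mu i else 0)
        = (if i = i₀ then mu i else 0) := by
      intro i
      congr 1
      simp only [eq_iff_iff]
      constructor
      · rintro ⟨h1, _⟩; ext; simpa using h1
      · intro h; subst h; exact ⟨rfl, hjd⟩
    rw [Finset.sum_congr rfl (fun i _ => this i),
      Finset.sum_ite_eq' Finset.univ i₀ mu]
    simp [hi₀]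
    ring

lemma sum_g {d : ℕ} (a : ℕ → ℤ) :
    ∑ i : Fin (d+1), (if (i:ℕ) = d then (1:ℝ) else (a (i:ℕ) : ℝ))
      = ((∑ i ∈ Finset.range d, a i : ℤ) : ℝ) + 1 := by
  rw [Fin.sum_univ_castSucc]
  have h1 : ∀ i : Fin d, (if ((i.castSucc : Fin (d+1)):ℕ) = d then (1:ℝ) else (a (i.castSucc : ℕ) : ℝ))
      = (a (i:ℕ) : ℝ) := by
    intro i
    rw [Fin.coe_castSucc, if_neg i.isLt.ne]
  rw [Finset.sum_congr rfl (fun i _ => h1 i), Fin.val_last, if_pos rfl]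
  push_cast
  rw [Fin.sum_univ_eq_sum_range (fun i => (a i : ℝ)) d]


/-- `Λ_{Δ(A)}` is the cyclic group generated by
`(a 0/a d, …, a (d-1)/a d, 1/a d)`, where `a 0` is the integer with
`1 ≤ a 0 ≤ a d` and `a d ∣ a 0 + ⋯ + a (d-1) + 1`. -/
theorem statement4 {d : ℕ} (hd : 1 ≤ d) (a : ℕ → ℤ)
    (ha : ∀ i, 1 ≤ i → i ≤ d - 1 → 1 ≤ a i ∧ a i ≤ a d)
    (ha0 : 1 ≤ a 0 ∧ a 0 ≤ a d)
    (hdvd : a d ∣ (∑ i ∈ Finset.range d, a i) + 1) :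
    LambdaSet (simplexVerts d a) = Set.range fun k : ℤ => k • genOne d a := by
  have had1 : (1:ℤ) ≤ a d := le_trans ha0.1 ha0.2
  have hadR : (a d : ℝ) ≠ 0 := Int.cast_ne_zero.mpr (by omega)
  obtain ⟨t, ht⟩ := hdvd
  set g : Fin (d+1) → ℝ := fun i => if (i:ℕ) = d then 1 else (a (i:ℕ) : ℝ) with hg
  have hgen : ∀ (k : ℤ) (i : Fin (d+1)),
      (k • genOne d a) i = ((k * (g i / (a d : ℝ)) : ℝ) : AddCircle (1:ℝ)) := by
    intro k i
    have : (k • genOne d a) i = k • ((g i / (a d : ℝ) : ℝ) : AddCircle (1:ℝ)) := rfl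
    rw [this, ← AddCircle.coe_zsmul (1:ℝ)]
    norm_num [zsmul_eq_mul]
  have hsumg : ∑ i, g i = (a d : ℝ) * t := by
    rw [hg, sum_g a, ← Int.cast_mul, ← ht]
    push_cast
    ring
  ext lam
  simp only [LambdaSet, Set.mem_setOf_eq, Set.mem_range]
  constructor
  · rintro ⟨mu, hlift, hj, hN⟩
    obtain ⟨n, hn⟩ := hj ⟨d-1, by omega⟩
    rw [sum_verts_eq hd a mu ⟨d-1, by omega⟩] at hn
    rw [dif_pos (show d-1+1 = d by omega), if_pos (show d-1 = d-1 from rfl), zero_add] at hn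
    have hmulast : mu (Fin.last d) = n / (a d : ℝ) := by
      field_simp; linarith [hn]
    have key : ∀ i : Fin (d+1), (i:ℕ) ≠ 0 → ∃ m : ℤ, mu i - n * g i / a d = m := by
      intro i hi0
      by_cases hid : (i:ℕ) = d
      · refine ⟨0, ?_⟩
        have hilast : i = Fin.last d := Fin.ext (by simpa using hid)
        have hgi : g i = 1 := by rw [hg]; simp [hid]
        rw [hilast, hmulast, hgi] at *
        push_cast
        field_simp
        ring
      · have hile : (i:ℕ) ≤ d := by have := i.isLt; omega
        obtain ⟨m, hm⟩ := hj ⟨(i:ℕ)-1, by omega⟩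
        rw [sum_verts_eq hd a mu ⟨(i:ℕ)-1, by omega⟩] at hm
        rw [dif_neg (show ¬((i:ℕ)-1+1 = d) by omega), if_neg (show ¬((i:ℕ)-1 = d-1) by omega)] at hm
        have hival : (⟨((⟨(i:ℕ)-1, by omega⟩ : Fin d) : ℕ)+1, by omega⟩ : Fin (d+1)) = i :=
          Fin.ext (show (i:ℕ)-1+1 = (i:ℕ) by omega)
        rw [hival] at hm
        have hgi : g i = (a (i:ℕ) : ℝ) := by rw [hg]; simp [hid]
        have hidx : (((⟨(i:ℕ)-1, by omega⟩ : Fin d) : ℕ) + 1) = (i:ℕ) := by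
          show (i:ℕ)-1+1 = (i:ℕ); omega
        rw [hidx, hmulast] at hm
        refine ⟨m - n, ?_⟩
        rw [hgi]
        push_cast
        field_simp at hm ⊢
        linarith [hm]
    have hall : ∀ i : Fin (d+1), ∃ m : ℤ, mu i - n * g i / a d = m := by
      intro i
      by_cases hi0 : (i:ℕ) = 0
      · have hi : i = 0 := Fin.ext (by simpa using hi0)
        subst hi
        obtain ⟨N, hNv⟩ := hN
        set w : Fin (d+1) → ℤ := fun i =>
          if h : (i:ℕ) ≠ 0 then (key i h).choose else 0 with hwdef
        have hw : ∀ i ∈ Finset.univ.erase (0 : Fin (d+1)),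
            mu i - n * g i / a d = ((w i : ℤ) : ℝ) := by
          intro i hi
          have hne : (i:ℕ) ≠ 0 := by
            intro h
            exact (Finset.mem_erase.mp hi).1 (Fin.ext (by simpa using h))
          rw [hwdef]
          simp only [hne, ne_eq, not_false_eq_true, dif_pos]
          exact (key i hne).choose_spec
        have hsumr : ∑ i, (mu i - n * g i / a d) = (N : ℝ) - n * t := by
          rw [Finset.sum_sub_distrib, hNv]
          have : ∑ i, (n : ℝ) * g i / a d = n * t := by
            rw [← Finset.sum_div, ← Finset.mul_sum, hsumg]
            field_simp
          rw [this]
        have hsplit := (Finset.add_sum_erase Finset.univ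
          (fun i => mu i - n * g i / a d) (Finset.mem_univ (0 : Fin (d+1)))).symm
        refine ⟨N - n * t - ∑ i ∈ Finset.univ.erase (0 : Fin (d+1)), w i, ?_⟩
        have herase : ∑ i ∈ Finset.univ.erase (0 : Fin (d+1)), (mu i - n * g i / a d)
            = ((∑ i ∈ Finset.univ.erase (0 : Fin (d+1)), w i : ℤ) : ℝ) := by
          push_cast
          exact Finset.sum_congr rfl hw
        push_cast at herase ⊢
        linarith [hsumr, hsplit, herase]
      · exact key i hi0
    refine ⟨n, ?_⟩
    funext i
    rw [← hlift i, hgen n i]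
    rw [QuotientAddGroup.eq_iff_sub_mem, myIntCoe]
    obtain ⟨m, hm⟩ := hall i
    have hm' : mu i - (n:ℝ) * (g i / (a d : ℝ)) = (m:ℝ) := by rw [← hm]; ring
    refine ⟨-m, ?_⟩
    push_cast
    first
      | linear_combination -hm'
      | linear_combination hm'
      | linarith [hm']
  · rintro ⟨k, rfl⟩
    refine ⟨fun i => k * g i / a d, ?_, ?_, ?_⟩
    · intro i
      rw [hgen k i]
      congr 1
      ring
    · intro j
      refine ⟨k, ?_⟩
      rw [sum_verts_eq hd a _ j]
      by_cases hjd1 : (j:ℕ) + 1 = d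
      · rw [dif_pos hjd1, if_pos (by omega), zero_add]
        have : g (Fin.last d) = 1 := by rw [hg]; simp
        simp only [this]
        field_simp
      · rw [dif_neg hjd1, if_neg (by have := j.isLt; omega)]
        have h1 : g ⟨(j:ℕ)+1, by omega⟩ = (a ((j:ℕ)+1) : ℝ) := by
          rw [hg]; simp [hjd1]
        have h2 : g (Fin.last d) = 1 := by rw [hg]; simp
        simp only [h1, h2]
        field_simp
        ring
    · refine ⟨k * t, ?_⟩
      have : ∑ i, (k : ℝ) * g i / a d = k * (∑ i, g i) / a d := by
        rw [← Finset.sum_div, ← Finset.mul_sum]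
      rw [this, hsumg]
      field_simp
      push_cast
      ring
end
end

section
/- The simplex Δ(A) is not a lattice pyramid over any lower-dimensional lattice simplex if and only if 1 ≤ a_0, a_1, …, a_{d-1} < a_d, where a_0 is the integer with 1 ≤ a_0 ≤ a_d and a_d | (a_0 + ⋯ + a_{d-1} + 1). -/
open scoped BigOperators
open MeasureTheory

noncomputable section

def mapT {d : ℕ} (U : Matrix (Fin d) (Fin d) ℝ) (w : Fin d → ℝ) (x : Fin d → ℝ) : Fin d → ℝ :=
  fun j => (∑ i, x i * U i j) + w j

lemma mapT_eq_affine {d : ℕ} (U : Matrix (Fin d) (Fin d) ℝ) (w : Fin d → ℝ) (x : Fin d → ℝ) :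
    mapT U w x = U.vecMulLinear x + w := by
  funext j
  simp [mapT, Matrix.vecMulLinear, Matrix.vecMul, dotProduct]

def affT {d : ℕ} (U : Matrix (Fin d) (Fin d) ℝ) (w : Fin d → ℝ) :
    (Fin d → ℝ) →ᵃ[ℝ] (Fin d → ℝ) :=
  AffineMap.mk' (mapT U w) U.vecMulLinear 0 (by
    intro p
    simp [mapT_eq_affine, mapT])

lemma image_convexHull_mapT {d : ℕ} (U : Matrix (Fin d) (Fin d) ℝ) (w : Fin d → ℝ)
    (s : Set (Fin d → ℝ)) :
    mapT U w '' convexHull ℝ s = convexHull ℝ (mapT U w '' s) := by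
  have := (affT U w).image_convexHull s
  simpa [affT] using this

lemma mapT_injective {d : ℕ} (Uz : Matrix (Fin d) (Fin d) ℤ) (hU : IsUnit Uz.det)
    (w : Fin d → ℝ) : Function.Injective (mapT (Uz.map (Int.cast : ℤ → ℝ)) w) := by
  set U : Matrix (Fin d) (Fin d) ℝ := Uz.map (Int.cast : ℤ → ℝ)
  have hdet : IsUnit U.det := by
    have : U.det = ((Uz.det : ℤ) : ℝ) := (RingHom.map_det (Int.castRingHom ℝ) Uz).symm
    rw [this]
    exact hU.map (Int.castRingHom ℝ)
  intro x y hxy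
  have h1 : ∀ z : Fin d → ℝ, mapT U w z = Matrix.vecMul z U + w := fun z => mapT_eq_affine U w z
  have h2 : Matrix.vecMul x U = Matrix.vecMul y U := by
    have := hxy
    rw [h1, h1] at this
    exact add_right_cancel this
  have h3 : Matrix.vecMul (Matrix.vecMul x U) U⁻¹ = Matrix.vecMul (Matrix.vecMul y U) U⁻¹ := by
    rw [h2]
  rwa [Matrix.vecMul_vecMul, Matrix.vecMul_vecMul, Matrix.mul_nonsing_inv _ hdet,
    Matrix.vecMul_one, Matrix.vecMul_one] at h3

lemma slab_bound {d : ℕ} (A : Set (Fin d → ℝ)) (j : Fin d) (hA : ∀ x ∈ A, x j = 0) :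
    ∀ x ∈ convexHull ℝ (A ∪ {fun i => if i = j then (1 : ℝ) else 0}),
      0 ≤ x j ∧ x j ≤ 1 := by
  intro x hx
  have hconv : Convex ℝ {y : Fin d → ℝ | 0 ≤ y j ∧ y j ≤ 1} := by
    have : {y : Fin d → ℝ | 0 ≤ y j ∧ y j ≤ 1} =
        (LinearMap.proj j : (Fin d → ℝ) →ₗ[ℝ] ℝ) ⁻¹' (Set.Icc 0 1) := by
      ext y; simp [Set.mem_Icc]
    rw [this]
    exact (convex_Icc (0:ℝ) 1).linear_preimage _
  have hsub : A ∪ {fun i => if i = j then (1 : ℝ) else 0} ⊆ {y : Fin d → ℝ | 0 ≤ y j ∧ y j ≤ 1} := by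
    rintro y (hy | hy)
    · simp [Set.mem_setOf_eq, hA y hy]
    · simp only [Set.mem_singleton_iff] at hy
      subst hy
      simp
  exact convexHull_min hsub hconv hx

lemma apex_unique {d : ℕ} (A : Set (Fin d → ℝ)) (j : Fin d) (hA : ∀ x ∈ A, x j = 0)
    (x : Fin d → ℝ) (hx : x ∈ convexHull ℝ (A ∪ {fun i => if i = j then (1 : ℝ) else 0}))
    (hxj : x j = 1) : x = fun i => if i = j then (1 : ℝ) else 0 := by
  set e : Fin d → ℝ := fun i => if i = j then (1 : ℝ) else 0 with he
  rw [convexHull_eq] at hx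
  obtain ⟨ι, t, w, z, hw0, hw1, hz, hcm⟩ := hx
  have hx_eq : x = ∑ i ∈ t, w i • z i := by
    rw [← hcm, Finset.centerMass_eq_of_sum_1 _ _ hw1]
  have hzj : ∀ i ∈ t, z i ≠ e → z i j = 0 := by
    intro i hi hne
    rcases hz i hi with h | h
    · exact hA _ h
    · exact absurd h hne
  have hsplit := Finset.sum_filter_add_sum_filter_not t (fun i => z i = e) (fun i => w i)
  have hxj' : x j = ∑ i ∈ t.filter (fun i => z i = e), w i := by
    rw [hx_eq]
    have : (∑ i ∈ t, w i • z i) j = ∑ i ∈ t, w i * z i j := by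
      simp [Finset.sum_apply]
    rw [this, ← Finset.sum_filter_add_sum_filter_not t (fun i => z i = e) (fun i => w i * z i j)]
    have h1 : ∑ i ∈ t.filter (fun i => z i = e), w i * z i j
        = ∑ i ∈ t.filter (fun i => z i = e), w i := by
      apply Finset.sum_congr rfl
      intro i hi
      rw [Finset.mem_filter] at hi
      rw [hi.2]
      simp [he]
    have h2 : ∑ i ∈ t.filter (fun i => ¬ z i = e), w i * z i j = 0 := by
      apply Finset.sum_eq_zero
      intro i hi
      rw [Finset.mem_filter] at hi
      rw [hzj i hi.1 hi.2]
      ring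
    rw [h1, h2, add_zero]
  have hrest : ∑ i ∈ t.filter (fun i => ¬ z i = e), w i = 0 := by
    have h := hsplit
    rw [← hxj', hxj, hw1] at h
    linarith
  have hwz : ∀ i ∈ t.filter (fun i => ¬ z i = e), w i = 0 := by
    intro i hi
    have hnn : ∀ i ∈ t.filter (fun i => ¬ z i = e), 0 ≤ w i := fun i hi =>
      hw0 i (Finset.mem_filter.mp hi).1
    exact (Finset.sum_eq_zero_iff_of_nonneg hnn).mp hrest i hi
  have hx2 : x = ∑ i ∈ t.filter (fun i => z i = e), w i • z i := by
    rw [hx_eq, ← Finset.sum_filter_add_sum_filter_not t (fun i => z i = e) (fun i => w i • z i)]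
    have : ∑ i ∈ t.filter (fun i => ¬ z i = e), w i • z i = 0 := by
      apply Finset.sum_eq_zero
      intro i hi
      rw [hwz i hi, zero_smul]
    rw [this, add_zero]
  rw [hx2]
  have : ∑ i ∈ t.filter (fun i => z i = e), w i • z i
      = (∑ i ∈ t.filter (fun i => z i = e), w i) • e := by
    rw [Finset.sum_smul]
    apply Finset.sum_congr rfl
    intro i hi
    rw [(Finset.mem_filter.mp hi).2]
  rw [this, ← hxj', hxj, one_smul]

lemma pyr_of {d : ℕ} (v : Fin (d+1) → Fin d → ℤ) (U : Matrix (Fin d) (Fin d) ℤ)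
    (w : Fin d → ℤ) (p : Fin (d+1)) (j : Fin d) (hdet : IsUnit U.det)
    (hp : ∀ t, (∑ k, v p k * U k t) + w t = if t = j then 1 else 0)
    (h0 : ∀ i, i ≠ p → (∑ k, v i k * U k j) + w j = 0) :
    IsLatticePyramid (simplexOf v) := by
  classical
  set Ur : Matrix (Fin d) (Fin d) ℝ := U.map (Int.cast : ℤ → ℝ) with hUr
  set Tz : Fin (d+1) → (Fin d → ℤ) := fun i t => (∑ k, v i k * U k t) + w t with hTz
  set V : Finset (Fin d → ℤ) := (Finset.univ.erase p).image Tz with hV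
  set e : Fin d → ℝ := fun i => if i = j then (1 : ℝ) else 0 with he
  have key : ∀ i, mapT Ur (toReal w) (toReal (v i)) = toReal (Tz i) := by
    intro i
    funext t
    simp only [mapT, toReal, hTz, hUr, Matrix.map_apply]
    push_cast
    ring
  have himg : mapT Ur (toReal w) '' (Set.range fun i => toReal (v i))
      = (toReal '' (V : Set (Fin d → ℤ))) ∪ {e} := by
    ext x
    constructor
    · rintro ⟨y, ⟨i, rfl⟩, rfl⟩
      by_cases hip : i = p
      · right
        subst hip
        rw [key i]
        have : toReal (Tz i) = e := by
          funext t
          simp only [toReal, hTz, hp t]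
          by_cases h : t = j <;> simp [h, he]
        rw [this]
        rfl
      · left
        refine ⟨Tz i, ?_, (key i).symm⟩
        simp only [hV, Finset.coe_image, Set.mem_image, Finset.mem_coe, Finset.mem_erase]
        exact ⟨i, ⟨hip, Finset.mem_univ i⟩, rfl⟩
    · rintro (⟨y, hyV, rfl⟩ | hx)
      · simp only [hV, Finset.coe_image, Set.mem_image, Finset.mem_coe, Finset.mem_erase] at hyV
        obtain ⟨i, ⟨hip, _⟩, rfl⟩ := hyV
        exact ⟨toReal (v i), ⟨i, rfl⟩, key i⟩
      · simp only [Set.mem_singleton_iff] at hx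
        subst hx
        refine ⟨toReal (v p), ⟨p, rfl⟩, ?_⟩
        rw [key p]
        funext t
        simp only [toReal, hTz, hp t]
        by_cases h : t = j <;> simp [h, he]
  refine ⟨j, V, ?_, U, w, hdet, ?_⟩
  · intro x hx
    simp only [hV, Finset.mem_image, Finset.mem_erase] at hx
    obtain ⟨i, ⟨hip, _⟩, rfl⟩ := hx
    exact h0 i hip
  · show convexHull ℝ ((toReal '' (V : Set (Fin d → ℤ))) ∪ {e}) = _
    have : (fun x : Fin d → ℝ => fun t => (∑ i, x i * (U i t : ℝ)) + (w t : ℝ))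
        = mapT Ur (toReal w) := rfl
    rw [this, simplexOf, image_convexHull_mapT, himg]

lemma sum_mul_one_apply {d : ℕ} (f : Fin d → ℤ) (t : Fin d) :
    ∑ k, f k * (1 : Matrix (Fin d) (Fin d) ℤ) k t = f t := by
  simp [Matrix.one_apply, mul_ite]

lemma lemB_mid {d : ℕ} (a : ℕ → ℤ) (k : ℕ) (hk1 : 1 ≤ k) (hk : k ≤ d - 1) (hd2 : 2 ≤ d)
    (hak : a k = a d) : IsLatticePyramid (simplexOf (simplexVerts d a)) := by
  have hkd : k < d := by omega
  refine pyr_of (simplexVerts d a) 1 0 ⟨k, by omega⟩ ⟨k - 1, by omega⟩ (by simp) ?_ ?_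
  · intro t
    rw [sum_mul_one_apply]
    simp only [simplexVerts, Pi.zero_apply, add_zero, Fin.ext_iff]
    split_ifs <;> omega
  · intro i hi
    rw [sum_mul_one_apply]
    have hik : (i : ℕ) ≠ k := by
      intro h
      apply hi
      exact Fin.ext h
    simp only [simplexVerts, Pi.zero_apply, add_zero]
    split_ifs with h1 h2 h3 h4 <;> first | rfl | (exfalso; omega) | (rw [show k - 1 + 1 = k by omega, hak]; ring)

lemma lemB_zero {d : ℕ} (hd : 1 ≤ d) (a : ℕ → ℤ)
    (had : 1 ≤ a d)
    (ha0 : a 0 = a d)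
    (hdvd : a d ∣ (∑ i ∈ Finset.range d, a i) + 1) :
    IsLatticePyramid (simplexOf (simplexVerts d a)) := by
  classical
  obtain ⟨n, rfl⟩ : ∃ n, d = n + 1 := ⟨d - 1, by omega⟩
  set S : ℤ := ∑ i ∈ Finset.range n, a (i + 1) with hS
  have hsum : (∑ i ∈ Finset.range (n + 1), a i) = S + a 0 := by
    rw [hS, Finset.sum_range_succ']
  have hdvd2 : a (n + 1) ∣ S + 1 := by
    have h1 : a (n + 1) ∣ S + 1 + a (n + 1) := by
      rw [show S + 1 + a (n + 1) = (∑ i ∈ Finset.range (n + 1), a i) + 1 by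
        rw [hsum, ha0]; ring]
      exact hdvd
    have := dvd_sub h1 (dvd_refl (a (n + 1)))
    simpa using this
  obtain ⟨m, hm⟩ := hdvd2
  have hm1 : n = 0 → m = 1 := by
    intro hn0
    subst hn0
    simp only [hS, Finset.range_zero, Finset.sum_empty] at hm
    nlinarith [hm, had]
  set c : Fin (n + 1) → ℤ := fun i => if (i : ℕ) = n then (n : ℤ) - m else -1 with hc
  set U : Matrix (Fin (n + 1)) (Fin (n + 1)) ℤ :=
    Matrix.of (fun i t => if (t : ℕ) = 0 then c i else if i = t then 1 else 0) with hU
  set w : Fin (n + 1) → ℤ := fun t => if (t : ℕ) = 0 then 1 else 0 with hw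
  have hUj : ∀ k : Fin (n + 1), U k ⟨0, by omega⟩ = c k := by
    intro k; simp [hU]
  have hdet : IsUnit U.det := by
    have htri : U.BlockTriangular OrderDual.toDual := by
      intro i t h
      have hit : (i : ℕ) < (t : ℕ) := h
      simp only [hU, Matrix.of_apply]
      rw [if_neg (by omega), if_neg (by
        intro hh
        rw [hh] at hit
        omega)]
    rw [Matrix.det_of_lowerTriangular U htri]
    have hprod : ∏ i : Fin (n + 1), U i i = c ⟨0, by omega⟩ := by
      rw [Finset.prod_eq_single_of_mem (⟨0, by omega⟩ : Fin (n + 1)) (Finset.mem_univ _)]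
      · simp [hU]
      · intro b _ hb
        have : (b : ℕ) ≠ 0 := by
          intro h; exact hb (Fin.ext h)
        simp [hU, this]
        intro hb0; subst hb0; simp at this
    have hc0 : c ⟨0, by omega⟩ = if 0 = n then (n : ℤ) - m else -1 := rfl
    rw [hprod, hc0]
    by_cases hn0 : n = 0
    · rw [if_pos hn0.symm, hm1 hn0, hn0]
      norm_num
    · rw [if_neg (by omega)]
      exact isUnit_one.neg
  refine pyr_of (simplexVerts (n + 1) a) U w 0 ⟨0, by omega⟩ hdet ?_ ?_
  · intro t
    have hv0 : ∀ k : Fin (n + 1), simplexVerts (n + 1) a 0 k = 0 := by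
      intro k; simp [simplexVerts]
    simp only [hv0, zero_mul, Finset.sum_const_zero, zero_add, hw]
    by_cases h : (t : ℕ) = 0
    · rw [if_pos h, if_pos (Fin.ext h)]
    · rw [if_neg h, if_neg (by intro hh; exact h (by rw [hh]))]
  · intro i hi
    have hine : (i : ℕ) ≠ 0 := by
      intro h; exact hi (Fin.ext h)
    simp only [hUj]
    have hwj : w ⟨0, by omega⟩ = 1 := by simp [hw]
    rw [hwj]
    by_cases hid : (i : ℕ) = n + 1
    · -- the vertex v_d
      have hvd : ∀ k : Fin (n + 1), simplexVerts (n + 1) a i k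
          = if (k : ℕ) = n then a (n + 1) else a (n + 1) - a ((k : ℕ) + 1) := by
        intro k
        simp only [simplexVerts, if_neg hine, if_pos hid, Nat.add_sub_cancel]
      have hsum2 : ∑ k : Fin (n + 1), simplexVerts (n + 1) a i k * c k
          = ∑ k ∈ Finset.range (n + 1), ((if k = n then a (n + 1) else a (n + 1) - a (k + 1))
              * (if k = n then (n : ℤ) - m else -1)) := by
        rw [← Fin.sum_univ_eq_sum_range]
        apply Finset.sum_congr rfl
        intro k _
        rw [hvd, hc]
      rw [hsum2, Finset.sum_range_succ]
      have hlast : ((if n = n then a (n + 1) else a (n + 1) - a (n + 1))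
          * (if n = n then (n : ℤ) - m else -1)) = a (n + 1) * ((n : ℤ) - m) := by
        rw [if_pos rfl, if_pos rfl]
      have hrest : ∑ k ∈ Finset.range n, ((if k = n then a (n + 1) else a (n + 1) - a (k + 1))
          * (if k = n then (n : ℤ) - m else -1))
          = ∑ k ∈ Finset.range n, (a (k + 1) - a (n + 1)) := by
        apply Finset.sum_congr rfl
        intro k hk
        rw [Finset.mem_range] at hk
        rw [if_neg (by omega), if_neg (by omega)]
        ring
      rw [hlast, hrest, Finset.sum_sub_distrib, Finset.sum_const, Finset.card_range, ← hS]
      have : (n • a (n + 1)) = (n : ℤ) * a (n + 1) := by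
        simp [nsmul_eq_mul]
      rw [this]
      linarith [hm]
    · -- middle vertices e_i
      have hvi : ∀ k : Fin (n + 1), simplexVerts (n + 1) a i k
          = if (k : ℕ) + 1 = (i : ℕ) then 1 else 0 := by
        intro k
        simp only [simplexVerts, if_neg hine, if_neg hid]
      have hid1 : (i : ℕ) - 1 < n + 1 := by
        have := i.isLt
        omega
      have hsum2 : ∑ k : Fin (n + 1), simplexVerts (n + 1) a i k * c k
          = c ⟨(i : ℕ) - 1, hid1⟩ := by
        rw [Finset.sum_eq_single (⟨(i : ℕ) - 1, hid1⟩ : Fin (n + 1))]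
        · rw [hvi, if_pos (by simp only [Fin.val_mk]; omega), one_mul]
        · intro b _ hb
          rw [hvi, if_neg, zero_mul]
          intro hh
          apply hb
          apply Fin.ext
          simp only [Fin.val_mk]
          omega
        · intro h
          exact absurd (Finset.mem_univ _) h
      have hcv : c ⟨(i : ℕ) - 1, hid1⟩ = if ((i : ℕ) - 1) = n then (n : ℤ) - m else -1 := rfl
      have hilt := i.isLt
      rw [hsum2, hcv, if_neg (by omega)]
      ring

lemma verts_injective {d : ℕ} (hd : 1 ≤ d) (a : ℕ → ℤ) (h2 : 2 ≤ a d) :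
    Function.Injective (simplexVerts d a) := by
  have key : ∀ p q : Fin (d + 1), (p : ℕ) < (q : ℕ) →
      simplexVerts d a p = simplexVerts d a q → False := by
    intro p q hpq heq
    have hp := p.isLt
    have hq := q.isLt
    by_cases hqd : (q : ℕ) = d
    · have h1 := congrFun heq ⟨d - 1, by omega⟩
      simp only [simplexVerts, Fin.val_mk] at h1
      split_ifs at h1 <;> omega
    · have h1 := congrFun heq ⟨(q : ℕ) - 1, by omega⟩
      simp only [simplexVerts, Fin.val_mk] at h1
      split_ifs at h1 <;> omega
  intro k l h
  rcases Nat.lt_trichotomy (k : ℕ) (l : ℕ) with hlt | heq | hgt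
  · exact absurd h (fun hh => key k l hlt hh)
  · exact Fin.ext heq
  · exact absurd h.symm (fun hh => key l k hgt hh)

lemma mapT_toReal {d : ℕ} (Uz : Matrix (Fin d) (Fin d) ℤ) (wz : Fin d → ℤ) (x : Fin d → ℤ) :
    mapT (Uz.map (Int.cast : ℤ → ℝ)) (toReal wz) (toReal x)
      = toReal (fun t => (∑ k, x k * Uz k t) + wz t) := by
  funext t
  simp only [mapT, toReal, Matrix.map_apply]
  push_cast
  ring

lemma toReal_inj {d : ℕ} {x y : Fin d → ℤ} (h : toReal x = toReal y) : x = y := by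
  funext t
  have := congrFun h t
  simpa [toReal] using this

lemma lemA {n : ℕ} (a : ℕ → ℤ)
    (hlt : ∀ i, i < n + 1 → 1 ≤ a i ∧ a i < a (n + 1))
    (hdvd : a (n + 1) ∣ (∑ i ∈ Finset.range (n + 1), a i) + 1)
    (hpyr : IsLatticePyramid (simplexOf (simplexVerts (n + 1) a))) : False := by
  classical
  have h2 : 2 ≤ a (n + 1) := by have := hlt 0 (by omega); omega
  obtain ⟨j, V, hV, Uz, wz, hdet, hQ⟩ := hpyr
  set e : Fin (n + 1) → ℝ := fun i => if i = j then (1 : ℝ) else 0 with he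
  set v := simplexVerts (n + 1) a with hv
  set Ur : Matrix (Fin (n + 1)) (Fin (n + 1)) ℝ := Uz.map (Int.cast : ℤ → ℝ) with hUr
  set Tz : Fin ((n + 1) + 1) → Fin (n + 1) → ℤ := fun i t => (∑ k, v i k * Uz k t) + wz t with hTz
  set N : Fin ((n + 1) + 1) → ℤ := fun i => Tz i j with hN
  have hQ' : convexHull ℝ ((toReal '' (V : Set (Fin (n + 1) → ℤ))) ∪ {e})
      = mapT Ur (toReal wz) '' simplexOf v := hQ
  have hA0 : ∀ x ∈ toReal '' (V : Set (Fin (n + 1) → ℤ)), x j = 0 := by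
    rintro x ⟨y, hy, rfl⟩
    simp [toReal, hV y hy]
  have hkey : ∀ i, mapT Ur (toReal wz) (toReal (v i)) = toReal (Tz i) := by
    intro i
    rw [hUr, mapT_toReal Uz wz (v i)]
  have hmem : ∀ i, toReal (Tz i) ∈ convexHull ℝ ((toReal '' (V : Set (Fin (n + 1) → ℤ))) ∪ {e}) := by
    intro i
    rw [hQ']
    exact ⟨toReal (v i), subset_convexHull ℝ _ ⟨i, rfl⟩, hkey i⟩
  have hTj : ∀ i, toReal (Tz i) j = ((N i : ℤ) : ℝ) := by
    intro i; simp [toReal, hN]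
  have hval : ∀ i, N i = 0 ∨ N i = 1 := by
    intro i
    have hb := slab_bound _ j hA0 _ (hmem i)
    rw [hTj i] at hb
    have h1 : (0 : ℤ) ≤ N i := by exact_mod_cast hb.1
    have h2 : N i ≤ 1 := by exact_mod_cast hb.2
    omega
  have hone : ∀ k l, N k = 1 → N l = 1 → k = l := by
    intro k l hk hl
    have hek : toReal (Tz k) = e :=
      apex_unique _ j hA0 _ (hmem k) (by rw [hTj k, hk]; norm_num)
    have hel : toReal (Tz l) = e :=
      apex_unique _ j hA0 _ (hmem l) (by rw [hTj l, hl]; norm_num)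
    have hinj := mapT_injective Uz hdet (toReal wz)
    have : toReal (v k) = toReal (v l) := by
      apply hinj
      rw [hkey k, hkey l, hek, hel]
    exact verts_injective (by omega) a h2 (toReal_inj this)
  have hnz : ∃ k, N k = 1 := by
    by_contra hno
    push_neg at hno
    have hzero : ∀ i, N i = 0 := fun i => (hval i).resolve_right (hno i)
    have heQ : e ∈ mapT Ur (toReal wz) '' simplexOf v := by
      rw [← hQ']
      exact subset_convexHull ℝ _ (Or.inr rfl)
    obtain ⟨x, hx, hxe⟩ := heQ
    set L : (Fin (n + 1) → ℝ) →ₗ[ℝ] ℝ := (LinearMap.proj j).comp Ur.vecMulLinear with hL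
    have hLmap : ∀ y : Fin (n + 1) → ℝ, mapT Ur (toReal wz) y j = L y + toReal wz j := by
      intro y
      simp [mapT, hL, Matrix.vecMulLinear, Matrix.vecMul, dotProduct]
    have hLconv : Convex ℝ {y : Fin (n + 1) → ℝ | L y + toReal wz j = 0} := by
      have hset : {y : Fin (n + 1) → ℝ | L y + toReal wz j = 0} = L ⁻¹' {-(toReal wz j)} := by
        ext y
        simp only [Set.mem_setOf_eq, Set.mem_preimage, Set.mem_singleton_iff]
        constructor <;> intro h <;> linarith
      rw [hset]
      exact (convex_singleton _).linear_preimage L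
    have hsub : Set.range (fun i => toReal (v i)) ⊆ {y : Fin (n + 1) → ℝ | L y + toReal wz j = 0} := by
      rintro _ ⟨i, rfl⟩
      have : L (toReal (v i)) + toReal wz j = toReal (Tz i) j := by
        rw [← hLmap, hkey i]
      rw [Set.mem_setOf_eq, this, hTj i, hzero i]
      norm_num
    have hx0 : L x + toReal wz j = 0 := convexHull_min hsub hLconv hx
    have hx1 : mapT Ur (toReal wz) x j = 1 := by
      rw [hxe, he]
      simp
    rw [hLmap x, hx0] at hx1
    norm_num at hx1
  obtain ⟨k, hk⟩ := hnz
  have hothers : ∀ l, l ≠ k → N l = 0 := fun l hl =>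
    (hval l).resolve_right (fun h1 => hl (hone l k h1 hk))
  -- coefficient notation
  set C : Fin (n + 1) → ℤ := fun t => Uz t j with hC
  set W : ℤ := wz j with hW
  -- value at vertex 0
  have hN0 : N 0 = W := by
    have hv0 : ∀ t : Fin (n + 1), v 0 t = 0 := by
      intro t; simp [hv, simplexVerts]
    simp [hN, hTz, hv0, hW]
  -- value at middle vertices
  have hNmid : ∀ t : Fin (n + 1), (t : ℕ) < n →
      N ⟨(t : ℕ) + 1, by omega⟩ = C t + W := by
    intro t ht
    have hvm : ∀ s : Fin (n + 1), v ⟨(t : ℕ) + 1, by omega⟩ s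
        = if (s : ℕ) = (t : ℕ) then 1 else 0 := by
      intro s
      simp only [hv, simplexVerts, Fin.val_mk]
      rw [if_neg (by omega), if_neg (by omega)]
      by_cases h : (s : ℕ) = (t : ℕ)
      · rw [if_pos (by omega), if_pos h]
      · rw [if_neg (by omega), if_neg h]
    have : ∑ s : Fin (n + 1), v ⟨(t : ℕ) + 1, by omega⟩ s * C s = C t := by
      rw [Finset.sum_eq_single t]
      · rw [hvm, if_pos rfl, one_mul]
      · intro b _ hb
        rw [hvm, if_neg (by
          intro hh
          exact hb (Fin.ext hh)), zero_mul]
      · intro h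
        exact absurd (Finset.mem_univ _) h
    simp only [hN, hTz, hW]
    rw [this]
  -- value at last vertex
  set dFin : Fin ((n + 1) + 1) := ⟨(n + 1), by omega⟩ with hdFin
  set lastF : Fin (n + 1) := ⟨n, by omega⟩ with hlastF
  have hvd : ∀ s : Fin (n + 1), v dFin s
      = if (s : ℕ) = n then a (n + 1) else a (n + 1) - a ((s : ℕ) + 1) := by
    intro s
    simp only [hv, simplexVerts, hdFin, Fin.val_mk, Nat.add_sub_cancel]
    norm_num
  have hNlast : N dFin
      = (∑ s ∈ Finset.univ.erase lastF, (a (n + 1) - a ((s : ℕ) + 1)) * C s) + a (n + 1) * C lastF + W := by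
    simp only [hN, hTz, hW]
    rw [← Finset.sum_erase_add _ _ (Finset.mem_univ lastF)]
    have h1 : v dFin lastF = a (n + 1) := by
      rw [hvd, if_pos (by simp [hlastF])]
    have h2 : ∑ s ∈ Finset.univ.erase lastF, v dFin s * C s
        = ∑ s ∈ Finset.univ.erase lastF, (a (n + 1) - a ((s : ℕ) + 1)) * C s := by
      apply Finset.sum_congr rfl
      intro s hs
      rw [hvd, if_neg (by
        intro hh
        exact (Finset.mem_erase.mp hs).1 (Fin.ext (by simp [hlastF, hh])))]
    rw [h1, h2]
  set A : ℤ := a (n + 1) with hA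
  set S : ℤ := ∑ i ∈ Finset.range n, a (i + 1) with hS
  have hsum : (∑ i ∈ Finset.range (n + 1), a i) = S + a 0 := by
    rw [hS, Finset.sum_range_succ']
  have hdvd' : A ∣ S + a 0 + 1 := by
    rw [hA, show S + a 0 + 1 = (∑ i ∈ Finset.range (n + 1), a i) + 1 by rw [hsum]]
    exact hdvd
  have hCltn : ∀ s : Fin (n + 1), s ≠ lastF → (s : ℕ) < n := by
    intro s hs
    have h1 := s.isLt
    have h2 : (s : ℕ) ≠ n := by
      intro hh
      exact hs (Fin.ext (by rw [hlastF]; exact hh))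
    omega
  by_cases hk0 : (k : ℕ) = 0
  · -- apex is vertex 0
    have hkz : k = 0 := Fin.ext hk0
    subst hkz
    have hW1 : W = 1 := by rw [← hN0]; exact hk
    have hCm : ∀ s : Fin (n + 1), (s : ℕ) < n → C s = -1 := by
      intro s hs
      have h1 := hNmid s hs
      have h2 : N ⟨(s : ℕ) + 1, by omega⟩ = 0 := by
        apply hothers
        intro hh
        have := congrArg Fin.val hh
        simp at this
      rw [h2, hW1] at h1
      omega
    have hNd : N dFin = 0 := by
      apply hothers
      intro hh
      have := congrArg Fin.val hh
      simp [hdFin] at this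
    have hsumC : ∑ s ∈ Finset.univ.erase lastF, (A - a ((s : ℕ) + 1)) * C s
        = ∑ s ∈ Finset.univ.erase lastF, (a ((s : ℕ) + 1) - A) := by
      apply Finset.sum_congr rfl
      intro s hs
      rw [hCm s (hCltn s (Finset.mem_erase.mp hs).1)]
      ring
    have e1 : (∑ s ∈ Finset.univ.erase lastF, (a ((s : ℕ) + 1) - A)) + (a ((lastF : ℕ) + 1) - A)
        = ∑ s : Fin (n + 1), (a ((s : ℕ) + 1) - A) :=
      Finset.sum_erase_add Finset.univ (fun s : Fin (n + 1) => (a ((s : ℕ) + 1) - A))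
        (Finset.mem_univ lastF)
    have e2 : ∑ s : Fin (n + 1), (a ((s : ℕ) + 1) - A)
        = ∑ i ∈ Finset.range (n + 1), (a (i + 1) - A) :=
      Fin.sum_univ_eq_sum_range (fun i => a (i + 1) - A) (n + 1)
    have e3 : ∑ i ∈ Finset.range (n + 1), (a (i + 1) - A)
        = (∑ i ∈ Finset.range n, (a (i + 1) - A)) + (a (n + 1) - A) :=
      Finset.sum_range_succ _ n
    have e4 : ∑ i ∈ Finset.range n, (a (i + 1) - A) = S - (n : ℤ) * A := by
      rw [Finset.sum_sub_distrib, Finset.sum_const, Finset.card_range, nsmul_eq_mul, hS]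
    have e5 : a ((lastF : ℕ) + 1) - A = 0 := by
      rw [hlastF]
      simp [hA]
    have heq : (S - (n : ℤ) * A) + A * C lastF + W = 0 := by
      rw [← hNd, hNlast, hsumC]
      have : ∑ s ∈ Finset.univ.erase lastF, (a ((s : ℕ) + 1) - A) = S - (n : ℤ) * A := by
        have := e1
        rw [e5, add_zero, e2, e3] at this
        rw [this, e4]
        have h0 : a (n + 1) - A = 0 := by rw [hA]; ring
        rw [h0, add_zero]
      rw [this]
    have hd1 : A ∣ S + 1 := ⟨(n : ℤ) - C lastF, by rw [hW1] at heq; linear_combination heq⟩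
    have hd0 : A ∣ a 0 := by
      have h3 := dvd_sub hdvd' hd1
      have h4 : (S + a 0 + 1) - (S + 1) = a 0 := by ring
      rwa [h4] at h3
    have h5 := hlt 0 (by omega)
    have h6 := Int.le_of_dvd (by omega) hd0
    omega
  · by_cases hkd : (k : ℕ) = n + 1
    · -- apex is the last vertex
      have hW0 : W = 0 := by
        rw [← hN0]
        apply hothers
        intro hh
        have := congrArg Fin.val hh
        simp at this
        omega
      have hCm : ∀ s : Fin (n + 1), (s : ℕ) < n → C s = 0 := by
        intro s hs
        have h1 := hNmid s hs
        have h2 : N ⟨(s : ℕ) + 1, by omega⟩ = 0 := by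
          apply hothers
          intro hh
          have := congrArg Fin.val hh
          simp [hdFin] at this
          omega
        rw [h2, hW0] at h1
        omega
      have hsumC : ∑ s ∈ Finset.univ.erase lastF, (A - a ((s : ℕ) + 1)) * C s = 0 := by
        apply Finset.sum_eq_zero
        intro s hs
        rw [hCm s (hCltn s (Finset.mem_erase.mp hs).1)]
        ring
      have hkz : k = dFin := Fin.ext (by rw [hkd, hdFin])
      have heq : A * C lastF = 1 := by
        have hh := hk
        rw [hkz, hNlast, hsumC, hW0] at hh
        linarith
      have hd1 : A ∣ 1 := ⟨C lastF, heq.symm⟩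
      have h6 := Int.le_of_dvd one_pos hd1
      omega
    · -- apex is a middle vertex
      have hkk1 : 1 ≤ (k : ℕ) := by omega
      have hkkn : (k : ℕ) ≤ n := by
        have := k.isLt
        omega
      set t0 : Fin (n + 1) := ⟨(k : ℕ) - 1, by omega⟩ with ht0
      have ht0n : (t0 : ℕ) < n := by
        rw [ht0]
        simp only [Fin.val_mk]
        omega
      have hW0 : W = 0 := by
        rw [← hN0]
        apply hothers
        intro hh
        have := congrArg Fin.val hh
        simp at this
        omega
      have hCk : C t0 = 1 := by
        have h1 := hNmid t0 ht0n
        have h2 : (⟨(t0 : ℕ) + 1, by omega⟩ : Fin (n + 1 + 1)) = k := by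
          apply Fin.ext
          simp only [Fin.val_mk, ht0]
          omega
        rw [h2, hk, hW0] at h1
        omega
      have hCm : ∀ s : Fin (n + 1), (s : ℕ) < n → s ≠ t0 → C s = 0 := by
        intro s hs hst
        have h1 := hNmid s hs
        have h2 : N ⟨(s : ℕ) + 1, by omega⟩ = 0 := by
          apply hothers
          intro hh
          have h3 := congrArg Fin.val hh
          simp only [Fin.val_mk] at h3
          exact hst (Fin.ext (by rw [ht0]; simp only [Fin.val_mk]; omega))
        rw [h2, hW0] at h1
        omega
      have ht0mem : t0 ∈ Finset.univ.erase lastF := by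
        rw [Finset.mem_erase]
        refine ⟨?_, Finset.mem_univ _⟩
        intro hh
        have := congrArg Fin.val hh
        rw [ht0, hlastF] at this
        simp only [Fin.val_mk] at this
        omega
      have hsumC : ∑ s ∈ Finset.univ.erase lastF, (A - a ((s : ℕ) + 1)) * C s
          = A - a (k : ℕ) := by
        rw [Finset.sum_eq_single_of_mem t0 ht0mem]
        · rw [hCk, mul_one, ht0]
          simp only [Fin.val_mk]
          rw [show (k : ℕ) - 1 + 1 = (k : ℕ) by omega]
        · intro s hs hst
          rw [hCm s (hCltn s (Finset.mem_erase.mp hs).1) hst]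
          ring
      have hNd : N dFin = 0 := by
        apply hothers
        intro hh
        have := congrArg Fin.val hh
        simp [hdFin] at this
        omega
      have heq : A - a (k : ℕ) + A * C lastF = 0 := by
        have := hNd
        rw [hNlast, hsumC, hW0] at this
        linarith
      have hd1 : A ∣ a (k : ℕ) := ⟨1 + C lastF, by linear_combination -heq⟩
      have h5 := hlt (k : ℕ) (by omega)
      have h6 := Int.le_of_dvd (by omega) hd1
      omega
/-- `Δ(A)` is not a lattice pyramid over any lower-dimensional lattice
simplex iff `1 ≤ a i < a d` for all `0 ≤ i ≤ d-1`, where `a 0` is the integer with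
`1 ≤ a 0 ≤ a d` and `a d ∣ a 0 + ⋯ + a (d-1) + 1`. -/
theorem statement5 {d : ℕ} (hd : 1 ≤ d) (a : ℕ → ℤ)
    (ha : ∀ i, 1 ≤ i → i ≤ d - 1 → 1 ≤ a i ∧ a i ≤ a d)
    (ha0 : 1 ≤ a 0 ∧ a 0 ≤ a d)
    (hdvd : a d ∣ (∑ i ∈ Finset.range d, a i) + 1) :
    ¬ IsLatticePyramid (simplexOf (simplexVerts d a)) ↔
      ∀ i, i < d → 1 ≤ a i ∧ a i < a d := by
  constructor
  · intro hnp i hi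
    have hb : 1 ≤ a i ∧ a i ≤ a d := by
      rcases Nat.eq_zero_or_pos i with h0 | h1
      · subst h0; exact ha0
      · exact ha i h1 (by omega)
    refine ⟨hb.1, ?_⟩
    by_contra hcon
    have heq : a i = a d := le_antisymm hb.2 (by omega)
    apply hnp
    rcases Nat.eq_zero_or_pos i with h0 | h1
    · subst h0
      exact lemB_zero hd a (by omega) heq hdvd
    · exact lemB_mid a i h1 (by omega) (by omega) heq
  · intro hlt hpyr
    obtain ⟨n, rfl⟩ : ∃ n, d = n + 1 := ⟨d - 1, by omega⟩
    exact lemA a hlt hdvd hpyr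
end
end

section
/- Suppose 1 ≤ a_0,…,a_{d-1} < a_d, r·a_d = a_0 + a_1 + ⋯ + a_{d-1} + 1, and a_i divides a_d for each 0 ≤ i ≤ d−1. Then Δ(A) is Gorenstein of index r; that is, r·Δ(A) − (1,…,1) is a reflexive polytope. -/
open scoped BigOperators
open MeasureTheory

noncomputable section

namespace S7aux

variable {d : ℕ}

/- ## Abstract polyhedral lemmas -/

lemma lin_sum (u : Fin d → ℝ) : IsLinearMap ℝ (fun y : Fin d → ℝ => ∑ j, y j * u j) := by
  constructor
  · intro x y; simp [add_mul, Finset.sum_add_distrib]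
  · intro c x; simp [Finset.mul_sum, mul_assoc]

lemma hull_eq_inter (W U : Fin (d + 1) → Fin d → ℝ) (C : Fin (d + 1) → ℝ)
    (hC : ∀ k, 0 < C k)
    (h1 : ∀ i k, ∑ j, W i j * U k j = 1 - (if i = k then C k else 0))
    (h3 : ∀ y : Fin d → ℝ, ∑ k, (1 - ∑ j, y j * U k j) / C k = 1)
    (h4 : ∀ y : Fin d → ℝ, ∀ j, ∑ k, ((1 - ∑ j', y j' * U k j') / C k) * W k j = y j) :
    convexHull ℝ (Set.range W) = {y | ∀ k, ∑ j, y j * U k j ≤ 1} := by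
  apply le_antisymm
  · apply convexHull_min
    · rintro _ ⟨i, rfl⟩ k
      have := h1 i k
      by_cases h : i = k <;> simp [h] at this ⊢ <;> rw [this]
      · linarith [hC k]
    · have : {y : Fin d → ℝ | ∀ k, ∑ j, y j * U k j ≤ 1} =
          ⋂ k, {y : Fin d → ℝ | ∑ j, y j * U k j ≤ 1} := by
        ext y; simp [Set.mem_iInter]
      rw [this]
      exact convex_iInter fun k => convex_halfSpace_le (lin_sum (U k)) 1
  · intro y hy
    set mu : Fin (d + 1) → ℝ := fun k => (1 - ∑ j, y j * U k j) / C k with hmu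
    have h0 : ∀ k, 0 ≤ mu k := fun k =>
      div_nonneg (by linarith [hy k]) (hC k).le
    have hsum : ∑ k, mu k = 1 := h3 y
    have hrep : ∑ k, mu k • W k = y := by
      funext j
      have := h4 y j
      simpa [Finset.sum_apply] using this
    rw [← hrep]
    exact (convex_convexHull ℝ _).sum_mem (fun k _ => h0 k) hsum
      (fun k _ => subset_convexHull ℝ _ ⟨k, rfl⟩)

lemma interior_inter (U : Fin (d + 1) → Fin d → ℝ) (hU : ∀ k, U k ≠ 0) :
    interior {y : Fin d → ℝ | ∀ k, ∑ j, y j * U k j ≤ 1} =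
      {y | ∀ k, ∑ j, y j * U k j < 1} := by
  apply le_antisymm
  · intro y hy k
    have hle : ∑ j, y j * U k j ≤ 1 := (interior_subset hy) k
    rcases lt_or_eq_of_le hle with h | h
    · exact h
    · exfalso
      have hnorm : (0:ℝ) < ∑ j, U k j * U k j := by
        rcases Function.ne_iff.1 (hU k) with ⟨j0, hj0⟩
        have : ∀ j, 0 ≤ U k j * U k j := fun j => mul_self_nonneg _
        have hpos : 0 < U k j0 * U k j0 := mul_self_pos.mpr hj0
        exact Finset.sum_pos' (fun j _ => this j) ⟨j0, Finset.mem_univ _, hpos⟩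
      obtain ⟨ε, hε, hball⟩ := Metric.isOpen_iff.1 isOpen_interior y hy
      set δ := ε / 2 / (‖U k‖ + 1) with hδ
      have hUpos : (0:ℝ) < ‖U k‖ + 1 := by positivity
      have hδpos : 0 < δ := by positivity
      have hz : y + δ • U k ∈ Metric.ball y ε := by
        rw [Metric.mem_ball, dist_eq_norm]
        have : y + δ • U k - y = δ • U k := by abel
        rw [this, norm_smul]
        have h1 : ‖δ‖ = δ := abs_of_pos hδpos
        rw [h1]
        calc δ * ‖U k‖ ≤ δ * (‖U k‖ + 1) := by nlinarith [norm_nonneg (U k)]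
          _ = ε / 2 := by rw [hδ, div_mul_cancel₀ _ (ne_of_gt hUpos)]
          _ < ε := by linarith
      have hzP : y + δ • U k ∈ {y : Fin d → ℝ | ∀ k, ∑ j, y j * U k j ≤ 1} :=
        interior_subset (hball hz)
      have := hzP k
      have hexp : ∑ j, (y + δ • U k) j * U k j
          = (∑ j, y j * U k j) + δ * ∑ j, U k j * U k j := by
        rw [Finset.mul_sum, ← Finset.sum_add_distrib]
        apply Finset.sum_congr rfl
        intro j _
        simp [Pi.add_apply, Pi.smul_apply, smul_eq_mul]; ring
      rw [hexp, h] at this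
      nlinarith
  · apply interior_maximal
    · intro y hy k; exact (hy k).le
    · have : {y : Fin d → ℝ | ∀ k, ∑ j, y j * U k j < 1} =
          ⋂ k, {y : Fin d → ℝ | ∑ j, y j * U k j < 1} := by
        ext y; simp [Set.mem_iInter]
      rw [this]
      apply isOpen_iInter_of_finite
      intro k
      have hc : Continuous fun y : Fin d → ℝ => ∑ j, y j * U k j := by
        apply continuous_finset_sum
        intro j _
        exact (continuous_apply j).mul continuous_const
      exact isOpen_lt hc continuous_const

lemma polar_hull (W : Fin (d + 1) → Fin d → ℝ) :
    polarDual (convexHull ℝ (Set.range W)) = {x | ∀ i, ∑ j, W i j * x j ≤ 1} := by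
  ext x
  constructor
  · intro hx i
    exact hx (W i) (subset_convexHull ℝ _ ⟨i, rfl⟩)
  · intro hx p hp
    have hlin : IsLinearMap ℝ (fun p : Fin d → ℝ => ∑ j, p j * x j) := by
      constructor
      · intro u v; simp [add_mul, Finset.sum_add_distrib]
      · intro c u; simp [Finset.mul_sum, mul_assoc]
    have hconv : Convex ℝ {p : Fin d → ℝ | ∑ j, p j * x j ≤ 1} :=
      convex_halfSpace_le hlin 1
    have := convexHull_min (fun w hw => ?_) hconv hp
    · exact this
    · rcases hw with ⟨i, rfl⟩
      exact hx i

lemma U_ne_zero (hd : 1 ≤ d) (W U : Fin (d + 1) → Fin d → ℝ) (C : Fin (d + 1) → ℝ)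
    (hC : ∀ k, 0 < C k)
    (h1 : ∀ i k, ∑ j, W i j * U k j = 1 - (if i = k then C k else 0)) :
    ∀ k, U k ≠ 0 := by
  intro k hk
  obtain ⟨i, hik⟩ : ∃ i : Fin (d+1), i ≠ k := by
    rcases eq_or_ne k 0 with h | h
    · exact ⟨⟨1, by omega⟩, by rw [h]; intro hc; simpa [Fin.ext_iff] using hc⟩
    · exact ⟨0, fun hc => h hc.symm⟩
  have := h1 i k
  simp [hik, hk] at this

lemma single_sum (u : Fin d → ℝ) (m : Fin d) :
    ∑ j, (Pi.single m 1 : Fin d → ℝ) j * u j = u m := by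
  rw [Finset.sum_eq_single m]
  · simp
  · intro b _ hb; simp [Pi.single_apply, hb]
  · simp

lemma coeffs (C : Fin (d+1) → ℝ) (U W : Fin (d+1) → Fin d → ℝ)
    (h3 : ∀ y : Fin d → ℝ, ∑ k, (1 - ∑ j, y j * U k j) / C k = 1)
    (h4 : ∀ y : Fin d → ℝ, ∀ j, ∑ k, ((1 - ∑ j', y j' * U k j') / C k) * W k j = y j) :
    (∑ k, 1 / C k = 1) ∧ (∀ j, ∑ k, U k j / C k = 0) ∧ (∀ j, ∑ k, W k j / C k = 0)
      ∧ (∀ m j, ∑ k, (U k m / C k) * W k j = -(if j = m then (1:ℝ) else 0)) := by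
  have h30 : ∑ k, 1 / C k = 1 := by simpa using h3 0
  have h40 : ∀ j, ∑ k, W k j / C k = 0 := by
    intro j
    calc ∑ k, W k j / C k
        = ∑ k, ((1 - ∑ j', (0 : Fin d → ℝ) j' * U k j') / C k) * W k j :=
          Finset.sum_congr rfl fun k _ => by simp [div_eq_mul_inv, mul_comm]
      _ = (0 : Fin d → ℝ) j := h4 0 j
      _ = 0 := rfl
  have hU0 : ∀ j, ∑ k, U k j / C k = 0 := by
    intro j
    have key : ∑ k, (1 - U k j) / C k = 1 := by
      calc ∑ k, (1 - U k j) / C k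
          = ∑ k, (1 - ∑ j', (Pi.single j 1 : Fin d → ℝ) j' * U k j') / C k :=
            Finset.sum_congr rfl fun k _ => by rw [single_sum]
        _ = 1 := h3 _
    have : ∑ k, (1 / C k - (1 - U k j) / C k) = 0 := by
      rw [Finset.sum_sub_distrib, h30, key]; ring
    calc ∑ k, U k j / C k = ∑ k, (1 / C k - (1 - U k j) / C k) :=
          Finset.sum_congr rfl fun k _ => by rw [div_sub_div_same]; ring_nf
      _ = 0 := this
  refine ⟨h30, hU0, h40, ?_⟩
  intro m j
  have key : ∑ k, ((1 - U k m) / C k) * W k j = (if j = m then (1:ℝ) else 0) := by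
    calc ∑ k, ((1 - U k m) / C k) * W k j
        = ∑ k, ((1 - ∑ j', (Pi.single m 1 : Fin d → ℝ) j' * U k j') / C k) * W k j :=
          Finset.sum_congr rfl fun k _ => by rw [single_sum]
      _ = (Pi.single m 1 : Fin d → ℝ) j := h4 _ j
      _ = (if j = m then (1:ℝ) else 0) := by simp [Pi.single_apply]
  have hz : ∑ k, (1 / C k) * W k j = 0 := by
    rw [← h40 j]
    exact Finset.sum_congr rfl fun k _ => by ring
  have : ∑ k, ((1 / C k) * W k j - ((1 - U k m) / C k) * W k j)
      = -(if j = m then (1:ℝ) else 0) := by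
    rw [Finset.sum_sub_distrib, hz, key]; ring
  calc ∑ k, (U k m / C k) * W k j
      = ∑ k, ((1 / C k) * W k j - ((1 - U k m) / C k) * W k j) := by
        refine Finset.sum_congr rfl fun k _ => ?_
        rw [← sub_mul, div_sub_div_same]
        ring_nf
    _ = -(if j = m then (1:ℝ) else 0) := this

lemma dual_identities (C : Fin (d+1) → ℝ) (U W : Fin (d+1) → Fin d → ℝ)
    (h3 : ∀ y : Fin d → ℝ, ∑ k, (1 - ∑ j, y j * U k j) / C k = 1)
    (h4 : ∀ y : Fin d → ℝ, ∀ j, ∑ k, ((1 - ∑ j', y j' * U k j') / C k) * W k j = y j) :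
    (∀ x : Fin d → ℝ, ∑ i, (1 - ∑ j, x j * W i j) / C i = 1) ∧
    (∀ x : Fin d → ℝ, ∀ j, ∑ i, ((1 - ∑ j', x j' * W i j') / C i) * U i j = x j) := by
  obtain ⟨hc1, hcU, hcW, hcUW⟩ := coeffs C U W h3 h4
  constructor
  · intro x
    calc ∑ i, (1 - ∑ j, x j * W i j) / C i
        = ∑ i, (1 / C i - ∑ j, x j * (W i j / C i)) := by
          refine Finset.sum_congr rfl fun i _ => ?_
          rw [sub_div, Finset.sum_div]
          congr 1
          exact Finset.sum_congr rfl fun j _ => by ring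
      _ = 1 - ∑ i, ∑ j, x j * (W i j / C i) := by rw [Finset.sum_sub_distrib, hc1]
      _ = 1 - ∑ j, x j * ∑ i, (W i j / C i) := by
          rw [Finset.sum_comm]
          congr 1
          exact Finset.sum_congr rfl fun j _ => by rw [Finset.mul_sum]
      _ = 1 := by
          rw [Finset.sum_congr rfl fun j _ => by rw [hcW j]]
          simp
  · intro x j
    calc ∑ i, ((1 - ∑ j', x j' * W i j') / C i) * U i j
        = ∑ i, (U i j / C i - ∑ m, x m * ((U i j / C i) * W i m)) := by
          refine Finset.sum_congr rfl fun i _ => ?_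
          rw [sub_div, sub_mul, Finset.sum_div, Finset.sum_mul]
          congr 1
          · ring
          · exact Finset.sum_congr rfl fun m _ => by ring
      _ = 0 - ∑ i, ∑ m, x m * ((U i j / C i) * W i m) := by
          rw [Finset.sum_sub_distrib, hcU j]
      _ = - ∑ m, x m * ∑ i, (U i j / C i) * W i m := by
          rw [Finset.sum_comm]
          rw [zero_sub]
          congr 1
          exact Finset.sum_congr rfl fun m _ => by rw [Finset.mul_sum]
      _ = - ∑ m, x m * -(if m = j then (1:ℝ) else 0) := by
          congr 1
          exact Finset.sum_congr rfl fun m _ => by rw [hcUW j m]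
      _ = ∑ m, (if m = j then x m else 0) := by
          rw [← Finset.sum_neg_distrib]
          refine Finset.sum_congr rfl fun m _ => ?_
          by_cases h : m = j <;> simp [h]
      _ = x j := by rw [Finset.sum_ite_eq' Finset.univ j x]; simp

/- ## Concrete data -/
def qv (e : ℕ) (a : ℕ → ℤ) (k : ℕ) : ℤ := a (e + 1) / a k

def Uvec (e r : ℕ) (a : ℕ → ℤ) : Fin (e + 2) → Fin (e + 1) → ℤ := fun k j =>
  if (k : ℕ) = 0 then
    (if (j : ℕ) = e then ((r : ℤ) - e) * qv e a 0 - 1 else qv e a 0)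
  else if (k : ℕ) = e + 1 then (if (j : ℕ) = e then -1 else 0)
  else if (j : ℕ) + 1 = (k : ℕ) then -(qv e a (k : ℕ))
  else if (j : ℕ) = e then qv e a (k : ℕ) - 1 else 0

def Wvec (e r : ℕ) (a : ℕ → ℤ) : Fin (e + 2) → Fin (e + 1) → ℤ := fun i j =>
  r * simplexVerts (e + 1) a i j - 1

def Cval (e r : ℕ) (a : ℕ → ℤ) : Fin (e + 2) → ℝ := fun k =>
  if (k : ℕ) = e + 1 then (r : ℝ) * (a (e + 1) : ℝ) else (r : ℝ) * ((qv e a (k : ℕ) : ℤ) : ℝ)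

def Ta (e : ℕ) (a : ℕ → ℤ) : ℝ := ∑ j : Fin e, ((a ((j : ℕ) + 1) : ℤ) : ℝ)

variable {e r : ℕ} {a : ℕ → ℤ}

def mid {e : ℕ} (k : Fin e) : Fin (e + 2) := (k.castSucc).succ

@[simp] lemma mid_val (k : Fin e) : ((mid k : Fin (e + 2)) : ℕ) = (k : ℕ) + 1 := rfl

lemma fin_cases3 (i : Fin (e + 2)) :
    i = 0 ∨ i = Fin.last (e + 1) ∨ ∃ k : Fin e, i = mid k := by
  rcases i with ⟨iv, hi⟩
  rcases Nat.lt_or_ge iv 1 with h | h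
  · left; ext; simpa using by omega
  · rcases Nat.lt_or_ge iv (e + 1) with h2 | h2
    · right; right
      exact ⟨⟨iv - 1, by omega⟩, by ext; simp [mid]; omega⟩
    · right; left; ext; simp [Fin.last]; omega

lemma Uval_0 (j : Fin (e + 1)) :
    toReal (Uvec e r a 0) j =
      if (j : ℕ) = e then ((r : ℝ) - e) * ((qv e a 0 : ℤ) : ℝ) - 1 else ((qv e a 0 : ℤ) : ℝ) := by
  by_cases h : (j : ℕ) = e <;> simp [toReal, Uvec, h] <;> push_cast <;> ring

lemma Uval_last (j : Fin (e + 1)) :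
    toReal (Uvec e r a (Fin.last (e + 1))) j = if (j : ℕ) = e then -1 else 0 := by
  by_cases h : (j : ℕ) = e <;> simp [toReal, Uvec, h]

lemma Uval_mid (k : Fin e) (j : Fin (e + 1)) :
    toReal (Uvec e r a (mid k)) j =
      if (j : ℕ) = (k : ℕ) then -((qv e a ((k : ℕ) + 1) : ℤ) : ℝ)
      else if (j : ℕ) = e then ((qv e a ((k : ℕ) + 1) : ℤ) : ℝ) - 1 else 0 := by
  have hk : (k : ℕ) < e := k.isLt
  simp only [toReal, Uvec]; rw [mid_val]
  rw [if_neg (by omega), if_neg (by omega)]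
  by_cases h : (j : ℕ) = (k : ℕ)
  · rw [if_pos (by omega), if_pos h]; push_cast; ring
  · rw [if_neg (by omega), if_neg h]
    split <;> push_cast <;> ring

lemma Wval_0 (j : Fin (e + 1)) : toReal (Wvec e r a 0) j = -1 := by
  simp [toReal, Wvec, simplexVerts]

lemma Wval_mid (k : Fin e) (j : Fin (e + 1)) :
    toReal (Wvec e r a (mid k)) j =
      (if (j : ℕ) = (k : ℕ) then (r : ℝ) else 0) - 1 := by
  have hk : (k : ℕ) < e := k.isLt
  simp only [toReal, Wvec, simplexVerts]; rw [mid_val]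
  rw [if_neg (by omega), if_neg (by omega)]
  by_cases h : (j : ℕ) = (k : ℕ)
  · rw [if_pos (by omega), if_pos h]; push_cast; ring
  · rw [if_neg (by omega), if_neg h]; push_cast; ring

lemma Wval_last (j : Fin (e + 1)) :
    toReal (Wvec e r a (Fin.last (e + 1))) j =
      if (j : ℕ) = e then (r : ℝ) * (a (e + 1) : ℝ) - 1
      else (r : ℝ) * ((a (e + 1) : ℝ) - (a ((j : ℕ) + 1) : ℝ)) - 1 := by
  by_cases h : (j : ℕ) = e <;> simp [toReal, Wvec, simplexVerts, h] <;> push_cast <;> ring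

-- one-hot sums
lemma sum_if_val {n : ℕ} (m : ℕ) (hm : m < n) (f : Fin n → ℝ) :
    ∑ j : Fin n, (if (j : ℕ) = m then f j else 0) = f ⟨m, hm⟩ := by
  rw [Finset.sum_eq_single (⟨m, hm⟩ : Fin n)]
  · simp
  · intro b _ hb
    rw [if_neg (fun hc => hb (Fin.ext hc))]
  · simp

-- inner coordinate sums against U rows
lemma inner_U0 (y : Fin (e + 1) → ℝ) :
    ∑ j, y j * toReal (Uvec e r a 0) j
      = ((qv e a 0 : ℤ) : ℝ) * (∑ j : Fin e, y j.castSucc)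
        + (((r : ℝ) - e) * ((qv e a 0 : ℤ) : ℝ) - 1) * y (Fin.last e) := by
  rw [Fin.sum_univ_castSucc]
  have h1 : ∀ j : Fin e, y j.castSucc * toReal (Uvec e r a 0) j.castSucc
      = ((qv e a 0 : ℤ) : ℝ) * y j.castSucc := by
    intro j
    rw [Uval_0, if_neg (by simp only [Fin.coe_castSucc]; exact j.isLt.ne)]
    ring
  rw [Finset.sum_congr rfl fun j _ => h1 j, ← Finset.mul_sum, Uval_0,
    if_pos (Fin.val_last e)]
  ring

lemma inner_Ulast (y : Fin (e + 1) → ℝ) :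
    ∑ j, y j * toReal (Uvec e r a (Fin.last (e + 1))) j = -(y (Fin.last e)) := by
  rw [Fin.sum_univ_castSucc]
  have h1 : ∀ j : Fin e, y j.castSucc * toReal (Uvec e r a (Fin.last (e + 1))) j.castSucc
      = 0 := by
    intro j
    rw [Uval_last, if_neg (by simp only [Fin.coe_castSucc]; exact j.isLt.ne)]
    ring
  rw [Finset.sum_congr rfl fun j _ => h1 j, Finset.sum_const_zero, Uval_last,
    if_pos (Fin.val_last e)]
  ring

lemma inner_Umid (k : Fin e) (y : Fin (e + 1) → ℝ) :
    ∑ j, y j * toReal (Uvec e r a (mid k)) j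
      = -((qv e a ((k : ℕ) + 1) : ℤ) : ℝ) * y k.castSucc
        + (((qv e a ((k : ℕ) + 1) : ℤ) : ℝ) - 1) * y (Fin.last e) := by
  rw [Fin.sum_univ_castSucc]
  have h1 : ∀ j : Fin e, y j.castSucc * toReal (Uvec e r a (mid k)) j.castSucc
      = if (j : ℕ) = (k : ℕ) then -((qv e a ((k : ℕ) + 1) : ℤ) : ℝ) * y j.castSucc else 0 := by
    intro j
    rw [Uval_mid]
    simp only [Fin.coe_castSucc]
    by_cases h : (j : ℕ) = (k : ℕ)
    · rw [if_pos h, if_pos h]; ring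
    · rw [if_neg h, if_neg h, if_neg (j.isLt.ne)]; ring
  rw [Finset.sum_congr rfl fun j _ => h1 j,
    sum_if_val (k : ℕ) k.isLt (fun j => -((qv e a ((k : ℕ) + 1) : ℤ) : ℝ) * y j.castSucc),
    Uval_mid, if_neg (by simp only [Fin.val_last]; exact (Nat.ne_of_gt k.isLt)),
    if_pos (Fin.val_last e)]
  have : (⟨(k : ℕ), k.isLt⟩ : Fin e) = k := rfl
  rw [this]; ring

-- sums of W rows over the first e coordinates
lemma WS'_0 : ∑ j : Fin e, toReal (Wvec e r a 0) j.castSucc = -(e : ℝ) := by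
  rw [Finset.sum_congr rfl fun j _ => Wval_0 (e := e) (r := r) (a := a) j.castSucc]
  simp

lemma WS'_mid (k : Fin e) :
    ∑ j : Fin e, toReal (Wvec e r a (mid k)) j.castSucc = (r : ℝ) - e := by
  have h1 : ∀ j : Fin e, toReal (Wvec e r a (mid k)) j.castSucc
      = (if (j : ℕ) = (k : ℕ) then (r : ℝ) else 0) - 1 := by
    intro j
    rw [Wval_mid]
    simp only [Fin.coe_castSucc]
  rw [Finset.sum_congr rfl fun j _ => h1 j, Finset.sum_sub_distrib,
    sum_if_val (k : ℕ) k.isLt (fun _ => (r : ℝ))]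
  simp

lemma WS'_last : ∑ j : Fin e, toReal (Wvec e r a (Fin.last (e + 1))) j.castSucc
    = (r : ℝ) * ((e : ℝ) * (a (e + 1) : ℝ) - Ta e a) - e := by
  have h1 : ∀ j : Fin e, toReal (Wvec e r a (Fin.last (e + 1))) j.castSucc
      = ((r : ℝ) * (a (e + 1) : ℝ) - 1) - (r : ℝ) * ((a ((j : ℕ) + 1) : ℤ) : ℝ) := by
    intro j
    rw [Wval_last, if_neg (by simp only [Fin.coe_castSucc]; exact j.isLt.ne)]
    simp only [Fin.coe_castSucc]
    push_cast
    ring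
  rw [Finset.sum_congr rfl fun j _ => h1 j, Finset.sum_sub_distrib, Finset.sum_const,
    ← Finset.mul_sum, Finset.card_univ, Fintype.card_fin, nsmul_eq_mul]
  rw [show (∑ j : Fin e, ((a ((j : ℕ) + 1) : ℤ) : ℝ)) = Ta e a from rfl]
  ring

-- Cval values
lemma Cval_0 : Cval e r a 0 = (r : ℝ) * ((qv e a 0 : ℤ) : ℝ) := by simp [Cval]
lemma Cval_mid (k : Fin e) :
    Cval e r a (mid k) = (r : ℝ) * ((qv e a ((k : ℕ) + 1) : ℤ) : ℝ) := by
  have hk := k.isLt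
  simp only [Cval]; rw [mid_val]
  rw [if_neg (by omega)]
lemma Cval_last : Cval e r a (Fin.last (e + 1)) = (r : ℝ) * (a (e + 1) : ℝ) := by
  simp [Cval]





variable {e r : ℕ} {a : ℕ → ℤ}

lemma sum_peel (f : Fin (e + 2) → ℝ) :
    ∑ k, f k = f 0 + ((∑ k : Fin e, f (mid k)) + f (Fin.last (e + 1))) := by
  rw [Fin.sum_univ_succ, Fin.sum_univ_castSucc, Fin.succ_last]
  rfl

lemma gram (hq : ∀ k, k ≤ e → (a k : ℝ) * ((qv e a k : ℤ) : ℝ) = (a (e + 1) : ℝ))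
    (hTa : (a 0 : ℝ) + Ta e a + 1 = (r : ℝ) * (a (e + 1) : ℝ)) :
    ∀ i k, ∑ j, toReal (Wvec e r a i) j * toReal (Uvec e r a k) j
      = 1 - (if i = k then Cval e r a k else 0) := by
  intro i k
  rcases fin_cases3 i with hi | hi | ⟨i0, hi⟩ <;>
    rcases fin_cases3 k with hk | hk | ⟨k0, hk⟩ <;> subst hi <;> subst hk
  · -- (0,0)
    rw [inner_U0, WS'_0, Wval_0, if_pos rfl, Cval_0]; ring
  · -- (0, last)
    rw [inner_Ulast, Wval_0,
      if_neg (by simp only [Fin.ext_iff, Fin.val_zero, Fin.val_last]; omega)]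
    norm_num
  · -- (0, mid k0)
    have hk0 := k0.isLt
    rw [inner_Umid, Wval_0, Wval_0,
      if_neg (by simp only [Fin.ext_iff, Fin.val_zero, mid_val]; omega)]
    ring
  · -- (last, 0)
    rw [inner_U0, WS'_last, Wval_last, if_pos (Fin.val_last e),
      if_neg (by simp only [Fin.ext_iff, Fin.val_zero, Fin.val_last]; omega)]
    linear_combination (r : ℝ) * hq 0 (by omega) - (r : ℝ) * ((qv e a 0 : ℤ) : ℝ) * hTa
  · -- (last, last)
    rw [inner_Ulast, Wval_last, if_pos (Fin.val_last e), if_pos rfl, Cval_last]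
    ring
  · -- (last, mid k0)
    have hk0 := k0.isLt
    rw [inner_Umid, Wval_last, Wval_last]
    simp only [Fin.coe_castSucc, Fin.val_last, if_true]
    rw [if_neg (by omega),
      if_neg (by simp only [Fin.ext_iff, Fin.val_last, mid_val]; omega)]
    linear_combination (r : ℝ) * hq ((k0 : ℕ) + 1) (by omega)
  · -- (mid i0, 0)
    have hi0 := i0.isLt
    rw [inner_U0, WS'_mid, Wval_mid]
    simp only [Fin.val_last]
    rw [if_neg (by omega),
      if_neg (by simp only [Fin.ext_iff, Fin.val_zero, mid_val]; omega)]
    ring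
  · -- (mid i0, last)
    have hi0 := i0.isLt
    rw [inner_Ulast, Wval_mid]
    simp only [Fin.val_last]
    rw [if_neg (by omega),
      if_neg (by simp only [Fin.ext_iff, Fin.val_last, mid_val]; omega)]
    norm_num
  · -- (mid i0, mid k0)
    have hi0 := i0.isLt
    have hk0 := k0.isLt
    by_cases hik : i0 = k0
    · subst hik
      rw [inner_Umid, Wval_mid, Wval_mid, if_pos rfl, Cval_mid]
      simp only [Fin.coe_castSucc, Fin.val_last, if_true]
      rw [if_neg (by omega)]
      ring
    · have hval : (i0 : ℕ) ≠ (k0 : ℕ) := fun hc => hik (Fin.ext hc)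
      rw [inner_Umid, Wval_mid, Wval_mid]
      simp only [Fin.coe_castSucc, Fin.val_last]
      rw [if_neg (show ¬((k0 : ℕ) = (i0 : ℕ)) by omega),
        if_neg (show ¬(e = (i0 : ℕ)) by omega),
        if_neg (show ¬(mid i0 = mid k0) from fun hc => hik (Fin.ext (by
          have := congrArg Fin.val hc
          simp only [mid_val] at this
          omega)))]
      ring





def N0 (e r : ℕ) (a : ℕ → ℤ) (y : Fin (e + 1) → ℝ) : ℝ :=
  (a 0 : ℝ) - (a (e + 1) : ℝ) * (∑ j : Fin e, y j.castSucc)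
    - (((r : ℝ) - (e : ℝ)) * (a (e + 1) : ℝ) - (a 0 : ℝ)) * y (Fin.last e)

def Nmid (e : ℕ) (a : ℕ → ℤ) (y : Fin (e + 1) → ℝ) (k : Fin e) : ℝ :=
  ((a ((k : ℕ) + 1) : ℤ) : ℝ) + (a (e + 1) : ℝ) * y k.castSucc
    - ((a (e + 1) : ℝ) - ((a ((k : ℕ) + 1) : ℤ) : ℝ)) * y (Fin.last e)

variable {e r : ℕ} {a : ℕ → ℤ}

lemma mu0_eq (hq0 : (a 0 : ℝ) * ((qv e a 0 : ℤ) : ℝ) = (a (e + 1) : ℝ))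
    (hr0 : 0 < (r : ℝ)) (hAd : 0 < (a (e + 1) : ℝ)) (hQ0 : 0 < ((qv e a 0 : ℤ) : ℝ))
    (y : Fin (e + 1) → ℝ) :
    (1 - ∑ j, y j * toReal (Uvec e r a 0) j) / Cval e r a 0
      = N0 e r a y / ((r : ℝ) * (a (e + 1) : ℝ)) := by
  rw [inner_U0, Cval_0, div_eq_div_iff (by positivity) (by positivity), N0]
  linear_combination (-(r : ℝ)) * (1 + y (Fin.last e)) * hq0

lemma mumid_eq (k : Fin e)
    (hqk : (a ((k : ℕ) + 1) : ℝ) * ((qv e a ((k : ℕ) + 1) : ℤ) : ℝ) = (a (e + 1) : ℝ))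
    (hr0 : 0 < (r : ℝ)) (hAd : 0 < (a (e + 1) : ℝ))
    (hQk : 0 < ((qv e a ((k : ℕ) + 1) : ℤ) : ℝ))
    (y : Fin (e + 1) → ℝ) :
    (1 - ∑ j, y j * toReal (Uvec e r a (mid k)) j) / Cval e r a (mid k)
      = Nmid e a y k / ((r : ℝ) * (a (e + 1) : ℝ)) := by
  rw [inner_Umid, Cval_mid, div_eq_div_iff (by positivity) (by positivity), Nmid]
  linear_combination (-(r : ℝ)) * (1 + y (Fin.last e)) * hqk

lemma mulast_eq (y : Fin (e + 1) → ℝ) :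
    (1 - ∑ j, y j * toReal (Uvec e r a (Fin.last (e + 1))) j) / Cval e r a (Fin.last (e + 1))
      = (1 + y (Fin.last e)) / ((r : ℝ) * (a (e + 1) : ℝ)) := by
  rw [inner_Ulast, Cval_last, sub_neg_eq_add]

lemma Nsum (y : Fin (e + 1) → ℝ) :
    ∑ k : Fin e, Nmid e a y k
      = Ta e a * (1 + y (Fin.last e)) + (a (e + 1) : ℝ) * (∑ j : Fin e, y j.castSucc)
        - (e : ℝ) * ((a (e + 1) : ℝ) * y (Fin.last e)) := by
  have h1 : ∀ k : Fin e, Nmid e a y k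
      = (((a ((k : ℕ) + 1) : ℤ) : ℝ) * (1 + y (Fin.last e))
          + (a (e + 1) : ℝ) * y k.castSucc) - (a (e + 1) : ℝ) * y (Fin.last e) := by
    intro k; rw [Nmid]; ring
  rw [Finset.sum_congr rfl fun k _ => h1 k, Finset.sum_sub_distrib, Finset.sum_add_distrib,
    ← Finset.sum_mul, ← Finset.mul_sum, Finset.sum_const, Finset.card_univ,
    Fintype.card_fin, nsmul_eq_mul]
  rw [show (∑ k : Fin e, ((a ((k : ℕ) + 1) : ℤ) : ℝ)) = Ta e a from rfl]

lemma h3_conc (hq : ∀ k, k ≤ e → (a k : ℝ) * ((qv e a k : ℤ) : ℝ) = (a (e + 1) : ℝ))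
    (hTa : (a 0 : ℝ) + Ta e a + 1 = (r : ℝ) * (a (e + 1) : ℝ))
    (hr0 : 0 < (r : ℝ)) (hAd : 0 < (a (e + 1) : ℝ))
    (hQp : ∀ k, k ≤ e → 0 < ((qv e a k : ℤ) : ℝ)) :
    ∀ y : Fin (e + 1) → ℝ,
      ∑ k, (1 - ∑ j, y j * toReal (Uvec e r a k) j) / Cval e r a k = 1 := by
  intro y
  rw [sum_peel (fun k => (1 - ∑ j, y j * toReal (Uvec e r a k) j) / Cval e r a k)]
  rw [mu0_eq (hq 0 (by omega)) hr0 hAd (hQp 0 (by omega)) y, mulast_eq y,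
    Finset.sum_congr rfl fun k _ =>
      mumid_eq k (hq ((k : ℕ) + 1) (by have := k.isLt; omega)) hr0 hAd
        (hQp ((k : ℕ) + 1) (by have := k.isLt; omega)) y,
    ← Finset.sum_div, Nsum, ← add_div, ← add_div,
    div_eq_one_iff_eq (by positivity), N0]
  linear_combination (1 + y (Fin.last e)) * hTa

lemma h4_conc (hq : ∀ k, k ≤ e → (a k : ℝ) * ((qv e a k : ℤ) : ℝ) = (a (e + 1) : ℝ))
    (hTa : (a 0 : ℝ) + Ta e a + 1 = (r : ℝ) * (a (e + 1) : ℝ))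
    (hr0 : 0 < (r : ℝ)) (hAd : 0 < (a (e + 1) : ℝ))
    (hQp : ∀ k, k ≤ e → 0 < ((qv e a k : ℤ) : ℝ)) :
    ∀ (y : Fin (e + 1) → ℝ) (j : Fin (e + 1)),
      ∑ k, ((1 - ∑ j', y j' * toReal (Uvec e r a k) j') / Cval e r a k)
          * toReal (Wvec e r a k) j = y j := by
  intro y j
  have hmu0 := mu0_eq (hq 0 (by omega)) hr0 hAd (hQp 0 (by omega)) y
  have hmulast := mulast_eq (e := e) (r := r) (a := a) y
  have hmumid : ∀ k : Fin e,
      (1 - ∑ j', y j' * toReal (Uvec e r a (mid k)) j') / Cval e r a (mid k)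
        = Nmid e a y k / ((r : ℝ) * (a (e + 1) : ℝ)) := fun k =>
    mumid_eq k (hq ((k : ℕ) + 1) (by have := k.isLt; omega)) hr0 hAd
      (hQp ((k : ℕ) + 1) (by have := k.isLt; omega)) y
  rw [sum_peel (fun k => ((1 - ∑ j', y j' * toReal (Uvec e r a k) j') / Cval e r a k)
      * toReal (Wvec e r a k) j)]
  rw [hmu0, hmulast, Wval_0, Wval_last]
  rcases Fin.eq_castSucc_or_eq_last j with ⟨j0, rfl⟩ | rfl
  · -- j = castSucc j0
    have hj0 := j0.isLt
    have hmterm : ∀ k : Fin e,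
        (1 - ∑ j', y j' * toReal (Uvec e r a (mid k)) j') / Cval e r a (mid k)
            * toReal (Wvec e r a (mid k)) j0.castSucc
          = ((if (k : ℕ) = (j0 : ℕ) then (r : ℝ) * Nmid e a y k else 0)
              - Nmid e a y k) / ((r : ℝ) * (a (e + 1) : ℝ)) := by
      intro k
      rw [hmumid k, Wval_mid]
      simp only [Fin.coe_castSucc]
      by_cases h : (j0 : ℕ) = (k : ℕ)
      · rw [if_pos h, if_pos h.symm]; ring
      · rw [if_neg h, if_neg (fun hc => h hc.symm)]; ring
    rw [Finset.sum_congr rfl fun k _ => hmterm k, ← Finset.sum_div,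
      Finset.sum_sub_distrib,
      sum_if_val (j0 : ℕ) j0.isLt (fun k => (r : ℝ) * Nmid e a y k), Nsum]
    rw [if_neg (by simp only [Fin.coe_castSucc]; omega)]
    rw [show (⟨(j0 : ℕ), j0.isLt⟩ : Fin e) = j0 from rfl]
    rw [div_mul_eq_mul_div, div_mul_eq_mul_div, ← add_div, ← add_div,
      div_eq_iff (by positivity)]
    rw [Nmid, N0]
    simp only [Fin.coe_castSucc]
    linear_combination (-(1 + y (Fin.last e))) * hTa
  · -- j = last
    have hmterm : ∀ k : Fin e,
        (1 - ∑ j', y j' * toReal (Uvec e r a (mid k)) j') / Cval e r a (mid k)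
            * toReal (Wvec e r a (mid k)) (Fin.last e)
          = (-(Nmid e a y k)) / ((r : ℝ) * (a (e + 1) : ℝ)) := by
      intro k
      rw [hmumid k, Wval_mid,
        if_neg (by simp only [Fin.val_last]; have := k.isLt; omega)]
      ring
    rw [Finset.sum_congr rfl fun k _ => hmterm k, ← Finset.sum_div,
      Finset.sum_neg_distrib, Nsum]
    rw [if_pos (Fin.val_last e)]
    rw [div_mul_eq_mul_div, div_mul_eq_mul_div, ← add_div, ← add_div,
      div_eq_iff (by positivity)]
    rw [N0]
    linear_combination (-(1 + y (Fin.last e))) * hTa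

end S7aux


namespace S7aux

lemma reflexive_of_data {d : ℕ} (hd : 1 ≤ d) (W U : Fin (d + 1) → Fin d → ℤ)
    (C : Fin (d + 1) → ℝ) (hC : ∀ k, 0 < C k)
    (h1 : ∀ i k, ∑ j, toReal (W i) j * toReal (U k) j = 1 - (if i = k then C k else 0))
    (h3 : ∀ y : Fin d → ℝ, ∑ k, (1 - ∑ j, y j * toReal (U k) j) / C k = 1)
    (h4 : ∀ y : Fin d → ℝ, ∀ j,
      ∑ k, ((1 - ∑ j', y j' * toReal (U k) j') / C k) * toReal (W k) j = y j) :
    IsReflexive (convexHull ℝ (Set.range (fun i => toReal (W i)))) := by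
  set RW : Fin (d + 1) → Fin d → ℝ := fun i => toReal (W i) with hRW
  set RU : Fin (d + 1) → Fin d → ℝ := fun k => toReal (U k) with hRU
  obtain ⟨h3', h4'⟩ := dual_identities C RU RW h3 h4
  have h1' : ∀ i k, ∑ j, RU i j * RW k j = 1 - (if i = k then C k else 0) := by
    intro i k
    have := h1 k i
    rw [show (∑ j, RU i j * RW k j) = ∑ j, RW k j * RU i j from
      Finset.sum_congr rfl fun j _ => mul_comm _ _, this]
    by_cases h : i = k
    · simp [h]
    · simp [h, Ne.symm h]
  have hPH : convexHull ℝ (Set.range RW) = {y | ∀ k, ∑ j, y j * RU k j ≤ 1} :=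
    hull_eq_inter RW RU C hC h1 h3 h4
  have hU0 : ∀ k, RU k ≠ 0 := U_ne_zero hd RW RU C hC h1
  have hInt : interior (convexHull ℝ (Set.range RW)) = {y | ∀ k, ∑ j, y j * RU k j < 1} := by
    rw [hPH]; exact interior_inter RU hU0
  refine ⟨?_, ?_, ?_⟩
  · rw [hInt]
    intro k
    simp
  · intro x hx hlat
    rw [hInt] at hx
    by_contra hx0
    choose n hn using hlat
    have hint : ∀ k, (∑ j, n j * U k j : ℤ) ≤ 0 := by
      intro k
      have hxk := hx k
      have hcast : ((∑ j, n j * U k j : ℤ) : ℝ) = ∑ j, x j * RU k j := by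
        push_cast
        exact Finset.sum_congr rfl fun j _ => by rw [hn j]; rfl
      have : ((∑ j, n j * U k j : ℤ) : ℝ) < 1 := by rw [hcast]; exact hxk
      exact_mod_cast Int.lt_add_one_iff.mp (by exact_mod_cast this)
    have hray : ∀ t : ℝ, 0 ≤ t → t • x ∈ convexHull ℝ (Set.range RW) := by
      intro t ht
      rw [hPH]
      intro k
      have hsum : ∑ j, (t • x) j * RU k j = t * ∑ j, x j * RU k j := by
        rw [Finset.mul_sum]
        exact Finset.sum_congr rfl fun j _ => by simp [mul_assoc]
      have hle0 : ∑ j, x j * RU k j ≤ 0 := by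
        have hcast : ((∑ j, n j * U k j : ℤ) : ℝ) = ∑ j, x j * RU k j := by
          push_cast
          exact Finset.sum_congr rfl fun j _ => by rw [hn j]; rfl
        rw [← hcast]
        exact_mod_cast hint k
      rw [hsum]
      nlinarith
    have hbdd : Bornology.IsBounded (convexHull ℝ (Set.range RW)) :=
      ((Set.finite_range RW).isCompact_convexHull ℝ).isBounded
    obtain ⟨R, hR⟩ := hbdd.exists_norm_le
    have hxn : 0 < ‖x‖ := norm_pos_iff.mpr hx0
    have hb := hR (((|R| + 1) / ‖x‖) • x) (hray _ (by positivity))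
    rw [norm_smul, norm_div, Real.norm_eq_abs, Real.norm_eq_abs,
      abs_of_pos (show (0:ℝ) < |R| + 1 by positivity), abs_of_pos hxn,
      div_mul_cancel₀ _ (ne_of_gt hxn)] at hb
    linarith [le_abs_self R]
  · refine ⟨Finset.image U Finset.univ, ?_⟩
    have himg : toReal '' ((Finset.image U Finset.univ : Finset (Fin d → ℤ)) : Set (Fin d → ℤ))
        = Set.range RU := by
      rw [Finset.coe_image, Finset.coe_univ, Set.image_univ, ← Set.range_comp]
      rfl
    rw [himg, polar_hull RW, hull_eq_inter RU RW C hC h1' h3' h4']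
    ext x
    constructor
    · intro h k
      rw [show (∑ j, x j * RW k j) = ∑ j, RW k j * x j from
        Finset.sum_congr rfl fun j _ => mul_comm _ _]
      exact h k
    · intro h k
      rw [show (∑ j, RW k j * x j) = ∑ j, x j * RW k j from
        Finset.sum_congr rfl fun j _ => mul_comm _ _]
      exact h k

/-- the affine map `x ↦ r • x + c` -/
def affMap (n : ℕ) (r : ℝ) (c : Fin n → ℝ) : (Fin n → ℝ) →ᵃ[ℝ] (Fin n → ℝ) where
  toFun := fun x => r • x + c
  linear := r • LinearMap.id
  map_vadd' := by
    intro p v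
    funext j
    simp [smul_add]
    ring

lemma image_simplex (e r : ℕ) (a : ℕ → ℤ) :
    (fun x : Fin (e + 1) → ℝ => (r : ℝ) • x + (fun _ => (-1 : ℝ))) ''
        simplexOf (simplexVerts (e + 1) a)
      = convexHull ℝ (Set.range (fun i => toReal (Wvec e r a i))) := by
  have : (fun x : Fin (e + 1) → ℝ => (r : ℝ) • x + (fun _ => (-1 : ℝ)))
      = ⇑(affMap (e + 1) (r : ℝ) (fun _ => (-1 : ℝ))) := rfl
  rw [simplexOf, this, AffineMap.image_convexHull, ← Set.range_comp]
  have hfun : (⇑(affMap (e + 1) (r : ℝ) fun _ => (-1 : ℝ)) ∘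
        fun i => toReal (simplexVerts (e + 1) a i))
      = fun i => toReal (Wvec e r a i) := by
    funext i
    funext j
    simp only [Function.comp_apply, affMap, AffineMap.coe_mk, toReal, Wvec, Pi.add_apply,
      Pi.smul_apply, smul_eq_mul]
    push_cast
    ring
  rw [hfun]

end S7aux

/-- if `1 ≤ a i < a d` for `i < d`, each `a i` divides `a d`, and
`r · a d = a 0 + ⋯ + a (d-1) + 1`, then `Δ(A)` is Gorenstein of index `r`; that is,
`r·Δ(A) - (1,…,1)` is reflexive. -/
theorem statement7 {d : ℕ} (hd : 1 ≤ d) (r : ℕ) (hr : 1 ≤ r) (a : ℕ → ℤ)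
    (ha : ∀ i, i < d → 1 ≤ a i ∧ a i < a d)
    (hdvd : ∀ i, i < d → a i ∣ a d)
    (hsum : (r : ℤ) * a d = (∑ i ∈ Finset.range d, a i) + 1) :
    IsGorenstein (simplexOf (simplexVerts d a)) r ∧
      IsReflexive ((fun x => (r : ℝ) • x - 1) '' simplexOf (simplexVerts d a)) := by
  obtain ⟨e, rfl⟩ : ∃ e, d = e + 1 := ⟨d - 1, by omega⟩
  -- basic facts
  have hAd : (0 : ℝ) < (a (e + 1) : ℝ) := by
    have h0 := ha 0 (by omega)
    have : (1 : ℤ) ≤ a (e + 1) := by omega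
    exact_mod_cast lt_of_lt_of_le zero_lt_one (by exact_mod_cast this)
  have hr0 : (0 : ℝ) < (r : ℝ) := by exact_mod_cast hr
  have hqZ : ∀ k, k ≤ e → a k * S7aux.qv e a k = a (e + 1) := by
    intro k hk
    exact Int.mul_ediv_cancel' (hdvd k (by omega))
  have hq : ∀ k, k ≤ e → (a k : ℝ) * ((S7aux.qv e a k : ℤ) : ℝ) = (a (e + 1) : ℝ) := by
    intro k hk
    exact_mod_cast congrArg (fun z : ℤ => (z : ℝ)) (hqZ k hk)
  have hQp : ∀ k, k ≤ e → (0 : ℝ) < ((S7aux.qv e a k : ℤ) : ℝ) := by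
    intro k hk
    have h1 := (ha k (by omega)).1
    have h2 : (0 : ℝ) < (a k : ℝ) := by exact_mod_cast lt_of_lt_of_le zero_lt_one (by exact_mod_cast h1)
    nlinarith [hq k hk]
  have hTa : (a 0 : ℝ) + S7aux.Ta e a + 1 = (r : ℝ) * (a (e + 1) : ℝ) := by
    have h1 : (∑ i ∈ Finset.range (e + 1), a i) = (∑ i ∈ Finset.range e, a (i + 1)) + a 0 :=
      Finset.sum_range_succ' a e
    have h2 : S7aux.Ta e a = ((∑ i ∈ Finset.range e, a (i + 1) : ℤ) : ℝ) := by
      rw [S7aux.Ta, Fin.sum_univ_eq_sum_range (fun j => ((a (j + 1) : ℤ) : ℝ)) e]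
      push_cast
      rfl
    have hsum' := hsum
    rw [h1] at hsum'
    have hz : (a 0 + (∑ i ∈ Finset.range e, a (i + 1)) + 1 : ℤ) = (r : ℤ) * a (e + 1) := by
      linarith [hsum']
    rw [h2]
    exact_mod_cast hz
  have hC : ∀ k, 0 < S7aux.Cval e r a k := by
    intro k
    rcases S7aux.fin_cases3 k with hk | hk | ⟨k0, hk⟩ <;> subst hk
    · rw [S7aux.Cval_0]; exact mul_pos hr0 (hQp 0 (by omega))
    · rw [S7aux.Cval_last]; exact mul_pos hr0 hAd
    · rw [S7aux.Cval_mid]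
      exact mul_pos hr0 (hQp ((k0 : ℕ) + 1) (by have := k0.isLt; omega))
  have h1 := S7aux.gram (r := r) hq hTa
  have h3 := S7aux.h3_conc (r := r) hq hTa hr0 hAd hQp
  have h4 := S7aux.h4_conc (r := r) hq hTa hr0 hAd hQp
  have hrefl : IsReflexive (convexHull ℝ (Set.range (fun i => toReal (S7aux.Wvec e r a i)))) :=
    S7aux.reflexive_of_data (by omega) (S7aux.Wvec e r a) (S7aux.Uvec e r a)
      (S7aux.Cval e r a) hC h1 h3 h4
  have himg := S7aux.image_simplex e r a
  constructor
  · refine ⟨fun _ => (-1 : ℤ), ?_⟩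
    have : (fun x : Fin (e + 1) → ℝ => (r : ℝ) • x + toReal (fun _ => (-1 : ℤ)))
        = (fun x : Fin (e + 1) → ℝ => (r : ℝ) • x + (fun _ => (-1 : ℝ))) := by
      funext x
      funext j
      simp [toReal]
    rw [this, himg]
    exact hrefl
  · have : (fun x : Fin (e + 1) → ℝ => (r : ℝ) • x - 1)
        = (fun x : Fin (e + 1) → ℝ => (r : ℝ) • x + (fun _ => (-1 : ℝ))) := by
      funext x
      funext j
      simp [sub_eq_add_neg]
    rw [this, himg]
    exact hrefl
end
end

section
/- If Δ(A) is Gorenstein of index r with 1 ≤ a_0,…,a_{d-1} < a_d and each a_i | a_d and r·a_d = a_0 + ⋯ + a_{d-1} + 1, then the vertices of the reflexive polytope (r·Δ(A) − (1,…,1))^∨ are: −e_d; −(a_d/a_i)e_i + ((a_d − a_i)/a_i)e_d for 1 ≤ i ≤ d−1; and (a_d/a_0)Σ_{j=1}^{d-1} e_j + (((r−d+1)a_d − a_0)/a_0)e_d. -/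
open scoped BigOperators
open MeasureTheory

noncomputable section

namespace S9

def ipd {d : ℕ} (x y : Fin d → ℝ) : ℝ := ∑ j, x j * y j

def uu (d r : ℕ) (a : ℕ → ℤ) : Fin (d + 1) → Fin d → ℝ :=
  fun i j => (r : ℝ) * (simplexVerts d a i j : ℝ) - 1

def ww (d r : ℕ) (a : ℕ → ℤ) : Fin (d + 1) → Fin d → ℝ := fun i j =>
  if (i : ℕ) = 0 then (if (j : ℕ) = d - 1 then -1 else 0)
  else if (i : ℕ) = d then
    (if (j : ℕ) = d - 1 then (((r : ℤ) - d + 1) * a d - a 0 : ℤ) / (a 0 : ℝ)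
     else (a d : ℝ) / (a 0 : ℝ))
  else
    (if (j : ℕ) + 1 = (i : ℕ) then -(a d : ℝ) / (a (i : ℕ) : ℝ)
     else if (j : ℕ) = d - 1 then ((a d - a (i : ℕ) : ℤ) : ℝ) / (a (i : ℕ) : ℝ)
     else 0)

def sg (d : ℕ) : Fin (d + 1) → Fin (d + 1) := fun i =>
  if (i : ℕ) = 0 then ⟨d, by omega⟩ else if (i : ℕ) = d then ⟨0, by omega⟩ else i

def nu (d r : ℕ) (a : ℕ → ℤ) : Fin (d + 1) → ℝ := fun k =>
  if (k : ℕ) = d then 1 / ((r : ℝ) * (a d : ℝ)) else (a (k : ℕ) : ℝ) / ((r : ℝ) * (a d : ℝ))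

lemma sum_single {d : ℕ} (m : ℕ) (hm : m < d) (c : Fin d → ℝ) :
    ∑ j : Fin d, (if (j : ℕ) = m then c j else 0) = c ⟨m, hm⟩ := by
  rw [Finset.sum_eq_single_of_mem ⟨m, hm⟩ (Finset.mem_univ _)]
  · simp
  · intro b _ hb
    rw [if_neg (fun h => hb (Fin.ext h))]

lemma sg_invol {d : ℕ} (i : Fin (d + 1)) : sg d (sg d i) = i := by
  unfold sg
  rcases i with ⟨iv, hiv⟩
  by_cases h0 : iv = 0 <;> by_cases hdd : iv = d <;>
    simp_all <;> split_ifs <;> first | rfl | (exfalso; omega) | (apply Fin.ext; simp; omega)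

lemma sg_inj {d : ℕ} {i j : Fin (d + 1)} (h : sg d i = sg d j) : i = j := by
  have := congrArg (sg d) h
  rwa [sg_invol, sg_invol] at this

section main
variable {d : ℕ} (hd : 1 ≤ d) (r : ℕ) (hr : 1 ≤ r) (a : ℕ → ℤ)
  (ha : ∀ i, i < d → 1 ≤ a i ∧ a i < a d)
  (hsum : (r : ℤ) * a d = (∑ i ∈ Finset.range d, a i) + 1)

include hd ha in
lemma ad_pos : 0 < (a d : ℝ) := by
  have h := ha 0 hd
  exact_mod_cast lt_trans (lt_of_lt_of_le zero_lt_one h.1) h.2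

include ha in
lemma ak_pos {k : ℕ} (hk : k < d) : 0 < (a k : ℝ) := by
  exact_mod_cast lt_of_lt_of_le zero_lt_one (ha k hk).1

include hr in
lemma r_pos : 0 < (r : ℝ) := by exact_mod_cast hr

include hd hr ha in
lemma nu_pos : ∀ k, 0 < nu d r a k := by
  intro k
  unfold nu
  split_ifs with h
  · exact div_pos one_pos (mul_pos (r_pos r hr) (ad_pos hd a ha))
  · exact div_pos (ak_pos a ha (by omega : (k : ℕ) < d)) (mul_pos (r_pos r hr) (ad_pos hd a ha))

include hd hr ha hsum in
lemma nu_sum : ∑ k, nu d r a k = 1 := by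
  have hRA : ((r : ℝ) * (a d : ℝ)) ≠ 0 :=
    ne_of_gt (mul_pos (r_pos r hr) (ad_pos hd a ha))
  rw [Fin.sum_univ_castSucc]
  have hlast : nu d r a (Fin.last d) = 1 / ((r : ℝ) * (a d : ℝ)) := by simp [nu]
  have h1 : ∀ i : Fin d, nu d r a i.castSucc = (a (i : ℕ) : ℝ) / ((r : ℝ) * (a d : ℝ)) := by
    intro i
    have h : ((i : ℕ)) ≠ d := by omega
    simp [nu, Fin.coe_castSucc, h]
  rw [hlast, Finset.sum_congr rfl (fun i _ => h1 i), ← Finset.sum_div]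
  have h2 : ∑ i : Fin d, (a (i : ℕ) : ℝ) = ((∑ i ∈ Finset.range d, a i : ℤ) : ℝ) := by
    rw [Fin.sum_univ_eq_sum_range (fun i => (a i : ℝ)) d]; push_cast; rfl
  have h3 : ((∑ i ∈ Finset.range d, a i : ℤ) : ℝ) = (r : ℝ) * (a d : ℝ) - 1 := by
    have : (∑ i ∈ Finset.range d, a i : ℤ) = (r : ℤ) * a d - 1 := by omega
    rw [this]; push_cast; ring
  rw [h2, h3]
  field_simp
  rw [sub_add_cancel, mul_div_assoc, div_self (ne_of_gt (ad_pos hd a ha)), mul_one]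


lemma uval0 {i : Fin (d+1)} (h : (i:ℕ) = 0) (j : Fin d) : uu d r a i j = -1 := by
  simp [uu, simplexVerts, h]

lemma uvalmid {i : Fin (d+1)} (h1 : 1 ≤ (i:ℕ)) (h2 : (i:ℕ) < d) (j : Fin d) :
    uu d r a i j = if (j:ℕ) + 1 = (i:ℕ) then (r:ℝ) - 1 else -1 := by
  unfold uu simplexVerts
  rw [if_neg (by omega), if_neg (by omega)]
  split_ifs <;> push_cast <;> ring

include hd in
lemma uvald {i : Fin (d+1)} (h : (i:ℕ) = d) (j : Fin d) :
    uu d r a i j = if (j:ℕ) = d - 1 then (r:ℝ) * (a d:ℝ) - 1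
      else (r:ℝ) * ((a d:ℝ) - (a ((j:ℕ)+1):ℝ)) - 1 := by
  unfold uu simplexVerts
  rw [if_neg (by omega), if_pos h]
  split_ifs <;> push_cast <;> ring

lemma usum0 {k : Fin (d+1)} (hk : (k:ℕ) = 0) : ∑ j, uu d r a k j = -(d:ℝ) := by
  rw [Finset.sum_congr rfl (fun j _ => uval0 r a hk j)]
  simp [Finset.sum_const, nsmul_eq_mul]

lemma usummid {k : Fin (d+1)} (h1 : 1 ≤ (k:ℕ)) (h2 : (k:ℕ) < d) :
    ∑ j, uu d r a k j = (r:ℝ) - d := by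
  have h : ∀ j : Fin d, uu d r a k j = -1 + (if (j:ℕ) = (k:ℕ)-1 then (r:ℝ) else 0) := by
    intro j; rw [uvalmid r a h1 h2]
    split_ifs <;> first | ring1 | (exfalso; omega)
  rw [Finset.sum_congr rfl (fun j _ => h j), Finset.sum_add_distrib,
      sum_single ((k:ℕ)-1) (by omega) (fun _ => (r:ℝ))]
  simp [Finset.sum_const, nsmul_eq_mul]
  ring

include hd hsum in
lemma usumd {k : Fin (d+1)} (hk : (k:ℕ) = d) :
    ∑ j, uu d r a k j = (r:ℝ) * ((d:ℝ)*(a d:ℝ) - (r:ℝ)*(a d:ℝ) + 1 + (a 0:ℝ)) - d := by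
  have hv : ∀ j : Fin d, uu d r a k j = (r:ℝ)*((a d:ℝ) - (a ((j:ℕ)+1):ℝ)) - 1
      + (if (j:ℕ) = d-1 then (r:ℝ)*(a d:ℝ) else 0) := by
    intro j
    rw [uvald hd r a hk]
    split_ifs with h
    · rw [show (j:ℕ)+1 = d by omega]; ring
    · ring
  rw [Finset.sum_congr rfl (fun j _ => hv j), Finset.sum_add_distrib,
      sum_single (d-1) (by omega) (fun _ => (r:ℝ)*(a d:ℝ))]
  have hz : (∑ i ∈ Finset.range d, a (i+1)) = (r:ℤ)*(a d) - 1 + a d - a 0 := by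
    have h1 := Finset.sum_range_succ' a d
    have h2 := Finset.sum_range_succ a d
    omega
  have SS : ∑ j : Fin d, (a ((j:ℕ)+1) : ℝ) = (r:ℝ)*(a d:ℝ) - 1 + (a d:ℝ) - (a 0:ℝ) := by
    rw [Fin.sum_univ_eq_sum_range (fun i => (a (i+1):ℝ)) d,
        show ∑ i ∈ Finset.range d, (a (i+1):ℝ) = ((∑ i ∈ Finset.range d, a (i+1) : ℤ):ℝ) by
          push_cast; rfl,
        hz]
    push_cast; ring
  have hsplit : ∑ j : Fin d, ((r:ℝ)*((a d:ℝ) - (a ((j:ℕ)+1):ℝ)) - 1)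
       = (d:ℝ)*((r:ℝ)*(a d:ℝ)) - (r:ℝ) * (∑ j : Fin d, (a ((j:ℕ)+1):ℝ)) - d := by
    rw [Finset.sum_sub_distrib]
    simp [Finset.sum_const, nsmul_eq_mul, mul_sub, Finset.sum_sub_distrib, Finset.mul_sum]
    try ring
  rw [hsplit, SS]; ring

include hd in
lemma col0 (k : Fin (d+1)) {i : Fin (d+1)} (hi : (i:ℕ) = 0) :
    ipd (uu d r a k) (ww d r a i) = - uu d r a k ⟨d-1, by omega⟩ := by
  unfold ipd
  have h : ∀ j : Fin d, uu d r a k j * ww d r a i j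
      = (if (j:ℕ) = d-1 then -(uu d r a k j) else 0) := by
    intro j
    unfold ww
    rw [if_pos hi]
    split_ifs <;> ring
  rw [Finset.sum_congr rfl (fun j _ => h j), sum_single (d-1) (by omega)]

lemma colmid (k : Fin (d+1)) {i : Fin (d+1)} (hi1 : 1 ≤ (i:ℕ)) (hi2 : (i:ℕ) < d) :
    ipd (uu d r a k) (ww d r a i) =
      uu d r a k ⟨(i:ℕ)-1, by omega⟩ * (-(a d:ℝ) / (a (i:ℕ):ℝ)) +
      uu d r a k ⟨d-1, by omega⟩ * (((a d:ℝ) - (a (i:ℕ):ℝ)) / (a (i:ℕ):ℝ)) := by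
  unfold ipd
  have h : ∀ j : Fin d, uu d r a k j * ww d r a i j
      = (if (j:ℕ) = (i:ℕ)-1 then uu d r a k j * (-(a d:ℝ) / (a (i:ℕ):ℝ)) else 0)
      + (if (j:ℕ) = d-1 then uu d r a k j * (((a d:ℝ) - (a (i:ℕ):ℝ)) / (a (i:ℕ):ℝ)) else 0) := by
    intro j
    unfold ww
    rw [if_neg (by omega), if_neg (by omega)]
    have hj := j.isLt
    split_ifs <;> push_cast <;> first | ring1 | (exfalso; omega)
  rw [Finset.sum_congr rfl (fun j _ => h j), Finset.sum_add_distrib,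
      sum_single ((i:ℕ)-1) (by omega), sum_single (d-1) (by omega)]

include hd in
lemma cold (k : Fin (d+1)) {i : Fin (d+1)} (hi : (i:ℕ) = d) :
    ipd (uu d r a k) (ww d r a i) =
      ((a d:ℝ)/(a 0:ℝ)) * (∑ j, uu d r a k j) +
      uu d r a k ⟨d-1, by omega⟩ *
        ((((r:ℝ) - (d:ℝ) + 1) * (a d:ℝ) - (a 0:ℝ))/(a 0:ℝ) - (a d:ℝ)/(a 0:ℝ)) := by
  unfold ipd
  have h : ∀ j : Fin d, uu d r a k j * ww d r a i j
      = (a d:ℝ)/(a 0:ℝ) * uu d r a k j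
      + (if (j:ℕ) = d-1 then
          uu d r a k j * ((((r:ℝ)-(d:ℝ)+1)*(a d:ℝ)-(a 0:ℝ))/(a 0:ℝ) - (a d:ℝ)/(a 0:ℝ)) else 0) := by
    intro j
    unfold ww
    rw [if_neg (by omega), if_pos hi]
    split_ifs <;> push_cast <;> ring
  rw [Finset.sum_congr rfl (fun j _ => h j), Finset.sum_add_distrib, ← Finset.mul_sum,
      sum_single (d-1) (by omega)]


include hd hr ha hsum in
lemma ipall (k i : Fin (d+1)) :
    ipd (uu d r a k) (ww d r a i) = if k = sg d i then 1 - 1 / nu d r a k else 1 := by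
  have hAd : (a d : ℝ) ≠ 0 := ne_of_gt (ad_pos hd a ha)
  have hA0 : (a 0 : ℝ) ≠ 0 := ne_of_gt (ak_pos a ha hd)
  have hkb := k.isLt
  have hnud : (k:ℕ) = d → nu d r a k = 1/((r:ℝ)*(a d:ℝ)) := by
    intro h; unfold nu; rw [if_pos h]
  have hnu' : (k:ℕ) < d → nu d r a k = (a (k:ℕ):ℝ)/((r:ℝ)*(a d:ℝ)) := by
    intro h; unfold nu; rw [if_neg (by omega)]
  by_cases hi0 : (i:ℕ) = 0
  · rw [col0 hd r a k hi0]
    have hsg : sg d i = ⟨d, by omega⟩ := by unfold sg; rw [if_pos hi0]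
    rw [hsg]
    by_cases hkd : (k:ℕ) = d
    · rw [if_pos (Fin.ext hkd), uvald hd r a hkd, if_pos (by simp), hnud hkd,
        one_div_one_div]
      ring
    · rw [if_neg (fun h => hkd (by rw [h]))]
      by_cases hk0 : (k:ℕ) = 0
      · rw [uval0 r a hk0]; ring
      · rw [uvalmid r a (by omega) (by omega), if_neg (by simp; omega)]; ring
  · by_cases hid : (i:ℕ) = d
    · -- column d : sg i = 0
      have hAi := hA0
      rw [cold hd r a k hid]
      have hsg : sg d i = ⟨0, by omega⟩ := by unfold sg; rw [if_neg hi0, if_pos hid]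
      rw [hsg]
      by_cases hk0 : (k:ℕ) = 0
      · rw [if_pos (Fin.ext hk0), usum0 r a hk0, uval0 r a hk0, hnu' (by omega), hk0,
          one_div_div]
        field_simp
        ring
      · rw [if_neg (fun h => hk0 (by rw [h]))]
        by_cases hkd : (k:ℕ) = d
        · rw [usumd hd r a hsum hkd, uvald hd r a hkd, if_pos (by simp)]
          field_simp
          ring
        · rw [usummid r a (by omega) (by omega), uvalmid r a (by omega) (by omega),
            if_neg (by simp; omega)]
          field_simp
          ring
    · -- column mid : sg i = i
      have hi1 : 1 ≤ (i:ℕ) := by omega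
      have hi2 : (i:ℕ) < d := by omega
      have hAi : (a (i:ℕ) : ℝ) ≠ 0 := ne_of_gt (ak_pos a ha hi2)
      rw [colmid hd r a k hi1 hi2]
      have hsg : sg d i = i := by unfold sg; rw [if_neg hi0, if_neg hid]
      rw [hsg]
      by_cases hk0 : (k:ℕ) = 0
      · rw [if_neg (fun h => hi0 (by rw [← h, hk0])), uval0 r a hk0, uval0 r a hk0]
        field_simp
        ring
      · by_cases hkd : (k:ℕ) = d
        · rw [if_neg (fun h => hid (by rw [← h, hkd])), uvald hd r a hkd,
            uvald hd r a hkd, if_neg (by simp; omega), if_pos (by simp),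
            show (((⟨(i:ℕ)-1, by omega⟩ : Fin d) : ℕ) + 1) = (i:ℕ) by simp; omega]
          field_simp
          ring
        · by_cases hki : k = i
          · rw [if_pos hki, uvalmid r a (by omega) (by omega),
              uvalmid r a (by omega) (by omega),
              if_pos (by simp [hki]; omega), if_neg (by simp; omega), hnu' (by omega),
              one_div_div, hki]
            field_simp
            ring
          · rw [if_neg hki, uvalmid r a (by omega) (by omega),
              uvalmid r a (by omega) (by omega),
              if_neg (by simp; intro h; exact hki (Fin.ext (by omega))),
              if_neg (by simp; omega)]
            field_simp
            ring

omit hd hr ha hsum in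
lemma ipd_sum (x : Fin d → ℝ) (t : Fin (d+1) → ℝ) (z : Fin (d+1) → Fin d → ℝ) :
    ipd x (∑ i, t i • z i) = ∑ i, t i * ipd x (z i) := by
  unfold ipd
  calc ∑ j, x j * (∑ i, t i • z i) j
      = ∑ j, ∑ i, t i * (x j * z i j) := by
        refine Finset.sum_congr rfl fun j _ => ?_
        rw [Finset.sum_apply, Finset.mul_sum]
        refine Finset.sum_congr rfl fun i _ => ?_
        simp only [Pi.smul_apply, smul_eq_mul]
        ring
    _ = ∑ i, ∑ j, t i * (x j * z i j) := Finset.sum_comm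
    _ = ∑ i, t i * ∑ j, x j * z i j := by
        refine Finset.sum_congr rfl fun i _ => ?_
        rw [Finset.mul_sum]

omit hd hr ha hsum in
lemma ipd_comb (x y z : Fin d → ℝ) (p q : ℝ) :
    ipd x (p • y + q • z) = p * ipd x y + q * ipd x z := by
  unfold ipd
  rw [Finset.mul_sum, Finset.mul_sum, ← Finset.sum_add_distrib]
  refine Finset.sum_congr rfl fun j _ => ?_
  simp only [Pi.add_apply, Pi.smul_apply, smul_eq_mul]
  ring

omit hd hr ha hsum in
lemma ipd_sub (x y z : Fin d → ℝ) : ipd x (y - z) = ipd x y - ipd x z := by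
  unfold ipd
  rw [← Finset.sum_sub_distrib]
  refine Finset.sum_congr rfl fun j _ => ?_
  simp only [Pi.sub_apply]
  ring

include hd hr in
lemma inj_zero (z : Fin d → ℝ) (hz : ∀ k, ipd (uu d r a k) z = 0) : z = 0 := by
  have h0 : ∑ j, z j = 0 := by
    have e0 : ipd (uu d r a (0 : Fin (d+1))) z = -∑ j, z j := by
      unfold ipd
      rw [Finset.sum_congr rfl (fun j _ => by rw [uval0 r a (by simp : ((0 : Fin (d+1)):ℕ) = 0), neg_one_mul]),
        ← Finset.sum_neg_distrib]
    have := hz 0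
    rw [e0] at this
    linarith
  have hmid : ∀ j : Fin d, (j:ℕ) < d - 1 → z j = 0 := by
    intro j hj
    have hk : ((⟨(j:ℕ)+1, by omega⟩ : Fin (d+1)) : ℕ) = (j:ℕ)+1 := rfl
    have ek : ipd (uu d r a ⟨(j:ℕ)+1, by omega⟩) z = -∑ j', z j' + (r:ℝ) * z j := by
      unfold ipd
      have hstep : ∀ j' : Fin d, uu d r a ⟨(j:ℕ)+1, by omega⟩ j' * z j'
          = -(z j') + (if (j':ℕ) = (j:ℕ) then (r:ℝ) * z j' else 0) := by
        intro j'
        rw [uvalmid r a (by rw [hk]; omega) (by rw [hk]; omega), hk]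
        split_ifs <;> first | ring1 | (exfalso; omega)
      rw [Finset.sum_congr rfl (fun j' _ => hstep j'), Finset.sum_add_distrib,
        ← Finset.sum_neg_distrib, sum_single (j:ℕ) j.isLt (fun j' => (r:ℝ) * z j')]
      try simp
    have := hz ⟨(j:ℕ)+1, by omega⟩
    rw [ek, h0] at this
    have hrpos := r_pos r hr
    have : (r:ℝ) * z j = 0 := by linarith
    exact (mul_eq_zero.1 this).resolve_left (ne_of_gt hrpos)
  have hlast : ∑ j', z j' = z ⟨d-1, by omega⟩ := by
    apply Finset.sum_eq_single_of_mem _ (Finset.mem_univ _)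
    intro b _ hb
    refine hmid b ?_
    have := b.isLt
    have : (b:ℕ) ≠ d-1 := fun h => hb (Fin.ext h)
    omega
  funext j
  by_cases hj : (j:ℕ) = d - 1
  · have : j = ⟨d-1, by omega⟩ := Fin.ext hj
    rw [this, Pi.zero_apply, ← hlast, h0]
  · have := j.isLt
    rw [Pi.zero_apply]
    exact hmid j (by omega)

include hd hr ha hsum in
lemma nu_u_zero (j : Fin d) : ∑ k, nu d r a k * uu d r a k j = 0 := by
  have hRA : ((r:ℝ) * (a d:ℝ)) ≠ 0 := ne_of_gt (mul_pos (r_pos r hr) (ad_pos hd a ha))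
  have hAd : (a d:ℝ) ≠ 0 := ne_of_gt (ad_pos hd a ha)
  have hns := nu_sum hd r hr a ha hsum
  have hlastnu : nu d r a (Fin.last d) = 1/((r:ℝ)*(a d:ℝ)) := by simp [nu]
  rw [Fin.sum_univ_castSucc] at hns ⊢
  rw [hlastnu] at hns
  have hsc : ∑ i : Fin d, nu d r a i.castSucc = 1 - 1/((r:ℝ)*(a d:ℝ)) := by linarith
  have hterm : ∀ i : Fin d, nu d r a i.castSucc * uu d r a i.castSucc j
      = -(nu d r a i.castSucc)
        + (if (i:ℕ) = (j:ℕ)+1 then ((r:ℝ)*(a ((j:ℕ)+1):ℝ))/((r:ℝ)*(a d:ℝ)) else 0) := by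
    intro i
    have hci : ((i.castSucc : Fin (d+1)) : ℕ) = (i:ℕ) := Fin.coe_castSucc i
    have hilt := i.isLt
    have hnu : nu d r a i.castSucc = (a (i:ℕ):ℝ)/((r:ℝ)*(a d:ℝ)) := by
      unfold nu; rw [hci, if_neg (by omega)]
    by_cases h0 : (i:ℕ) = 0
    · rw [uval0 r a (by rw [hci]; exact h0), if_neg (by omega)]
      ring
    · rw [uvalmid r a (by rw [hci]; omega) (by rw [hci]; omega), hci, hnu]
      split_ifs with h1 h2
      · rw [show (j:ℕ)+1 = (i:ℕ) from h1]
        ring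
      · exfalso; omega
      · exfalso; omega
      · ring
  rw [Finset.sum_congr rfl (fun i _ => hterm i), Finset.sum_add_distrib,
    Finset.sum_neg_distrib, hsc, hlastnu]
  by_cases hj : (j:ℕ)+1 = d
  · rw [Finset.sum_eq_zero (fun i _ => if_neg (by have := i.isLt; omega))]
    rw [uvald hd r a (by simp : ((Fin.last d : Fin (d+1)):ℕ) = d), if_pos (by omega)]
    field_simp
    ring
  · rw [sum_single ((j:ℕ)+1) (by omega) (fun _ => ((r:ℝ)*(a ((j:ℕ)+1):ℝ))/((r:ℝ)*(a d:ℝ)))]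
    rw [uvald hd r a (by simp : ((Fin.last d : Fin (d+1)):ℕ) = d), if_neg (by omega)]
    field_simp
    ring

omit hd hr ha hsum in
lemma mem_polar_iff (y : Fin d → ℝ) :
    y ∈ polarDual ((fun x => (r : ℝ) • x - 1) '' simplexOf (simplexVerts d a)) ↔
      ∀ k, ipd (uu d r a k) y ≤ 1 := by
  simp only [polarDual, Set.mem_setOf_eq]
  constructor
  · intro hy k
    have hx : toReal (simplexVerts d a k) ∈ simplexOf (simplexVerts d a) :=
      subset_convexHull ℝ _ ⟨k, rfl⟩
    have h := hy _ ⟨_, hx, rfl⟩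
    refine le_trans (le_of_eq ?_) h
    unfold ipd uu toReal
    refine Finset.sum_congr rfl fun j _ => ?_
    simp only [Pi.sub_apply, Pi.smul_apply, Pi.one_apply, smul_eq_mul]
  · rintro hy x ⟨p, hp, rfl⟩
    have hsub : simplexOf (simplexVerts d a) ⊆
        {q : Fin d → ℝ | ∑ i, ((r:ℝ) * q i - 1) * y i ≤ 1} := by
      apply convexHull_min
      · rintro _ ⟨k, rfl⟩
        have h := hy k
        unfold ipd uu at h
        refine le_trans (le_of_eq ?_) h
        refine Finset.sum_congr rfl fun j _ => ?_
        simp only [toReal]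
      · have hlin : IsLinearMap ℝ (fun q : Fin d → ℝ => ∑ i, (r:ℝ) * q i * y i) := by
          constructor
          · intro p' q'
            rw [← Finset.sum_add_distrib]
            refine Finset.sum_congr rfl fun j _ => ?_
            simp only [Pi.add_apply]
            ring
          · intro c p'
            rw [Finset.smul_sum]
            refine Finset.sum_congr rfl fun j _ => ?_
            simp only [Pi.smul_apply, smul_eq_mul]
            ring
        have hset : {q : Fin d → ℝ | ∑ i, ((r:ℝ) * q i - 1) * y i ≤ 1}
            = {q : Fin d → ℝ | (fun q : Fin d → ℝ => ∑ i, (r:ℝ) * q i * y i) q ≤ 1 + ∑ i, y i} := by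
          ext q
          have hq : ∑ i, ((r:ℝ) * q i - 1) * y i = (∑ i, (r:ℝ) * q i * y i) - ∑ i, y i := by
            rw [← Finset.sum_sub_distrib]
            exact Finset.sum_congr rfl fun j _ => by ring
          simp only [Set.mem_setOf_eq, hq]
          constructor <;> intro h <;> linarith
        rw [hset]
        exact convex_halfSpace_le hlin _
    have h := hsub hp
    refine le_trans (le_of_eq ?_) h
    refine Finset.sum_congr rfl fun j _ => ?_
    simp only [Pi.sub_apply, Pi.smul_apply, Pi.one_apply, smul_eq_mul]

include hd hr ha hsum in
lemma repr_t (y : Fin d → ℝ) :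
    ∑ i, nu d r a (sg d i) * (1 - ipd (uu d r a (sg d i)) y) = 1 := by
  have hperm : ∑ i, nu d r a (sg d i) * (1 - ipd (uu d r a (sg d i)) y)
      = ∑ k, nu d r a k * (1 - ipd (uu d r a k) y) :=
    Equiv.sum_comp (Function.Involutive.toPerm (sg d) (fun i => sg_invol i))
      (fun k => nu d r a k * (1 - ipd (uu d r a k) y))
  rw [hperm]
  have hterm : ∀ k, nu d r a k * (1 - ipd (uu d r a k) y)
      = nu d r a k - (∑ j, (nu d r a k * uu d r a k j) * y j) := by
    intro k
    unfold ipd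
    rw [mul_sub, mul_one, Finset.mul_sum]
    congr 1
    exact Finset.sum_congr rfl fun j _ => by ring
  rw [Finset.sum_congr rfl (fun k _ => hterm k), Finset.sum_sub_distrib,
    nu_sum hd r hr a ha hsum, Finset.sum_comm]
  have h2 : ∀ j : Fin d, ∑ k, (nu d r a k * uu d r a k j) * y j = 0 := by
    intro j
    rw [← Finset.sum_mul, nu_u_zero hd r hr a ha hsum j, zero_mul]
  rw [Finset.sum_congr rfl (fun j _ => h2 j)]
  simp

include hd hr ha hsum in
lemma repr_eq (y : Fin d → ℝ) :
    y = ∑ i, (nu d r a (sg d i) * (1 - ipd (uu d r a (sg d i)) y)) • ww d r a i := by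
  set t : Fin (d+1) → ℝ := fun i => nu d r a (sg d i) * (1 - ipd (uu d r a (sg d i)) y) with ht
  have htsum : ∑ i, t i = 1 := repr_t hd r hr a ha hsum y
  have hips : ∀ k, ipd (uu d r a k) (∑ i, t i • ww d r a i) = ipd (uu d r a k) y := by
    intro k
    rw [ipd_sum]
    have hstep : ∀ i : Fin (d+1), t i * ipd (uu d r a k) (ww d r a i)
        = t i + (if i = sg d k then -(t i / nu d r a k) else 0) := by
      intro i
      rw [ipall hd r hr a ha hsum k i]
      by_cases h : k = sg d i
      · have h' : i = sg d k := by rw [h, sg_invol]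
        rw [if_pos h, if_pos h']
        ring
      · rw [if_neg h, if_neg (fun hi => h (by rw [hi, sg_invol]))]
        ring
    rw [Finset.sum_congr rfl (fun i _ => hstep i), Finset.sum_add_distrib, htsum,
      Finset.sum_ite_eq' Finset.univ (sg d k) (fun i => -(t i / nu d r a k)),
      if_pos (Finset.mem_univ _)]
    have htk : t (sg d k) = nu d r a (sg d (sg d k)) * (1 - ipd (uu d r a (sg d (sg d k))) y) := rfl
    rw [sg_invol] at htk
    rw [htk]
    have hnuk : nu d r a k ≠ 0 := ne_of_gt (nu_pos hd r hr a ha k)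
    field_simp
    ring
  have hz := inj_zero hd r hr a ((∑ i, t i • ww d r a i) - y)
    (fun k => by rw [ipd_sub, hips k, sub_self])
  exact (sub_eq_zero.mp hz).symm

include hd hr ha hsum in
lemma final :
    polarDual ((fun x => (r : ℝ) • x - 1) '' simplexOf (simplexVerts d a)) =
      convexHull ℝ (Set.range (ww d r a)) ∧
    ∀ i, ww d r a i ∈ Set.extremePoints ℝ
      (polarDual ((fun x => (r : ℝ) • x - 1) '' simplexOf (simplexVerts d a))) := by
  set P := polarDual ((fun x => (r : ℝ) • x - 1) '' simplexOf (simplexVerts d a)) with hP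
  have hmem : ∀ y, y ∈ P ↔ ∀ k, ipd (uu d r a k) y ≤ 1 := fun y => mem_polar_iff r a y
  have hwmem : ∀ i, ww d r a i ∈ P := by
    intro i
    rw [hmem]
    intro k
    rw [ipall hd r hr a ha hsum k i]
    split_ifs with h
    · have h1 := nu_pos hd r hr a ha k
      have h2 : 0 < 1 / nu d r a k := by positivity
      linarith
    · exact le_refl 1
  have heq : P = convexHull ℝ (Set.range (ww d r a)) := by
    apply Set.Subset.antisymm
    · intro y hy
      rw [hmem] at hy
      have hts : ∑ i, nu d r a (sg d i) * (1 - ipd (uu d r a (sg d i)) y) = 1 :=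
        repr_t hd r hr a ha hsum y
      have ht0 : ∀ i ∈ Finset.univ,
          0 ≤ nu d r a (sg d i) * (1 - ipd (uu d r a (sg d i)) y) := by
        intro i _
        have h1 := nu_pos hd r hr a ha (sg d i)
        have h2 := hy (sg d i)
        nlinarith
      have hcm := Finset.centerMass_mem_convexHull (Finset.univ) ht0
        (by rw [hts]; norm_num) (fun i _ => Set.mem_range_self (f := ww d r a) i)
      rw [Finset.centerMass_eq_of_sum_1 _ _ hts] at hcm
      rw [repr_eq hd r hr a ha hsum y]
      exact hcm
    · apply convexHull_min
      · rintro _ ⟨i, rfl⟩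
        exact hwmem i
      · intro y hy z hz p q hp hq hpq
        rw [hmem] at hy hz ⊢
        intro k
        rw [ipd_comb]
        have h1 := hy k
        have h2 := hz k
        nlinarith
  refine ⟨heq, fun i => ?_⟩
  rw [mem_extremePoints]
  refine ⟨hwmem i, ?_⟩
  intro x1 hx1 x2 hx2 hseg
  obtain ⟨p, q, hp, hq, hpq, habq⟩ := hseg
  have hkey : ∀ x, x ∈ P → (∀ k, k ≠ sg d i → ipd (uu d r a k) x = 1) → x = ww d r a i := by
    intro x hx hxk
    have hrep := repr_eq hd r hr a ha hsum x
    have ht : ∀ j, j ≠ i → nu d r a (sg d j) * (1 - ipd (uu d r a (sg d j)) x) = 0 := by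
      intro j hj
      rw [hxk (sg d j) (fun h => hj (sg_inj h)), sub_self, mul_zero]
    have hts := repr_t hd r hr a ha hsum x
    have hsum1 : nu d r a (sg d i) * (1 - ipd (uu d r a (sg d i)) x) = 1 := by
      have h := Finset.sum_eq_single_of_mem i (Finset.mem_univ i) (fun b _ hb => ht b hb)
      linarith [hts, h]
    rw [Finset.sum_eq_single_of_mem i (Finset.mem_univ _)
      (fun b _ hb => by rw [ht b hb, zero_smul]), hsum1, one_smul] at hrep
    exact hrep
  have hip1 : ∀ k, k ≠ sg d i → ipd (uu d r a k) x1 = 1 ∧ ipd (uu d r a k) x2 = 1 := by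
    intro k hk
    have h1 := (hmem x1).1 hx1 k
    have h2 := (hmem x2).1 hx2 k
    have hw : ipd (uu d r a k) (ww d r a i) = 1 := by
      rw [ipall hd r hr a ha hsum k i, if_neg hk]
    rw [← habq, ipd_comb] at hw
    constructor <;> nlinarith
  exact ⟨hkey x1 hx1 (fun k hk => (hip1 k hk).1), hkey x2 hx2 (fun k hk => (hip1 k hk).2)⟩
end main
end S9

/-- the vertices of the dual reflexive simplex `(r·Δ(A) - (1,…,1))^∨`. -/
theorem statement9 {d : ℕ} (hd : 1 ≤ d) (r : ℕ) (hr : 1 ≤ r) (a : ℕ → ℤ)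
    (ha : ∀ i, i < d → 1 ≤ a i ∧ a i < a d)
    (hdvd : ∀ i, i < d → a i ∣ a d)
    (hsum : (r : ℤ) * a d = (∑ i ∈ Finset.range d, a i) + 1) :
    let Q : Set (Fin d → ℝ) := (fun x => (r : ℝ) • x - 1) '' simplexOf (simplexVerts d a)
    let w : Fin (d + 1) → Fin d → ℝ := fun i j =>
      if (i : ℕ) = 0 then (if (j : ℕ) = d - 1 then -1 else 0)
      else if (i : ℕ) = d then
        (if (j : ℕ) = d - 1 then (((r : ℤ) - d + 1) * a d - a 0 : ℤ) / (a 0 : ℝ)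
         else (a d : ℝ) / (a 0 : ℝ))
      else
        (if (j : ℕ) + 1 = (i : ℕ) then -(a d : ℝ) / (a (i : ℕ) : ℝ)
         else if (j : ℕ) = d - 1 then ((a d - a (i : ℕ) : ℤ) : ℝ) / (a (i : ℕ) : ℝ)
         else 0)
    polarDual Q = convexHull ℝ (Set.range w) ∧
      ∀ i, w i ∈ Set.extremePoints ℝ (polarDual Q) := by
  intro Q w
  exact S9.final hd r hr a ha hsum
end
end

section
/- Let p be a prime, and Δ(A,B) the simplex with a_s = b_d = p, b_s = 0, d = rp − 1, a_i + b_i = p − 1 for 1 ≤ i ≤ s−1, and b_i = p − 1 for s+1 ≤ i ≤ d−1. Then Δ(A,B) is Gorenstein of index r, i.e., r·Δ(A,B) − (1,…,1) is reflexive. -/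
open scoped BigOperators
open MeasureTheory

noncomputable section

namespace Statement11Aux

open Finset

lemma sum_fin_delta {d : ℕ} (c : ℕ) (h1 : 1 ≤ c) (h2 : c ≤ d) (f : Fin d → ℤ) :
    ∑ j : Fin d, (if (j : ℕ) + 1 = c then f j else 0) = f ⟨c - 1, by omega⟩ := by
  rw [Finset.sum_eq_single_of_mem (⟨c - 1, by omega⟩ : Fin d) (Finset.mem_univ _)]
  · rw [if_pos]; simp; omega
  · intro i _ hne
    rw [if_neg]
    intro h; apply hne; apply Fin.ext; simp; omega

lemma sum_fin_delta' {n : ℕ} (c : ℕ) (h : c < n) (f : Fin n → ℤ) :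
    ∑ k : Fin n, (if (k : ℕ) = c then f k else 0) = f ⟨c, h⟩ := by
  rw [Finset.sum_eq_single_of_mem (⟨c, h⟩ : Fin n) (Finset.mem_univ _)]
  · rw [if_pos]; rfl
  · intro i _ hne
    rw [if_neg]
    intro hh; apply hne; apply Fin.ext; simpa using hh

lemma sum_fin_const_Ico {d : ℕ} (lo hi : ℕ) (hlo : 1 ≤ lo) (hhi : hi ≤ d + 1) (x : ℤ) :
    ∑ j : Fin d, (if lo ≤ (j : ℕ) + 1 ∧ (j : ℕ) + 1 < hi then x else 0)
      = ((hi - lo : ℕ) : ℤ) * x := by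
  have h1 : ∀ j : Fin d, (if lo ≤ (j : ℕ) + 1 ∧ (j : ℕ) + 1 < hi then x else 0)
      = (if (j : ℕ) ∈ Finset.Ico (lo - 1) (hi - 1) then x else 0) := by
    intro j
    simp only [Finset.mem_Ico]
    split_ifs <;> first | rfl | omega
  rw [Finset.sum_congr rfl fun j _ => h1 j]
  rw [Fin.sum_univ_eq_sum_range (fun i => if i ∈ Finset.Ico (lo - 1) (hi - 1) then x else 0) d]
  rw [Finset.sum_ite_mem]
  have : Finset.range d ∩ Finset.Ico (lo - 1) (hi - 1) = Finset.Ico (lo - 1) (hi - 1) := by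
    apply Finset.inter_eq_right.2
    intro t ht
    simp only [Finset.mem_Ico] at ht
    rw [Finset.mem_range]
    omega
  rw [this, Finset.sum_const, Nat.card_Ico, nsmul_eq_mul]
  congr 1
  omega

lemma sum_fin_shift {d : ℕ} (f : ℕ → ℤ) (h0 : f 0 = 0) :
    ∑ k : Fin (d + 1), f (k : ℕ) = ∑ j : Fin d, f ((j : ℕ) + 1) := by
  rw [Fin.sum_univ_eq_sum_range f (d+1), Fin.sum_univ_eq_sum_range (fun i => f (i+1)) d,
    Finset.sum_range_succ', h0, add_zero]



open Finset

lemma convex_halfspace' {d : ℕ} (z : Fin d → ℝ) :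
    Convex ℝ {x : Fin d → ℝ | ∑ j, x j * z j ≤ 1} := by
  have h : IsLinearMap ℝ (fun x : Fin d → ℝ => ∑ j, x j * z j) := by
    constructor
    · intro x y; simp [add_mul, Finset.sum_add_distrib]
    · intro c x; simp [Finset.mul_sum, mul_assoc]
  exact convex_halfSpace_le h 1

lemma reflexive_simplex {d : ℕ} (hd : 1 ≤ d)
    (uI zI : Fin (d + 1) → Fin d → ℤ)
    (hE1 : ∀ i k, ∑ j, (uI i j : ℝ) * (zI k j : ℝ)
        = 1 - if i = k then ((d : ℝ) + 1) else 0)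
    (hE3 : ∀ j l : Fin d, ∑ k, (zI k j : ℝ) * (uI k l : ℝ)
        = if j = l then -((d : ℝ) + 1) else 0)
    (hE4 : ∀ j, ∑ k, (zI k j : ℝ) = 0)
    (hE5 : ∀ j, ∑ k, (uI k j : ℝ) = 0) :
    IsReflexive (convexHull ℝ (Set.range fun i => toReal (uI i))) := by
  set u : Fin (d + 1) → Fin d → ℝ := fun i => toReal (uI i) with hu
  set z : Fin (d + 1) → Fin d → ℝ := fun k => toReal (zI k) with hz
  have huv : ∀ i j, u i j = (uI i j : ℝ) := fun i j => rfl
  have hzv : ∀ k j, z k j = (zI k j : ℝ) := fun k j => rfl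
  have hE1' : ∀ i k, ∑ j, u i j * z k j = 1 - if i = k then ((d : ℝ) + 1) else 0 := hE1
  have hE3' : ∀ j l : Fin d, ∑ k, z k j * u k l = if j = l then -((d : ℝ) + 1) else 0 := hE3
  have hE4' : ∀ j, ∑ k, z k j = 0 := hE4
  have hE5' : ∀ j, ∑ k, u k j = 0 := hE5
  set P := convexHull ℝ (Set.range u) with hP
  have hdpos : (0 : ℝ) < (d : ℝ) + 1 := by positivity
  -- every point of P satisfies all dual constraints
  have step1 : ∀ k, ∀ x ∈ P, ∑ j, x j * z k j ≤ 1 := by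
    intro k
    have hsub : Set.range u ⊆ {x : Fin d → ℝ | ∑ j, x j * z k j ≤ 1} := by
      rintro _ ⟨i, rfl⟩
      have := hE1' i k
      simp only [Set.mem_setOf_eq]
      calc ∑ j, u i j * z k j = 1 - (if i = k then ((d : ℝ) + 1) else 0) := this
        _ ≤ 1 := by split_ifs <;> linarith
    exact fun x hx => convexHull_min hsub (convex_halfspace' (z k)) hx
  -- swap-sum computations
  have swap1 : ∀ x : Fin d → ℝ, ∑ k, (∑ j, x j * z k j) = 0 := by
    intro x
    rw [Finset.sum_comm]
    apply Finset.sum_eq_zero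
    intro j _
    rw [← Finset.mul_sum, hE4' j, mul_zero]
  have swap2 : ∀ (x : Fin d → ℝ) (l : Fin d),
      ∑ k, (∑ j, x j * z k j) * u k l = -((d : ℝ) + 1) * x l := by
    intro x l
    have h1 : ∀ k, (∑ j, x j * z k j) * u k l = ∑ j, x j * (z k j * u k l) := by
      intro k; rw [Finset.sum_mul]; exact Finset.sum_congr rfl fun j _ => by ring
    rw [Finset.sum_congr rfl fun k _ => h1 k, Finset.sum_comm]
    have h2 : ∀ j, ∑ k, x j * (z k j * u k l) = x j * (if j = l then -((d : ℝ) + 1) else 0) := by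
      intro j
      rw [← Finset.mul_sum, hE3' j l]
    rw [Finset.sum_congr rfl fun j _ => h2 j]
    simp only [mul_ite, mul_zero]
    rw [Finset.sum_ite_eq' Finset.univ l (fun j => x j * (-((d : ℝ) + 1)))]
    simp [mul_comm]
  have swap3 : ∀ (y : Fin d → ℝ), ∑ i, (∑ j, u i j * y j) = 0 := by
    intro y
    rw [Finset.sum_comm]
    apply Finset.sum_eq_zero
    intro j _
    rw [← Finset.sum_mul, hE5' j, zero_mul]
  have swap4 : ∀ (y : Fin d → ℝ) (j : Fin d),
      ∑ i, (∑ l, u i l * y l) * z i j = -((d : ℝ) + 1) * y j := by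
    intro y j
    have h1 : ∀ i, (∑ l, u i l * y l) * z i j = ∑ l, y l * (z i j * u i l) := by
      intro i; rw [Finset.sum_mul]; exact Finset.sum_congr rfl fun l _ => by ring
    rw [Finset.sum_congr rfl fun i _ => h1 i, Finset.sum_comm]
    have h2 : ∀ l, ∑ i, y l * (z i j * u i l) = y l * (if j = l then -((d : ℝ) + 1) else 0) := by
      intro l
      rw [← Finset.mul_sum, hE3' j l]
    rw [Finset.sum_congr rfl fun l _ => h2 l]
    simp only [mul_ite, mul_zero]
    rw [Finset.sum_ite_eq Finset.univ j (fun l => y l * (-((d : ℝ) + 1)))]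
    simp [mul_comm]
  -- bipolar: the dual constraints cut out exactly P
  have stepA : ∀ x : Fin d → ℝ, (∀ k, ∑ j, x j * z k j ≤ 1) → x ∈ P := by
    intro x hx
    set lam : Fin (d + 1) → ℝ := fun k => (1 - ∑ j, x j * z k j) / ((d : ℝ) + 1) with hlam
    have hnn : ∀ k ∈ Finset.univ, 0 ≤ lam k := by
      intro k _
      have := hx k
      rw [hlam]
      have h1 : 0 ≤ 1 - ∑ j, x j * z k j := by linarith
      positivity
    have hsum : ∑ k, lam k = 1 := by
      rw [hlam, ← Finset.sum_div, Finset.sum_sub_distrib, swap1, Finset.sum_const,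
        Finset.card_univ, Fintype.card_fin]
      push_cast
      field_simp
      simp
    have hcm : Finset.univ.centerMass lam u = x := by
      rw [Finset.centerMass_eq_of_sum_1 _ _ hsum]
      funext l
      rw [Finset.sum_apply]
      have h1 : ∀ k, (lam k • u k) l
          = (u k l - (∑ j, x j * z k j) * u k l) / ((d : ℝ) + 1) := by
        intro k
        rw [Pi.smul_apply, smul_eq_mul, hlam]
        ring
      rw [Finset.sum_congr rfl fun k _ => h1 k, ← Finset.sum_div, Finset.sum_sub_distrib,
        hE5' l, swap2 x l]
      field_simp
      ring
    have := Finset.centerMass_mem_convexHull (Finset.univ) hnn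
      (by rw [hsum]; norm_num) (fun i _ => Set.mem_range_self (f := u) i)
    rwa [hcm] at this
  have hPeq : P = {x : Fin d → ℝ | ∀ k, ∑ j, x j * z k j ≤ 1} :=
    Set.Subset.antisymm (fun x hx k => step1 k x hx) (fun x hx => stepA x hx)
  -- origin is interior
  have hUopen : IsOpen {x : Fin d → ℝ | ∀ k, ∑ j, x j * z k j < 1} := by
    have heq : {x : Fin d → ℝ | ∀ k, ∑ j, x j * z k j < 1}
        = ⋂ k, {x : Fin d → ℝ | ∑ j, x j * z k j < 1} := by
      ext x; simp [Set.mem_iInter]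
    rw [heq]
    refine isOpen_iInter_of_finite fun k => ?_
    have hcont : Continuous fun x : Fin d → ℝ => ∑ j, x j * z k j :=
      continuous_finset_sum _ fun j _ => (continuous_apply j).mul continuous_const
    exact isOpen_lt hcont continuous_const
  have hUsub : {x : Fin d → ℝ | ∀ k, ∑ j, x j * z k j < 1} ⊆ interior P :=
    interior_maximal (fun x hx => stepA x fun k => le_of_lt (hx k)) hUopen
  have hzero : (0 : Fin d → ℝ) ∈ interior P := by
    apply hUsub
    intro k
    simp
  -- unique interior lattice point
  have hstriclt : ∀ x ∈ interior P, ∀ k, ∑ j, x j * z k j < 1 := by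
    intro x hxint k
    have hxP : x ∈ P := interior_subset hxint
    rcases lt_or_eq_of_le (by rw [hPeq] at hxP; exact hxP k) with h | h
    · exact h
    exfalso
    have hzne : ∃ j0, z k j0 ≠ 0 := by
      by_contra hc
      push_neg at hc
      obtain ⟨i, hik⟩ : ∃ i : Fin (d + 1), i ≠ k := by
        rcases eq_or_ne k 0 with rfl | hk0
        · refine ⟨⟨1, by omega⟩, ?_⟩
          intro hcon
          have := congrArg Fin.val hcon
          simp at this
        · exact ⟨0, fun hcon => hk0 hcon.symm⟩
      have h1 := hE1' i k
      rw [if_neg hik, sub_zero] at h1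
      have h2 : ∑ j, u i j * z k j = 0 := by
        apply Finset.sum_eq_zero
        intro j _
        rw [hc j, mul_zero]
      rw [h2] at h1
      exact one_ne_zero h1.symm
    obtain ⟨j0, hj0⟩ := hzne
    have hsq : 0 < ∑ j, z k j * z k j :=
      Finset.sum_pos' (fun j _ => mul_self_nonneg _)
        ⟨j0, Finset.mem_univ _, mul_self_pos.2 hj0⟩
    obtain ⟨ε, hε, hball⟩ := Metric.mem_nhds_iff.1 (mem_interior_iff_mem_nhds.1 hxint)
    set c : ℝ := ε / (2 * (‖z k‖ + 1)) with hc
    have hznorm : (0 : ℝ) ≤ ‖z k‖ := norm_nonneg _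
    have hcpos : 0 < c := by rw [hc]; positivity
    have hx' : x + c • z k ∈ Metric.ball x ε := by
      rw [Metric.mem_ball, dist_eq_norm]
      have h3 : x + c • z k - x = c • z k := by abel
      rw [h3, norm_smul, Real.norm_eq_abs, abs_of_pos hcpos, hc]
      rw [div_mul_eq_mul_div, div_lt_iff₀ (by positivity)]
      nlinarith
    have hmem : x + c • z k ∈ P := hball hx'
    have h2 : ∑ j, (x + c • z k) j * z k j ≤ 1 := by rw [hPeq] at hmem; exact hmem k
    have h3 : ∑ j, (x + c • z k) j * z k j
        = (∑ j, x j * z k j) + c * ∑ j, z k j * z k j := by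
      rw [Finset.mul_sum, ← Finset.sum_add_distrib]
      apply Finset.sum_congr rfl
      intro j _
      simp only [Pi.add_apply, Pi.smul_apply, smul_eq_mul]
      ring
    rw [h3, ← h] at h2
    nlinarith
  have huniq : ∀ x ∈ interior P, IsLatticePoint x → x = 0 := by
    intro x hxint hlat
    choose m hm using hlat
    have hint : ∀ k, ∑ j, x j * z k j ≤ 0 := by
      intro k
      have heqc : ∑ j, x j * z k j = ((∑ j, m j * zI k j : ℤ) : ℝ) := by
        push_cast
        exact Finset.sum_congr rfl fun j _ => by rw [hm j, hzv k j]
      have hlt := hstriclt x hxint k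
      rw [heqc] at hlt ⊢
      have : (∑ j, m j * zI k j : ℤ) < 1 := by exact_mod_cast hlt
      exact_mod_cast (by omega : (∑ j, m j * zI k j : ℤ) ≤ 0)
    have hall0 : ∀ k, ∑ j, x j * z k j = 0 := by
      intro k
      have := (Finset.sum_eq_zero_iff_of_nonpos (fun i _ => hint i)).1 (swap1 x) k
        (Finset.mem_univ k)
      exact this
    funext l
    have h1 := swap2 x l
    rw [Finset.sum_eq_zero (fun k _ => by rw [hall0 k, zero_mul])] at h1
    have : x l = 0 := by
      have h2 : ((d : ℝ) + 1) * x l = 0 := by linarith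
      exact (mul_eq_zero.1 h2).resolve_left (ne_of_gt hdpos)
    simpa using this
  -- dual polytope
  have hconvdual : Convex ℝ (polarDual P) := by
    intro y1 hy1 y2 hy2 aa bb ha hb hab
    intro x hx
    have h1 := hy1 x hx
    have h2 := hy2 x hx
    have h3 : ∑ i, x i * (aa • y1 + bb • y2) i
        = aa * ∑ i, x i * y1 i + bb * ∑ i, x i * y2 i := by
      rw [Finset.mul_sum, Finset.mul_sum, ← Finset.sum_add_distrib]
      apply Finset.sum_congr rfl
      intro i _
      simp only [Pi.add_apply, Pi.smul_apply, smul_eq_mul]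
      ring
    rw [h3]
    nlinarith
  have hdual : polarDual P = convexHull ℝ (Set.range z) := by
    apply Set.Subset.antisymm
    · intro y hy
      set mu : Fin (d + 1) → ℝ := fun i => (1 - ∑ j, u i j * y j) / ((d : ℝ) + 1) with hmu
      have hui : ∀ i, u i ∈ P := fun i => subset_convexHull ℝ _ (Set.mem_range_self i)
      have hnn : ∀ i ∈ Finset.univ, 0 ≤ mu i := by
        intro i _
        have := hy (u i) (hui i)
        rw [hmu]
        have h1 : 0 ≤ 1 - ∑ j, u i j * y j := by linarith
        positivity
      have hsum : ∑ i, mu i = 1 := by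
        rw [hmu, ← Finset.sum_div, Finset.sum_sub_distrib, swap3 y, Finset.sum_const,
          Finset.card_univ, Fintype.card_fin]
        push_cast
        field_simp
        simp
      have hcm : Finset.univ.centerMass mu z = y := by
        rw [Finset.centerMass_eq_of_sum_1 _ _ hsum]
        funext j
        rw [Finset.sum_apply]
        have h1 : ∀ i, (mu i • z i) j
            = (z i j - (∑ l, u i l * y l) * z i j) / ((d : ℝ) + 1) := by
          intro i
          rw [Pi.smul_apply, smul_eq_mul, hmu]
          ring
        rw [Finset.sum_congr rfl fun i _ => h1 i, ← Finset.sum_div, Finset.sum_sub_distrib,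
          hE4' j, swap4 y j]
        field_simp
        ring
      have := Finset.centerMass_mem_convexHull (Finset.univ) hnn
        (by rw [hsum]; norm_num) (fun i _ => Set.mem_range_self (f := z) i)
      rwa [hcm] at this
    · refine convexHull_min ?_ hconvdual
      rintro _ ⟨k, rfl⟩
      intro x hx
      exact step1 k x hx
  refine ⟨hzero, huniq, Finset.image zI Finset.univ, ?_⟩
  rw [hdual]
  congr 1
  rw [Finset.coe_image, Finset.coe_univ, Set.image_univ, ← Set.range_comp]
  rfl



open Finset

/-- `A = a 1 + ... + a (s-1)` -/
def AA (d s : ℕ) (a : ℕ → ℤ) : ℤ := ∑ j : Fin d, if (j : ℕ) + 1 < s then a ((j : ℕ) + 1) else 0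

/-- `B = b 1 + ... + b (d-1)` -/
def BB (d : ℕ) (b : ℕ → ℤ) : ℤ := ∑ j : Fin d, if (j : ℕ) + 1 < d then b ((j : ℕ) + 1) else 0

/-- The vertices of the dual simplex. -/
def zV (d s p : ℕ) (a b : ℕ → ℤ) : Fin (d + 1) → Fin d → ℤ := fun k j =>
  if (k : ℕ) = 0 then
    (if (j : ℕ) + 1 = s then 1 - AA d s a
     else if (j : ℕ) + 1 = d then 1 - BB d b else (p : ℤ))
  else if (k : ℕ) = s then (if (j : ℕ) + 1 = s then -1 else 0)
  else if (k : ℕ) = d then (if (j : ℕ) + 1 = d then -1 else 0)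
  else if (j : ℕ) + 1 = (k : ℕ) then -(p : ℤ)
  else if (j : ℕ) + 1 = s then (if (k : ℕ) < s then a (k : ℕ) else 0)
  else if (j : ℕ) + 1 = d then (if (k : ℕ) < s then b (k : ℕ) else (p : ℤ) - 1)
  else 0

section Identities

variable (d s p : ℕ) (a b : ℕ → ℤ)

lemma I1 (hs : 1 ≤ s) (hsd : s < d)
    (has : a s = (p : ℤ)) (hbd : b d = (p : ℤ)) (hbs : b s = 0)
    (hb2 : ∀ i, s + 1 ≤ i → i ≤ d - 1 → b i = (p : ℤ) - 1)
    (i k : Fin (d + 1)) :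
    ∑ j : Fin d, simplexVerts2 d s a b i j * zV d s p a b k j
      = if (k : ℕ) = 0 then (if (i : ℕ) = 0 then 0 else (p : ℤ))
        else (if (i : ℕ) = (k : ℕ) then -(p : ℤ) else 0) := by
  have hi := i.isLt
  have hk := k.isLt
  by_cases hi0 : (i : ℕ) = 0
  · have hV : ∀ j : Fin d, simplexVerts2 d s a b i j = 0 := by
      intro j; simp only [simplexVerts2]; rw [if_pos hi0]
    rw [Finset.sum_eq_zero (fun j _ => by rw [hV j, zero_mul])]
    split_ifs <;> omega
  by_cases his : (i : ℕ) = s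
  · have hV : ∀ j : Fin d, simplexVerts2 d s a b i j
        = (if (j : ℕ) + 1 ≤ s then a ((j : ℕ) + 1) else 0) := by
      intro j; simp only [simplexVerts2]; rw [if_neg hi0, if_pos his]
    by_cases hk0 : (k : ℕ) = 0
    · have hpw : ∀ j : Fin d, simplexVerts2 d s a b i j * zV d s p a b k j
          = ((if (j : ℕ) + 1 < s then (p : ℤ) * a ((j : ℕ) + 1) else 0)
            + (if (j : ℕ) + 1 = s then a s * (1 - AA d s a) else 0)) := by
        intro j
        have hjlt := j.isLt
        rw [hV j]
        simp only [zV]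
        rw [if_pos hk0]
        split_ifs with h1 h2 h3 <;>
          first
            | ring1
            | (exfalso; omega)
            | (rw [show (j : ℕ) + 1 = s by omega]; ring)
      rw [Finset.sum_congr rfl (fun j _ => hpw j), Finset.sum_add_distrib]
      have hA : ∑ j : Fin d, (if (j : ℕ) + 1 < s then (p : ℤ) * a ((j : ℕ) + 1) else 0)
          = (p : ℤ) * AA d s a := by
        rw [AA, Finset.mul_sum]
        exact Finset.sum_congr rfl fun j _ => by split_ifs <;> ring
      rw [hA, sum_fin_delta s hs (by omega) (fun j => a s * (1 - AA d s a))]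
      rw [if_pos hk0, if_neg (by omega), has]
      ring
    by_cases hks : (k : ℕ) = s
    · have hpw : ∀ j : Fin d, simplexVerts2 d s a b i j * zV d s p a b k j
          = (if (j : ℕ) + 1 = s then a ((j : ℕ) + 1) * (-1) else 0) := by
        intro j
        rw [hV j]
        simp only [zV]
        rw [if_neg hk0, if_pos hks]
        split_ifs <;> first | ring1 | (exfalso; omega)
      rw [Finset.sum_congr rfl (fun j _ => hpw j),
        sum_fin_delta s hs (by omega) (fun j => a ((j : ℕ) + 1) * (-1))]
      rw [if_neg hk0, if_pos (by omega : (i : ℕ) = (k : ℕ))]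
      have : ((⟨s - 1, by omega⟩ : Fin d) : ℕ) + 1 = s := by simp; omega
      rw [this, has]
      ring
    by_cases hkd : (k : ℕ) = d
    · have h0 : ∑ j : Fin d, simplexVerts2 d s a b i j * zV d s p a b k j = 0 :=
        Finset.sum_eq_zero (fun j _ => by
          have hjlt := j.isLt
          rw [hV j]
          simp only [zV]
          rw [if_neg hk0, if_neg hks, if_pos hkd]
          split_ifs <;> first | ring1 | (exfalso; omega))
      rw [h0, if_neg hk0, if_neg (by omega)]
    · -- generic k
      by_cases hkls : (k : ℕ) < s
      · have hpw : ∀ j : Fin d, simplexVerts2 d s a b i j * zV d s p a b k j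
            = ((if (j : ℕ) + 1 = (k : ℕ) then a ((j : ℕ) + 1) * (-(p : ℤ)) else 0)
              + (if (j : ℕ) + 1 = s then a ((j : ℕ) + 1) * a (k : ℕ) else 0)) := by
          intro j
          have hjlt := j.isLt
          rw [hV j]
          simp only [zV]
          rw [if_neg hk0, if_neg hks, if_neg hkd]
          split_ifs <;> first | ring1 | (exfalso; omega)
        rw [Finset.sum_congr rfl (fun j _ => hpw j), Finset.sum_add_distrib,
          sum_fin_delta (k : ℕ) (by omega) (by omega) (fun j => a ((j : ℕ) + 1) * (-(p : ℤ))),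
          sum_fin_delta s hs (by omega) (fun j => a ((j : ℕ) + 1) * a (k : ℕ))]
        have e1 : ((⟨(k : ℕ) - 1, by omega⟩ : Fin d) : ℕ) + 1 = (k : ℕ) := by simp; omega
        have e2 : ((⟨s - 1, by omega⟩ : Fin d) : ℕ) + 1 = s := by simp; omega
        rw [e1, e2, has, if_neg hk0, if_neg (by omega)]
        ring
      · have h0 : ∑ j : Fin d, simplexVerts2 d s a b i j * zV d s p a b k j = 0 :=
          Finset.sum_eq_zero (fun j _ => by
            have hjlt := j.isLt
            rw [hV j]
            simp only [zV]
            rw [if_neg hk0, if_neg hks, if_neg hkd]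
            split_ifs <;> first | ring1 | (exfalso; omega))
        rw [h0, if_neg hk0, if_neg (by omega)]
  by_cases hid : (i : ℕ) = d
  · have hV : ∀ j : Fin d, simplexVerts2 d s a b i j = b ((j : ℕ) + 1) := by
      intro j; simp only [simplexVerts2]; rw [if_neg hi0, if_neg his, if_pos hid]
    by_cases hk0 : (k : ℕ) = 0
    · have hpw : ∀ j : Fin d, simplexVerts2 d s a b i j * zV d s p a b k j
          = ((p : ℤ) * b ((j : ℕ) + 1)
            + ((if (j : ℕ) + 1 = s then b ((j : ℕ) + 1) * (1 - AA d s a - (p : ℤ)) else 0)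
              + (if (j : ℕ) + 1 = d then b ((j : ℕ) + 1) * (1 - BB d b - (p : ℤ)) else 0))) := by
        intro j
        have hjlt := j.isLt
        rw [hV j]
        simp only [zV]
        rw [if_pos hk0]
        split_ifs <;> first | ring1 | (exfalso; omega)
      rw [Finset.sum_congr rfl (fun j _ => hpw j), Finset.sum_add_distrib,
        Finset.sum_add_distrib,
        sum_fin_delta s hs (by omega) (fun j => b ((j : ℕ) + 1) * (1 - AA d s a - (p : ℤ))),
        sum_fin_delta d (by omega) (le_refl d) (fun j => b ((j : ℕ) + 1) * (1 - BB d b - (p : ℤ)))]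
      have e2 : ((⟨s - 1, by omega⟩ : Fin d) : ℕ) + 1 = s := by simp; omega
      have e3 : ((⟨d - 1, by omega⟩ : Fin d) : ℕ) + 1 = d := by simp; omega
      have hsb0 : ∑ j : Fin d, b ((j : ℕ) + 1) = BB d b + b d := by
        have hptw : ∀ j : Fin d, b ((j : ℕ) + 1)
            = (if (j : ℕ) + 1 < d then b ((j : ℕ) + 1) else 0)
              + (if (j : ℕ) + 1 = d then b ((j : ℕ) + 1) else 0) := by
          intro j
          have hjlt := j.isLt
          split_ifs <;> first | ring1 | (exfalso; omega)
        rw [Finset.sum_congr rfl (fun j _ => hptw j), Finset.sum_add_distrib,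
          sum_fin_delta d (by omega) (le_refl d) (fun j => b ((j : ℕ) + 1)), e3, BB]
      have hsb : ∑ j : Fin d, (p : ℤ) * b ((j : ℕ) + 1) = (p : ℤ) * (BB d b + b d) := by
        rw [← Finset.mul_sum, hsb0]
      rw [hsb, e2, e3, hbs, hbd, if_pos hk0, if_neg hi0]
      ring
    by_cases hks : (k : ℕ) = s
    · have hpw : ∀ j : Fin d, simplexVerts2 d s a b i j * zV d s p a b k j
          = (if (j : ℕ) + 1 = s then b ((j : ℕ) + 1) * (-1) else 0) := by
        intro j
        rw [hV j]
        simp only [zV]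
        rw [if_neg hk0, if_pos hks]
        split_ifs <;> first | ring1 | (exfalso; omega)
      rw [Finset.sum_congr rfl (fun j _ => hpw j),
        sum_fin_delta s hs (by omega) (fun j => b ((j : ℕ) + 1) * (-1))]
      have e2 : ((⟨s - 1, by omega⟩ : Fin d) : ℕ) + 1 = s := by simp; omega
      rw [e2, hbs, if_neg hk0, if_neg (by omega)]
      ring
    by_cases hkd : (k : ℕ) = d
    · have hpw : ∀ j : Fin d, simplexVerts2 d s a b i j * zV d s p a b k j
          = (if (j : ℕ) + 1 = d then b ((j : ℕ) + 1) * (-1) else 0) := by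
        intro j
        rw [hV j]
        simp only [zV]
        rw [if_neg hk0, if_neg hks, if_pos hkd]
        split_ifs <;> first | ring1 | (exfalso; omega)
      rw [Finset.sum_congr rfl (fun j _ => hpw j),
        sum_fin_delta d (by omega) (le_refl d) (fun j => b ((j : ℕ) + 1) * (-1))]
      have e3 : ((⟨d - 1, by omega⟩ : Fin d) : ℕ) + 1 = d := by simp; omega
      rw [e3, hbd, if_neg hk0, if_pos (by omega)]
      ring
    · by_cases hkls : (k : ℕ) < s
      · have hpw : ∀ j : Fin d, simplexVerts2 d s a b i j * zV d s p a b k j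
            = ((if (j : ℕ) + 1 = (k : ℕ) then b ((j : ℕ) + 1) * (-(p : ℤ)) else 0)
              + ((if (j : ℕ) + 1 = s then b ((j : ℕ) + 1) * a (k : ℕ) else 0)
                + (if (j : ℕ) + 1 = d then b ((j : ℕ) + 1) * b (k : ℕ) else 0))) := by
          intro j
          have hjlt := j.isLt
          rw [hV j]
          simp only [zV]
          rw [if_neg hk0, if_neg hks, if_neg hkd]
          split_ifs <;> first | ring1 | (exfalso; omega)
        rw [Finset.sum_congr rfl (fun j _ => hpw j), Finset.sum_add_distrib,
          Finset.sum_add_distrib,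
          sum_fin_delta (k : ℕ) (by omega) (by omega) (fun j => b ((j : ℕ) + 1) * (-(p : ℤ))),
          sum_fin_delta s hs (by omega) (fun j => b ((j : ℕ) + 1) * a (k : ℕ)),
          sum_fin_delta d (by omega) (le_refl d) (fun j => b ((j : ℕ) + 1) * b (k : ℕ))]
        have e1 : ((⟨(k : ℕ) - 1, by omega⟩ : Fin d) : ℕ) + 1 = (k : ℕ) := by simp; omega
        have e2 : ((⟨s - 1, by omega⟩ : Fin d) : ℕ) + 1 = s := by simp; omega
        have e3 : ((⟨d - 1, by omega⟩ : Fin d) : ℕ) + 1 = d := by simp; omega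
        rw [e1, e2, e3, hbs, hbd, if_neg hk0, if_neg (by omega)]
        ring
      · have hpw : ∀ j : Fin d, simplexVerts2 d s a b i j * zV d s p a b k j
            = ((if (j : ℕ) + 1 = (k : ℕ) then b ((j : ℕ) + 1) * (-(p : ℤ)) else 0)
              + (if (j : ℕ) + 1 = d then b ((j : ℕ) + 1) * ((p : ℤ) - 1) else 0)) := by
          intro j
          have hjlt := j.isLt
          rw [hV j]
          simp only [zV]
          rw [if_neg hk0, if_neg hks, if_neg hkd]
          split_ifs <;> first | ring1 | (exfalso; omega)
        rw [Finset.sum_congr rfl (fun j _ => hpw j), Finset.sum_add_distrib,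
          sum_fin_delta (k : ℕ) (by omega) (by omega) (fun j => b ((j : ℕ) + 1) * (-(p : ℤ))),
          sum_fin_delta d (by omega) (le_refl d) (fun j => b ((j : ℕ) + 1) * ((p : ℤ) - 1))]
        have e1 : ((⟨(k : ℕ) - 1, by omega⟩ : Fin d) : ℕ) + 1 = (k : ℕ) := by simp; omega
        have e3 : ((⟨d - 1, by omega⟩ : Fin d) : ℕ) + 1 = d := by simp; omega
        rw [e1, e3, hbd, hb2 (k : ℕ) (by omega) (by omega), if_neg hk0, if_neg (by omega)]
        ring
  · -- generic i
    have hV : ∀ j : Fin d, simplexVerts2 d s a b i j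
        = (if (j : ℕ) + 1 = (i : ℕ) then 1 else 0) := by
      intro j; simp only [simplexVerts2]; rw [if_neg hi0, if_neg his, if_neg hid]
    have hpw : ∀ j : Fin d, simplexVerts2 d s a b i j * zV d s p a b k j
        = (if (j : ℕ) + 1 = (i : ℕ) then zV d s p a b k j else 0) := by
      intro j
      rw [hV j]
      split_ifs <;> ring
    rw [Finset.sum_congr rfl (fun j _ => hpw j),
      sum_fin_delta (i : ℕ) (by omega) (by omega) (fun j => zV d s p a b k j)]
    simp only [zV]
    have e1 : ((⟨(i : ℕ) - 1, by omega⟩ : Fin d) : ℕ) + 1 = (i : ℕ) := by simp; omega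
    rw [e1]
    split_ifs <;> first | rfl | ring1 | (exfalso; omega)

end Identities



open Finset

section Identities2

variable (d s p : ℕ) (a b : ℕ → ℤ)

lemma hABsum (hs : 1 ≤ s) (hsd : s < d) (hbs : b s = 0)
    (hab : ∀ i, 1 ≤ i → i ≤ s - 1 → a i + b i = (p : ℤ) - 1)
    (hb2 : ∀ i, s + 1 ≤ i → i ≤ d - 1 → b i = (p : ℤ) - 1) :
    AA d s a + BB d b = ((d : ℤ) - 2) * ((p : ℤ) - 1) := by
  have hptw : ∀ j : Fin d, (if (j : ℕ) + 1 < d then b ((j : ℕ) + 1) else 0)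
      = ((if 1 ≤ (j : ℕ) + 1 ∧ (j : ℕ) + 1 < s then ((p : ℤ) - 1) else 0)
          - (if (j : ℕ) + 1 < s then a ((j : ℕ) + 1) else 0))
        + (if s + 1 ≤ (j : ℕ) + 1 ∧ (j : ℕ) + 1 < d then ((p : ℤ) - 1) else 0) := by
    intro j
    have hjlt := j.isLt
    by_cases h1 : (j : ℕ) + 1 < s
    · rw [if_pos (by omega), if_pos (by omega : 1 ≤ (j : ℕ) + 1 ∧ (j : ℕ) + 1 < s),
        if_pos h1, if_neg (by omega)]
      have := hab ((j : ℕ) + 1) (by omega) (by omega)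
      linarith
    by_cases h2 : (j : ℕ) + 1 = s
    · rw [if_pos (by omega), if_neg (by omega), if_neg (by omega), if_neg (by omega),
        h2, hbs]
      ring
    by_cases h3 : (j : ℕ) + 1 < d
    · rw [if_pos h3, if_neg (by omega), if_neg (by omega),
        if_pos (by omega : s + 1 ≤ (j : ℕ) + 1 ∧ (j : ℕ) + 1 < d),
        hb2 ((j : ℕ) + 1) (by omega) (by omega)]
      ring
    · rw [if_neg h3, if_neg (by omega), if_neg (by omega), if_neg (by omega)]
      ring
  have hBB : BB d b = (((s - 1 : ℕ) : ℤ) * ((p : ℤ) - 1) - AA d s a)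
      + ((d - (s + 1) : ℕ) : ℤ) * ((p : ℤ) - 1) := by
    rw [BB, Finset.sum_congr rfl (fun j _ => hptw j), Finset.sum_add_distrib,
      Finset.sum_sub_distrib,
      sum_fin_const_Ico 1 s (le_refl 1) (by omega) ((p : ℤ) - 1),
      sum_fin_const_Ico (s + 1) d (by omega) (by omega) ((p : ℤ) - 1), ← AA]
  have c1 : ((s - 1 : ℕ) : ℤ) = (s : ℤ) - 1 := by omega
  have c2 : ((d - (s + 1) : ℕ) : ℤ) = (d : ℤ) - (s : ℤ) - 1 := by omega
  rw [hBB, c1, c2]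
  ring

lemma I2 (hs : 1 ≤ s) (hsd : s < d)
    (hbs : b s = 0)
    (hab : ∀ i, 1 ≤ i → i ≤ s - 1 → a i + b i = (p : ℤ) - 1)
    (hb2 : ∀ i, s + 1 ≤ i → i ≤ d - 1 → b i = (p : ℤ) - 1)
    (k : Fin (d + 1)) :
    ∑ j : Fin d, zV d s p a b k j = if (k : ℕ) = 0 then (d : ℤ) else -1 := by
  have hk := k.isLt
  by_cases hk0 : (k : ℕ) = 0
  · have hpw : ∀ j : Fin d, zV d s p a b k j
        = ((p : ℤ) + ((if (j : ℕ) + 1 = s then 1 - AA d s a - (p : ℤ) else 0)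
          + (if (j : ℕ) + 1 = d then 1 - BB d b - (p : ℤ) else 0))) := by
      intro j
      have hjlt := j.isLt
      simp only [zV]
      rw [if_pos hk0]
      split_ifs <;> first | ring1 | (exfalso; omega)
    rw [Finset.sum_congr rfl (fun j _ => hpw j), Finset.sum_add_distrib,
      Finset.sum_add_distrib,
      sum_fin_delta s hs (by omega) (fun _ => 1 - AA d s a - (p : ℤ)),
      sum_fin_delta d (by omega) (le_refl d) (fun _ => 1 - BB d b - (p : ℤ)),
      Finset.sum_const, Finset.card_univ, Fintype.card_fin, nsmul_eq_mul, if_pos hk0]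
    have hAB := hABsum d s p a b hs hsd hbs hab hb2
    linear_combination -hAB
  by_cases hks : (k : ℕ) = s
  · have hpw : ∀ j : Fin d, zV d s p a b k j
        = (if (j : ℕ) + 1 = s then (-1 : ℤ) else 0) := by
      intro j
      simp only [zV]
      rw [if_neg hk0, if_pos hks]
    rw [Finset.sum_congr rfl (fun j _ => hpw j),
      sum_fin_delta s hs (by omega) (fun _ => (-1 : ℤ)), if_neg hk0]
  by_cases hkd : (k : ℕ) = d
  · have hpw : ∀ j : Fin d, zV d s p a b k j
        = (if (j : ℕ) + 1 = d then (-1 : ℤ) else 0) := by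
      intro j
      simp only [zV]
      rw [if_neg hk0, if_neg hks, if_pos hkd]
    rw [Finset.sum_congr rfl (fun j _ => hpw j),
      sum_fin_delta d (by omega) (le_refl d) (fun _ => (-1 : ℤ)), if_neg hk0]
  by_cases hkls : (k : ℕ) < s
  · have hpw : ∀ j : Fin d, zV d s p a b k j
        = ((if (j : ℕ) + 1 = (k : ℕ) then -(p : ℤ) else 0)
          + ((if (j : ℕ) + 1 = s then a (k : ℕ) else 0)
            + (if (j : ℕ) + 1 = d then b (k : ℕ) else 0))) := by
      intro j
      have hjlt := j.isLt
      simp only [zV]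
      rw [if_neg hk0, if_neg hks, if_neg hkd]
      split_ifs <;> first | ring1 | (exfalso; omega)
    rw [Finset.sum_congr rfl (fun j _ => hpw j), Finset.sum_add_distrib,
      Finset.sum_add_distrib,
      sum_fin_delta (k : ℕ) (by omega) (by omega) (fun _ => -(p : ℤ)),
      sum_fin_delta s hs (by omega) (fun _ => a (k : ℕ)),
      sum_fin_delta d (by omega) (le_refl d) (fun _ => b (k : ℕ)), if_neg hk0]
    have := hab (k : ℕ) (by omega) (by omega)
    linarith
  · have hpw : ∀ j : Fin d, zV d s p a b k j
        = ((if (j : ℕ) + 1 = (k : ℕ) then -(p : ℤ) else 0)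
          + (if (j : ℕ) + 1 = d then (p : ℤ) - 1 else 0)) := by
      intro j
      have hjlt := j.isLt
      simp only [zV]
      rw [if_neg hk0, if_neg hks, if_neg hkd]
      split_ifs <;> first | ring1 | (exfalso; omega)
    rw [Finset.sum_congr rfl (fun j _ => hpw j), Finset.sum_add_distrib,
      sum_fin_delta (k : ℕ) (by omega) (by omega) (fun _ => -(p : ℤ)),
      sum_fin_delta d (by omega) (le_refl d) (fun _ => (p : ℤ) - 1), if_neg hk0]
    ring

lemma I3 (hs : 1 ≤ s) (hsd : s < d)
    (has : a s = (p : ℤ)) (hbd : b d = (p : ℤ)) (hbs : b s = 0)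
    (hb2 : ∀ i, s + 1 ≤ i → i ≤ d - 1 → b i = (p : ℤ) - 1)
    (j l : Fin d) :
    ∑ k : Fin (d + 1), zV d s p a b k j * simplexVerts2 d s a b k l
      = if j = l then -(p : ℤ) else 0 := by
  have hjlt := j.isLt
  have hllt := l.isLt
  have hpw : ∀ k : Fin (d + 1), zV d s p a b k j * simplexVerts2 d s a b k l
      = ((if (k : ℕ) = s then
            (if (j : ℕ) + 1 = s then (-1 : ℤ) else 0)
              * (if (l : ℕ) + 1 ≤ s then a ((l : ℕ) + 1) else 0) else 0)
        + ((if (k : ℕ) = d then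
            (if (j : ℕ) + 1 = d then (-1 : ℤ) else 0) * b ((l : ℕ) + 1) else 0)
          + (if (k : ℕ) = (l : ℕ) + 1 then
              (if (l : ℕ) + 1 = s ∨ (l : ℕ) + 1 = d then 0
               else (if (j : ℕ) + 1 = (l : ℕ) + 1 then -(p : ℤ)
                 else if (j : ℕ) + 1 = s then (if (l : ℕ) + 1 < s then a ((l : ℕ) + 1) else 0)
                 else if (j : ℕ) + 1 = d then
                   (if (l : ℕ) + 1 < s then b ((l : ℕ) + 1) else (p : ℤ) - 1)
                 else 0)) else 0))) := by
    intro k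
    have hk := k.isLt
    by_cases hk0 : (k : ℕ) = 0
    · have hVl : simplexVerts2 d s a b k l = 0 := by
        simp only [simplexVerts2]; rw [if_pos hk0]
      rw [hVl, mul_zero, if_neg (by omega), if_neg (by omega), if_neg (by omega)]
      ring
    by_cases hks : (k : ℕ) = s
    · have hVl : simplexVerts2 d s a b k l
          = (if (l : ℕ) + 1 ≤ s then a ((l : ℕ) + 1) else 0) := by
        simp only [simplexVerts2]; rw [if_neg hk0, if_pos hks]
      have hZ : zV d s p a b k j = (if (j : ℕ) + 1 = s then (-1 : ℤ) else 0) := by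
        simp only [zV]; rw [if_neg hk0, if_pos hks]
      rw [hVl, hZ, if_pos hks, if_neg (by omega : ¬ (k : ℕ) = d)]
      by_cases hkl : (k : ℕ) = (l : ℕ) + 1
      · rw [if_pos hkl, if_pos (Or.inl (by omega : (l : ℕ) + 1 = s))]
        ring
      · rw [if_neg hkl]
        ring
    by_cases hkd : (k : ℕ) = d
    · have hVl : simplexVerts2 d s a b k l = b ((l : ℕ) + 1) := by
        simp only [simplexVerts2]; rw [if_neg hk0, if_neg hks, if_pos hkd]
      have hZ : zV d s p a b k j = (if (j : ℕ) + 1 = d then (-1 : ℤ) else 0) := by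
        simp only [zV]; rw [if_neg hk0, if_neg hks, if_pos hkd]
      rw [hVl, hZ, if_neg hks, if_pos hkd]
      by_cases hkl : (k : ℕ) = (l : ℕ) + 1
      · rw [if_pos hkl, if_pos (Or.inr (by omega : (l : ℕ) + 1 = d))]
        ring
      · rw [if_neg hkl]
        ring
    · have hVl : simplexVerts2 d s a b k l
          = (if (l : ℕ) + 1 = (k : ℕ) then 1 else 0) := by
        simp only [simplexVerts2]; rw [if_neg hk0, if_neg hks, if_neg hkd]
      have hZ : zV d s p a b k j
          = (if (j : ℕ) + 1 = (k : ℕ) then -(p : ℤ)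
            else if (j : ℕ) + 1 = s then (if (k : ℕ) < s then a (k : ℕ) else 0)
            else if (j : ℕ) + 1 = d then (if (k : ℕ) < s then b (k : ℕ) else (p : ℤ) - 1)
            else 0) := by
        simp only [zV]; rw [if_neg hk0, if_neg hks, if_neg hkd]
      rw [hVl, hZ, if_neg hks, if_neg hkd]
      by_cases hkl : (k : ℕ) = (l : ℕ) + 1
      · rw [if_pos (by omega : (l : ℕ) + 1 = (k : ℕ)), mul_one, if_pos hkl,
          if_neg (by omega : ¬ ((l : ℕ) + 1 = s ∨ (l : ℕ) + 1 = d)), hkl]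
        ring
      · rw [if_neg (by omega : ¬ (l : ℕ) + 1 = (k : ℕ)), mul_zero, if_neg hkl]
        ring
  rw [Finset.sum_congr rfl (fun k _ => hpw k), Finset.sum_add_distrib,
    Finset.sum_add_distrib,
    sum_fin_delta' s (by omega)
      (fun _ => (if (j : ℕ) + 1 = s then (-1 : ℤ) else 0)
        * (if (l : ℕ) + 1 ≤ s then a ((l : ℕ) + 1) else 0)),
    sum_fin_delta' d (by omega)
      (fun _ => (if (j : ℕ) + 1 = d then (-1 : ℤ) else 0) * b ((l : ℕ) + 1)),
    sum_fin_delta' ((l : ℕ) + 1) (by omega)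
      (fun _ => (if (l : ℕ) + 1 = s ∨ (l : ℕ) + 1 = d then 0
        else (if (j : ℕ) + 1 = (l : ℕ) + 1 then -(p : ℤ)
          else if (j : ℕ) + 1 = s then (if (l : ℕ) + 1 < s then a ((l : ℕ) + 1) else 0)
          else if (j : ℕ) + 1 = d then
            (if (l : ℕ) + 1 < s then b ((l : ℕ) + 1) else (p : ℤ) - 1)
          else 0)))]
  have hRHS : (if j = l then -(p : ℤ) else 0)
      = (if (j : ℕ) = (l : ℕ) then -(p : ℤ) else 0) := by
    by_cases hjl : (j : ℕ) = (l : ℕ)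
    · rw [if_pos (Fin.ext hjl), if_pos hjl]
    · rw [if_neg (fun hcon => hjl (congrArg Fin.val hcon)), if_neg hjl]
  rw [hRHS]
  by_cases hcls : (l : ℕ) + 1 = s
  · rw [if_pos (by omega : (l : ℕ) + 1 ≤ s), if_pos (Or.inl hcls)]
    by_cases hcjs : (j : ℕ) + 1 = s
    · rw [if_pos hcjs, if_neg (by omega : ¬ (j : ℕ) + 1 = d),
        if_pos (by omega : (j : ℕ) = (l : ℕ)), show (l : ℕ) + 1 = s from hcls, has]
      ring
    · by_cases hcjd : (j : ℕ) + 1 = d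
      · rw [if_neg hcjs, if_pos hcjd, if_neg (by omega : ¬ (j : ℕ) = (l : ℕ)),
          show (l : ℕ) + 1 = s from hcls, hbs]
        ring
      · rw [if_neg hcjs, if_neg hcjd, if_neg (by omega : ¬ (j : ℕ) = (l : ℕ))]
        ring
  by_cases hcld : (l : ℕ) + 1 = d
  · rw [if_neg (by omega : ¬ (l : ℕ) + 1 ≤ s), if_pos (Or.inr hcld)]
    by_cases hcjd : (j : ℕ) + 1 = d
    · rw [if_pos hcjd, if_pos (by omega : (j : ℕ) = (l : ℕ)),
        show (l : ℕ) + 1 = d from hcld, hbd]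
      split_ifs <;> ring
    · rw [if_neg hcjd, if_neg (by omega : ¬ (j : ℕ) = (l : ℕ))]
      split_ifs <;> ring
  · rw [if_neg (by omega : ¬ ((l : ℕ) + 1 = s ∨ (l : ℕ) + 1 = d))]
    by_cases hcjl : (j : ℕ) + 1 = (l : ℕ) + 1
    · rw [if_pos hcjl, if_neg (by omega : ¬ (j : ℕ) + 1 = s),
        if_neg (by omega : ¬ (j : ℕ) + 1 = d), if_pos (by omega : (j : ℕ) = (l : ℕ))]
      ring
    by_cases hcjs : (j : ℕ) + 1 = s
    · rw [if_neg hcjl, if_pos hcjs, if_pos hcjs, if_neg (by omega : ¬ (j : ℕ) + 1 = d),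
        if_neg (by omega : ¬ (j : ℕ) = (l : ℕ))]
      by_cases hcl2 : (l : ℕ) + 1 < s
      · rw [if_pos hcl2, if_pos (by omega : (l : ℕ) + 1 ≤ s)]
        ring
      · rw [if_neg hcl2, if_neg (by omega : ¬ (l : ℕ) + 1 ≤ s)]
        ring
    by_cases hcjd : (j : ℕ) + 1 = d
    · rw [if_neg hcjl, if_neg hcjs, if_neg hcjs, if_pos hcjd, if_pos hcjd,
        if_neg (by omega : ¬ (j : ℕ) = (l : ℕ))]
      by_cases hcl2 : (l : ℕ) + 1 < s
      · rw [if_pos hcl2]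
        ring
      · rw [if_neg hcl2, hb2 ((l : ℕ) + 1) (by omega) (by omega)]
        ring
    · rw [if_neg hcjl, if_neg hcjs, if_neg hcjs, if_neg hcjd, if_neg hcjd,
        if_neg (by omega : ¬ (j : ℕ) = (l : ℕ))]
      split_ifs <;> ring

end Identities2



open Finset

section Identities3

variable (d s p : ℕ) (a b : ℕ → ℤ)

lemma I4 (hs : 1 ≤ s) (hsd : s < d) (hbs : b s = 0)
    (hb2 : ∀ i, s + 1 ≤ i → i ≤ d - 1 → b i = (p : ℤ) - 1)
    (j : Fin d) :
    ∑ k : Fin (d + 1), zV d s p a b k j = 0 := by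
  have hjlt := j.isLt
  have hpw : ∀ k : Fin (d + 1), zV d s p a b k j
      = ((if (k : ℕ) = 0 then
            (if (j : ℕ) + 1 = s then 1 - AA d s a
             else if (j : ℕ) + 1 = d then 1 - BB d b else (p : ℤ)) else 0)
        + ((if (k : ℕ) = s then (if (j : ℕ) + 1 = s then (-1 : ℤ) else 0) else 0)
          + ((if (k : ℕ) = d then (if (j : ℕ) + 1 = d then (-1 : ℤ) else 0) else 0)
            + (if 1 ≤ (k : ℕ) ∧ (k : ℕ) < d ∧ (k : ℕ) ≠ s then
                (if (j : ℕ) + 1 = (k : ℕ) then -(p : ℤ)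
                 else if (j : ℕ) + 1 = s then (if (k : ℕ) < s then a (k : ℕ) else 0)
                 else if (j : ℕ) + 1 = d then
                   (if (k : ℕ) < s then b (k : ℕ) else (p : ℤ) - 1)
                 else 0) else 0)))) := by
    intro k
    have hk := k.isLt
    by_cases hk0 : (k : ℕ) = 0
    · simp only [zV]
      rw [if_pos hk0, if_pos hk0, if_neg (by omega : ¬ (k : ℕ) = s),
        if_neg (by omega : ¬ (k : ℕ) = d),
        if_neg (by omega : ¬ (1 ≤ (k : ℕ) ∧ (k : ℕ) < d ∧ (k : ℕ) ≠ s))]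
      ring
    by_cases hks : (k : ℕ) = s
    · simp only [zV]
      rw [if_neg hk0, if_pos hks, if_neg hk0, if_pos hks,
        if_neg (by omega : ¬ (k : ℕ) = d),
        if_neg (by omega : ¬ (1 ≤ (k : ℕ) ∧ (k : ℕ) < d ∧ (k : ℕ) ≠ s))]
      ring
    by_cases hkd : (k : ℕ) = d
    · simp only [zV]
      rw [if_neg hk0, if_neg hks, if_pos hkd, if_neg hk0, if_neg hks, if_pos hkd,
        if_neg (by omega : ¬ (1 ≤ (k : ℕ) ∧ (k : ℕ) < d ∧ (k : ℕ) ≠ s))]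
      ring
    · simp only [zV]
      rw [if_neg hk0, if_neg hks, if_neg hkd, if_neg hk0, if_neg hks, if_neg hkd,
        if_pos (by omega : 1 ≤ (k : ℕ) ∧ (k : ℕ) < d ∧ (k : ℕ) ≠ s)]
      ring
  rw [Finset.sum_congr rfl (fun k _ => hpw k), Finset.sum_add_distrib,
    Finset.sum_add_distrib, Finset.sum_add_distrib,
    sum_fin_delta' 0 (by omega)
      (fun _ => (if (j : ℕ) + 1 = s then 1 - AA d s a
        else if (j : ℕ) + 1 = d then 1 - BB d b else (p : ℤ))),
    sum_fin_delta' s (by omega) (fun _ => (if (j : ℕ) + 1 = s then (-1 : ℤ) else 0)),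
    sum_fin_delta' d (by omega) (fun _ => (if (j : ℕ) + 1 = d then (-1 : ℤ) else 0))]
  by_cases hcjs : (j : ℕ) + 1 = s
  · have hlast : ∀ k : Fin (d + 1),
        (if 1 ≤ (k : ℕ) ∧ (k : ℕ) < d ∧ (k : ℕ) ≠ s then
          (if (j : ℕ) + 1 = (k : ℕ) then -(p : ℤ)
           else if (j : ℕ) + 1 = s then (if (k : ℕ) < s then a (k : ℕ) else 0)
           else if (j : ℕ) + 1 = d then (if (k : ℕ) < s then b (k : ℕ) else (p : ℤ) - 1)
           else 0) else 0)
        = (if 1 ≤ (k : ℕ) ∧ (k : ℕ) < s then a (k : ℕ) else 0) := by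
      intro k
      split_ifs <;> first | rfl | ring1 | (exfalso; omega)
    rw [Finset.sum_congr rfl (fun k _ => hlast k)]
    have hshift : ∑ k : Fin (d + 1), (if 1 ≤ (k : ℕ) ∧ (k : ℕ) < s then a (k : ℕ) else 0)
        = AA d s a := by
      rw [sum_fin_shift (fun c => if 1 ≤ c ∧ c < s then a c else 0) (by simp), AA]
      exact Finset.sum_congr rfl fun j _ => by split_ifs <;> first | rfl | (exfalso; omega)
    rw [hshift, if_pos hcjs, if_pos hcjs, if_neg (by omega : ¬ (j : ℕ) + 1 = d)]
    ring
  by_cases hcjd : (j : ℕ) + 1 = d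
  · have hlast : ∀ k : Fin (d + 1),
        (if 1 ≤ (k : ℕ) ∧ (k : ℕ) < d ∧ (k : ℕ) ≠ s then
          (if (j : ℕ) + 1 = (k : ℕ) then -(p : ℤ)
           else if (j : ℕ) + 1 = s then (if (k : ℕ) < s then a (k : ℕ) else 0)
           else if (j : ℕ) + 1 = d then (if (k : ℕ) < s then b (k : ℕ) else (p : ℤ) - 1)
           else 0) else 0)
        = (if 1 ≤ (k : ℕ) ∧ (k : ℕ) < d then b (k : ℕ) else 0) := by
      intro k
      by_cases h1 : 1 ≤ (k : ℕ) ∧ (k : ℕ) < d ∧ (k : ℕ) ≠ s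
      · rw [if_pos h1, if_pos (by omega : 1 ≤ (k : ℕ) ∧ (k : ℕ) < d),
          if_neg (by omega : ¬ (j : ℕ) + 1 = (k : ℕ)), if_neg (by omega), if_pos hcjd]
        by_cases h2 : (k : ℕ) < s
        · rw [if_pos h2]
        · rw [if_neg h2, hb2 (k : ℕ) (by omega) (by omega)]
      · rw [if_neg h1]
        by_cases h2 : (k : ℕ) = s
        · rw [if_pos (by omega : 1 ≤ (k : ℕ) ∧ (k : ℕ) < d), h2, hbs]
        · rw [if_neg (by omega : ¬ (1 ≤ (k : ℕ) ∧ (k : ℕ) < d))]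
    rw [Finset.sum_congr rfl (fun k _ => hlast k)]
    have hshift : ∑ k : Fin (d + 1), (if 1 ≤ (k : ℕ) ∧ (k : ℕ) < d then b (k : ℕ) else 0)
        = BB d b := by
      rw [sum_fin_shift (fun c => if 1 ≤ c ∧ c < d then b c else 0) (by simp), BB]
      exact Finset.sum_congr rfl fun j _ => by split_ifs <;> first | rfl | (exfalso; omega)
    rw [hshift, if_neg hcjs, if_pos hcjd, if_neg hcjs, if_pos hcjd]
    ring
  · have hlast : ∀ k : Fin (d + 1),
        (if 1 ≤ (k : ℕ) ∧ (k : ℕ) < d ∧ (k : ℕ) ≠ s then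
          (if (j : ℕ) + 1 = (k : ℕ) then -(p : ℤ)
           else if (j : ℕ) + 1 = s then (if (k : ℕ) < s then a (k : ℕ) else 0)
           else if (j : ℕ) + 1 = d then (if (k : ℕ) < s then b (k : ℕ) else (p : ℤ) - 1)
           else 0) else 0)
        = (if (k : ℕ) = (j : ℕ) + 1 then -(p : ℤ) else 0) := by
      intro k
      split_ifs <;> first | rfl | ring1 | (exfalso; omega)
    rw [Finset.sum_congr rfl (fun k _ => hlast k),
      sum_fin_delta' ((j : ℕ) + 1) (by omega) (fun _ => -(p : ℤ)),
      if_neg hcjs, if_neg hcjd, if_neg hcjs, if_neg hcjd]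
    ring

lemma I5 (hs : 1 ≤ s) (hsd : s < d)
    (has : a s = (p : ℤ)) (hbd : b d = (p : ℤ)) (hbs : b s = 0)
    (hab : ∀ i, 1 ≤ i → i ≤ s - 1 → a i + b i = (p : ℤ) - 1)
    (hb2 : ∀ i, s + 1 ≤ i → i ≤ d - 1 → b i = (p : ℤ) - 1)
    (l : Fin d) :
    ∑ k : Fin (d + 1), simplexVerts2 d s a b k l = (p : ℤ) := by
  have hllt := l.isLt
  have hpw : ∀ k : Fin (d + 1), simplexVerts2 d s a b k l
      = ((if (k : ℕ) = s then (if (l : ℕ) + 1 ≤ s then a ((l : ℕ) + 1) else 0) else 0)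
        + ((if (k : ℕ) = d then b ((l : ℕ) + 1) else 0)
          + (if (k : ℕ) = (l : ℕ) + 1 then
              (if (l : ℕ) + 1 < d ∧ (l : ℕ) + 1 ≠ s then 1 else 0) else 0))) := by
    intro k
    have hk := k.isLt
    by_cases hk0 : (k : ℕ) = 0
    · simp only [simplexVerts2]
      rw [if_pos hk0, if_neg (by omega : ¬ (k : ℕ) = s),
        if_neg (by omega : ¬ (k : ℕ) = d), if_neg (by omega : ¬ (k : ℕ) = (l : ℕ) + 1)]
      ring
    by_cases hks : (k : ℕ) = s
    · simp only [simplexVerts2]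
      rw [if_neg hk0, if_pos hks, if_pos hks, if_neg (by omega : ¬ (k : ℕ) = d)]
      by_cases hkl : (k : ℕ) = (l : ℕ) + 1
      · rw [if_pos hkl, if_neg (by omega : ¬ ((l : ℕ) + 1 < d ∧ (l : ℕ) + 1 ≠ s))]
        ring
      · rw [if_neg hkl]
        ring
    by_cases hkd : (k : ℕ) = d
    · simp only [simplexVerts2]
      rw [if_neg hk0, if_neg hks, if_pos hkd, if_neg hks, if_pos hkd]
      by_cases hkl : (k : ℕ) = (l : ℕ) + 1
      · rw [if_pos hkl, if_neg (by omega : ¬ ((l : ℕ) + 1 < d ∧ (l : ℕ) + 1 ≠ s))]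
        ring
      · rw [if_neg hkl]
        ring
    · simp only [simplexVerts2]
      rw [if_neg hk0, if_neg hks, if_neg hkd, if_neg hks, if_neg hkd]
      by_cases hkl : (k : ℕ) = (l : ℕ) + 1
      · rw [if_pos (by omega : (l : ℕ) + 1 = (k : ℕ)), if_pos hkl,
          if_pos (by omega : (l : ℕ) + 1 < d ∧ (l : ℕ) + 1 ≠ s)]
        ring
      · rw [if_neg (by omega : ¬ (l : ℕ) + 1 = (k : ℕ)), if_neg hkl]
        ring
  rw [Finset.sum_congr rfl (fun k _ => hpw k), Finset.sum_add_distrib,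
    Finset.sum_add_distrib,
    sum_fin_delta' s (by omega)
      (fun _ => (if (l : ℕ) + 1 ≤ s then a ((l : ℕ) + 1) else 0)),
    sum_fin_delta' d (by omega) (fun _ => b ((l : ℕ) + 1)),
    sum_fin_delta' ((l : ℕ) + 1) (by omega)
      (fun _ => (if (l : ℕ) + 1 < d ∧ (l : ℕ) + 1 ≠ s then (1 : ℤ) else 0))]
  by_cases h1 : (l : ℕ) + 1 < s
  · rw [if_pos (by omega : (l : ℕ) + 1 ≤ s),
      if_pos (by omega : (l : ℕ) + 1 < d ∧ (l : ℕ) + 1 ≠ s)]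
    have := hab ((l : ℕ) + 1) (by omega) (by omega)
    linarith
  by_cases h2 : (l : ℕ) + 1 = s
  · rw [if_pos (by omega : (l : ℕ) + 1 ≤ s),
      if_neg (by omega : ¬ ((l : ℕ) + 1 < d ∧ (l : ℕ) + 1 ≠ s)), h2, has, hbs]
    ring
  by_cases h3 : (l : ℕ) + 1 < d
  · rw [if_neg (by omega : ¬ (l : ℕ) + 1 ≤ s),
      if_pos (by omega : (l : ℕ) + 1 < d ∧ (l : ℕ) + 1 ≠ s),
      hb2 ((l : ℕ) + 1) (by omega) (by omega)]
    ring
  · rw [if_neg (by omega : ¬ (l : ℕ) + 1 ≤ s),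
      if_neg (by omega : ¬ ((l : ℕ) + 1 < d ∧ (l : ℕ) + 1 ≠ s)),
      show (l : ℕ) + 1 = d by omega, hbd]
    ring

end Identities3


end Statement11Aux

namespace Statement11Aux

open Finset

section Assemble

variable (d s p r : ℕ) (a b : ℕ → ℤ)

/-- integer vertices of `rΔ - 1` -/
def uV (d s r : ℕ) (a b : ℕ → ℤ) : Fin (d + 1) → Fin d → ℤ := fun i j =>
  (r : ℤ) * simplexVerts2 d s a b i j - 1

lemma main_reflexive (hs : 1 ≤ s) (hsd : s < d) (hr : 1 ≤ r)
    (has : a s = (p : ℤ)) (hbd : b d = (p : ℤ)) (hbs : b s = 0)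
    (hd : d + 1 = r * p)
    (hab : ∀ i, 1 ≤ i → i ≤ s - 1 → a i + b i = (p : ℤ) - 1)
    (hb2 : ∀ i, s + 1 ≤ i → i ≤ d - 1 → b i = (p : ℤ) - 1) :
    IsReflexive (convexHull ℝ (Set.range fun i => toReal (uV d s r a b i))) := by
  have hdZ : ((d : ℤ) + 1) = (r : ℤ) * (p : ℤ) := by exact_mod_cast congrArg (Nat.cast : ℕ → ℤ) hd
  -- integer-level identities
  have ZE1 : ∀ i k : Fin (d + 1), ∑ j : Fin d, uV d s r a b i j * zV d s p a b k j
      = 1 - (if i = k then ((d : ℤ) + 1) else 0) := by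
    intro i k
    have h1 : ∀ j : Fin d, uV d s r a b i j * zV d s p a b k j
        = (r : ℤ) * (simplexVerts2 d s a b i j * zV d s p a b k j) - zV d s p a b k j := by
      intro j; simp only [uV]; ring
    rw [Finset.sum_congr rfl (fun j _ => h1 j), Finset.sum_sub_distrib, ← Finset.mul_sum,
      I1 d s p a b hs hsd has hbd hbs hb2 i k, I2 d s p a b hs hsd hbs hab hb2 k]
    have hik : (i = k) ↔ ((i : ℕ) = (k : ℕ)) := by
      constructor
      · exact fun h => congrArg Fin.val h
      · exact fun h => Fin.ext h
    by_cases hk0 : (k : ℕ) = 0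
    · by_cases hi0 : (i : ℕ) = 0
      · rw [if_pos hk0, if_pos hi0, if_pos hk0, if_pos (hik.2 (by omega))]
        ring
      · rw [if_pos hk0, if_neg hi0, if_pos hk0,
          if_neg (fun h => hi0 ((hik.1 h).trans hk0))]
        linear_combination -hdZ
    · by_cases hike : (i : ℕ) = (k : ℕ)
      · rw [if_neg hk0, if_pos hike, if_neg hk0, if_pos (hik.2 hike)]
        linear_combination hdZ
      · rw [if_neg hk0, if_neg hike, if_neg hk0, if_neg (fun h => hike (hik.1 h))]
        ring
  have ZE3 : ∀ j l : Fin d, ∑ k : Fin (d + 1), zV d s p a b k j * uV d s r a b k l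
      = if j = l then -((d : ℤ) + 1) else 0 := by
    intro j l
    have h1 : ∀ k : Fin (d + 1), zV d s p a b k j * uV d s r a b k l
        = (r : ℤ) * (zV d s p a b k j * simplexVerts2 d s a b k l) - zV d s p a b k j := by
      intro k; simp only [uV]; ring
    rw [Finset.sum_congr rfl (fun k _ => h1 k), Finset.sum_sub_distrib, ← Finset.mul_sum,
      I3 d s p a b hs hsd has hbd hbs hb2 j l, I4 d s p a b hs hsd hbs hb2 j]
    by_cases hjl : j = l
    · rw [if_pos hjl, if_pos hjl]
      linear_combination hdZ
    · rw [if_neg hjl, if_neg hjl]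
      ring
  have ZE5 : ∀ j : Fin d, ∑ k : Fin (d + 1), uV d s r a b k j = 0 := by
    intro j
    have h1 : ∀ k : Fin (d + 1), uV d s r a b k j
        = (r : ℤ) * simplexVerts2 d s a b k j - 1 := fun k => rfl
    rw [Finset.sum_congr rfl (fun k _ => h1 k), Finset.sum_sub_distrib, ← Finset.mul_sum,
      I5 d s p a b hs hsd has hbd hbs hab hb2 j, Finset.sum_const, Finset.card_univ,
      Fintype.card_fin, nsmul_eq_mul, mul_one]
    push_cast
    linear_combination -hdZ
  -- real-level identities
  apply reflexive_simplex (by omega) (uV d s r a b) (zV d s p a b)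
  · intro i k
    have h := ZE1 i k
    calc ∑ j : Fin d, (uV d s r a b i j : ℝ) * (zV d s p a b k j : ℝ)
        = ((∑ j : Fin d, uV d s r a b i j * zV d s p a b k j : ℤ) : ℝ) := by push_cast; rfl
      _ = ((1 - (if i = k then ((d : ℤ) + 1) else 0) : ℤ) : ℝ) := by rw [h]
      _ = 1 - (if i = k then ((d : ℝ) + 1) else 0) := by split_ifs <;> push_cast <;> ring
  · intro j l
    have h := ZE3 j l
    calc ∑ k : Fin (d + 1), (zV d s p a b k j : ℝ) * (uV d s r a b k l : ℝ)
        = ((∑ k : Fin (d + 1), zV d s p a b k j * uV d s r a b k l : ℤ) : ℝ) := by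
          push_cast; rfl
      _ = ((if j = l then -((d : ℤ) + 1) else 0 : ℤ) : ℝ) := by rw [h]
      _ = if j = l then -((d : ℝ) + 1) else 0 := by split_ifs <;> push_cast <;> ring
  · intro j
    have h := I4 d s p a b hs hsd hbs hb2 j
    calc ∑ k : Fin (d + 1), (zV d s p a b k j : ℝ)
        = ((∑ k : Fin (d + 1), zV d s p a b k j : ℤ) : ℝ) := by push_cast; rfl
      _ = 0 := by rw [h]; norm_num
  · intro j
    have h := ZE5 j
    calc ∑ k : Fin (d + 1), (uV d s r a b k j : ℝ)
        = ((∑ k : Fin (d + 1), uV d s r a b k j : ℤ) : ℝ) := by push_cast; rfl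
      _ = 0 := by rw [h]; norm_num

lemma image_eq (hr : 1 ≤ r) :
    (fun x : Fin d → ℝ => (r : ℝ) • x - 1) '' simplexOf (simplexVerts2 d s a b)
      = convexHull ℝ (Set.range fun i => toReal (uV d s r a b i)) := by
  have hf : ∃ f : (Fin d → ℝ) →ᵃ[ℝ] (Fin d → ℝ),
      ⇑f = fun x : Fin d → ℝ => (r : ℝ) • x - 1 := by
    refine ⟨⟨fun x => (r : ℝ) • x - 1, (r : ℝ) • LinearMap.id, ?_⟩, rfl⟩
    intro q v
    show (r : ℝ) • (v + q) - 1 = (r : ℝ) • v + ((r : ℝ) • q - 1)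
    rw [smul_add]
    abel
  obtain ⟨f, hfeq⟩ := hf
  rw [← hfeq, simplexOf, AffineMap.image_convexHull, ← Set.range_comp]
  have hfun : (⇑f ∘ fun i => toReal (simplexVerts2 d s a b i))
      = (fun i => toReal (uV d s r a b i)) := by
    funext i
    funext j
    show f (toReal (simplexVerts2 d s a b i)) j = ((r : ℤ) * simplexVerts2 d s a b i j - 1 : ℤ)
    rw [hfeq]
    simp only [Pi.sub_apply, Pi.smul_apply, smul_eq_mul, Pi.one_apply, toReal]
    push_cast
    ring
  rw [hfun]

end Assemble

end Statement11Aux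


/-- with `a s = b d = p` prime, `b s = 0`, `d = r·p - 1`,
`a i + b i = p - 1` for `1 ≤ i ≤ s-1` and `b i = p - 1` for `s+1 ≤ i ≤ d-1`,
the simplex `Δ(A,B)` is Gorenstein of index `r`, i.e. `r·Δ(A,B) - (1,…,1)` is
reflexive. -/
theorem statement11 (d s : ℕ) (hs : 1 ≤ s) (hsd : s < d)
    (p r : ℕ) (hp : p.Prime) (hr : 1 ≤ r) (a b : ℕ → ℤ)
    (harange : ∀ i, 1 ≤ i → i ≤ s - 1 → 0 ≤ a i ∧ a i < a s)
    (hbrange : ∀ i, 1 ≤ i → i ≤ d - 1 → 0 ≤ b i ∧ b i < b d)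
    (has : a s = (p : ℤ)) (hbd : b d = (p : ℤ)) (hbs : b s = 0)
    (hd : d + 1 = r * p)
    (hab : ∀ i, 1 ≤ i → i ≤ s - 1 → a i + b i = (p : ℤ) - 1)
    (hb2 : ∀ i, s + 1 ≤ i → i ≤ d - 1 → b i = (p : ℤ) - 1) :
    IsGorenstein (simplexOf (simplexVerts2 d s a b)) r ∧
      IsReflexive ((fun x => (r : ℝ) • x - 1) '' simplexOf (simplexVerts2 d s a b)) := by
  have hrefl : IsReflexive ((fun x => (r : ℝ) • x - 1) '' simplexOf (simplexVerts2 d s a b)) := by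
    rw [Statement11Aux.image_eq d s r a b hr]
    exact Statement11Aux.main_reflexive d s p r a b hs hsd hr has hbd hbs hd hab hb2
  refine ⟨⟨fun _ => (-1 : ℤ), ?_⟩, hrefl⟩
  have : (fun x : Fin d → ℝ => (r : ℝ) • x + toReal (fun _ => (-1 : ℤ)))
      = (fun x : Fin d → ℝ => (r : ℝ) • x - 1) := by
    funext x
    funext j
    simp only [Pi.add_apply, Pi.sub_apply, Pi.one_apply, toReal]
    push_cast
    ring
  rw [this]
  exact hrefl
end
end
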